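/- arXiv:2105.11652 — 4 statements merged into one kernel-verified Lean document; each statement's English description precedes it below -/
import Mathlib

section
/- Let f : ℝ^n → ℝ^n be a C¹ map and suppose there is δ > 0 such that σ(df(x)) ≥ δ for all x ∈ ℝ^n, where σ denotes the co-norm. Then ‖f(x') − f(x)‖ ≥ δ‖x' − x‖ for all x, x' ∈ ℝ^n; in particular f is injective. -/
noncomputable def conorm {n : ℕ}
    (A : EuclideanSpace ℝ (Fin n) →L[ℝ] EuclideanSpace ℝ (Fin n)) : ℝ :=
  sInf {y : ℝ | ∃ v : EuclideanSpace ℝ (Fin n), ‖v‖ = 1 ∧ y = ‖A v‖}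

open NNReal

lemma conorm_bound {n : ℕ} {A : EuclideanSpace ℝ (Fin n) →L[ℝ] EuclideanSpace ℝ (Fin n)}
    {δ : ℝ} (hδA : δ ≤ conorm A) (v : EuclideanSpace ℝ (Fin n)) : δ * ‖v‖ ≤ ‖A v‖ := by
  rcases eq_or_ne v 0 with rfl | hv
  · simp
  · have hn : ‖v‖ ≠ 0 := norm_ne_zero_iff.2 hv
    have hn' : (0:ℝ) < ‖v‖ := (norm_nonneg v).lt_of_ne' hn
    have hu : ‖(‖v‖⁻¹ • v)‖ = 1 := by
      rw [norm_smul, norm_inv, norm_norm, inv_mul_cancel₀ hn]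
    have hmem : ‖A (‖v‖⁻¹ • v)‖ ∈
        {y : ℝ | ∃ w : EuclideanSpace ℝ (Fin n), ‖w‖ = 1 ∧ y = ‖A w‖} := ⟨_, hu, rfl⟩
    have hbdd : BddBelow {y : ℝ | ∃ w : EuclideanSpace ℝ (Fin n), ‖w‖ = 1 ∧ y = ‖A w‖} :=
      ⟨0, by rintro y ⟨w, -, rfl⟩; exact norm_nonneg _⟩
    have hle : δ ≤ ‖A (‖v‖⁻¹ • v)‖ := hδA.trans (csInf_le hbdd hmem)
    rw [map_smul, norm_smul, norm_inv, norm_norm] at hle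
    calc δ * ‖v‖ ≤ (‖v‖⁻¹ * ‖A v‖) * ‖v‖ := by nlinarith
    _ = ‖A v‖ := by field_simp

lemma exists_equiv {n : ℕ} {A : EuclideanSpace ℝ (Fin n) →L[ℝ] EuclideanSpace ℝ (Fin n)}
    {δ : ℝ} (hδ : 0 < δ) (hA : ∀ v, δ * ‖v‖ ≤ ‖A v‖) :
    ∃ e : EuclideanSpace ℝ (Fin n) ≃L[ℝ] EuclideanSpace ℝ (Fin n),
      (e : EuclideanSpace ℝ (Fin n) →L[ℝ] EuclideanSpace ℝ (Fin n)) = A ∧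
      ∀ y, ‖e.symm y‖ ≤ δ⁻¹ * ‖y‖ := by
  have hinj : Function.Injective A := by
    intro u v huv
    have h1 := hA (u - v)
    rw [map_sub, huv, sub_self, norm_zero] at h1
    have : ‖u - v‖ ≤ 0 := by nlinarith [norm_nonneg (u - v)]
    have : u - v = 0 := by
      rw [← norm_le_zero_iff]; exact this
    exact sub_eq_zero.1 this
  have hbij : Function.Bijective (A : EuclideanSpace ℝ (Fin n) →ₗ[ℝ]
      EuclideanSpace ℝ (Fin n)) :=
    ⟨hinj, LinearMap.injective_iff_surjective.1 hinj⟩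
  let e₀ := LinearEquiv.ofBijective _ hbij
  let e := e₀.toContinuousLinearEquiv
  have hcoe : (e : EuclideanSpace ℝ (Fin n) → EuclideanSpace ℝ (Fin n)) = A := rfl
  refine ⟨e, by ext x; rfl, fun y => ?_⟩
  have h1 := hA (e.symm y)
  have h2 : A (e.symm y) = y := by
    conv_lhs => rw [← congrFun hcoe (e.symm y)]
    exact e.apply_symm_apply y
  rw [h2] at h1
  calc ‖e.symm y‖ = δ⁻¹ * (δ * ‖e.symm y‖) := by field_simp
  _ ≤ δ⁻¹ * ‖y‖ := by
      have : 0 ≤ δ⁻¹ := by positivity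
      nlinarith

lemma loc_lemma {n : ℕ} [Nontrivial (EuclideanSpace ℝ (Fin n))]
    {f : EuclideanSpace ℝ (Fin n) → EuclideanSpace ℝ (Fin n)} {δ c r : ℝ}
    (hδ : 0 < δ) (hc0 : 0 < c) (hc : c < δ) {x : EuclideanSpace ℝ (Fin n)}
    (hA : ∀ v, δ * ‖v‖ ≤ ‖fderiv ℝ f x v‖)
    (hap : ApproximatesLinearOn f (fderiv ℝ f x) (Metric.closedBall x (2*r))
      (Real.toNNReal c)) :
    (∀ ρ, 0 ≤ ρ → ρ ≤ 2*r → Set.SurjOn f (Metric.closedBall x ρ)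
      (Metric.closedBall (f x) ((δ - c) * ρ))) ∧
    (∀ u ∈ Metric.closedBall x (2*r), ∀ v ∈ Metric.closedBall x (2*r),
      ‖u - v‖ ≤ (δ - c)⁻¹ * ‖f u - f v‖) := by
  obtain ⟨e, he, hesymm⟩ := exists_equiv hδ hA
  rw [← he] at hap
  set Nr : ℝ := ‖(e.symm : EuclideanSpace ℝ (Fin n) →L[ℝ] EuclideanSpace ℝ (Fin n))‖ with hNr
  have hNr_le : Nr ≤ δ⁻¹ := by
    apply ContinuousLinearMap.opNorm_le_bound _ (by positivity)
    exact hesymm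
  have hNr_pos : 0 < Nr := by
    obtain ⟨y, hy⟩ := exists_ne (0 : EuclideanSpace ℝ (Fin n))
    have h1 : ‖e.symm (e y)‖ ≤ Nr * ‖e y‖ :=
      ContinuousLinearMap.le_opNorm
        (e.symm : EuclideanSpace ℝ (Fin n) →L[ℝ] EuclideanSpace ℝ (Fin n)) (e y)
    rw [e.symm_apply_apply] at h1
    have hy' : (0:ℝ) < ‖y‖ := norm_pos_iff.2 hy
    nlinarith [norm_nonneg (e y)]
  have hδNr : δ ≤ Nr⁻¹ := by
    have := inv_anti₀ hNr_pos hNr_le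
    rwa [inv_inv] at this
  have hcoe : ((Real.toNNReal c : ℝ≥0) : ℝ) = c := Real.coe_toNNReal c hc0.le
  have hnn : ((‖(e.symm : EuclideanSpace ℝ (Fin n) →L[ℝ]
      EuclideanSpace ℝ (Fin n))‖₊ : ℝ≥0) : ℝ) = Nr := rfl
  have hlt : (Real.toNNReal c : ℝ≥0) <
      (‖(e.symm : EuclideanSpace ℝ (Fin n) →L[ℝ] EuclideanSpace ℝ (Fin n))‖₊)⁻¹ := by
    rw [← NNReal.coe_lt_coe, NNReal.coe_inv, hnn, hcoe]
    linarith
  constructor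
  · intro ρ hρ0 hρ2r
    have S := hap.surjOn_closedBall_of_nonlinearRightInverse e.toNonlinearRightInverse hρ0
      (Metric.closedBall_subset_closedBall hρ2r)
    have hrad : (δ - c) * ρ ≤
        (((e.toNonlinearRightInverse.nnnorm : ℝ))⁻¹ - (Real.toNNReal c : ℝ≥0)) * ρ := by
      have : ((e.toNonlinearRightInverse.nnnorm : ℝ)) = Nr := rfl
      rw [this, hcoe]
      have : δ - c ≤ Nr⁻¹ - c := by linarith
      nlinarith
    exact fun y hy => S (Metric.closedBall_subset_closedBall hrad hy)
  · intro u hu v hv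
    have ha := hap.antilipschitz (Or.inr hlt)
    have h2 := ha.le_mul_dist ⟨u, hu⟩ ⟨v, hv⟩
    simp only [Set.restrict_apply, Subtype.dist_eq, dist_eq_norm] at h2
    have hsub : ((((‖(e.symm : EuclideanSpace ℝ (Fin n) →L[ℝ]
        EuclideanSpace ℝ (Fin n))‖₊)⁻¹ - Real.toNNReal c) : ℝ≥0) : ℝ) = Nr⁻¹ - c := by
      rw [NNReal.coe_sub hlt.le, NNReal.coe_inv, hnn, hcoe]
    have hKle : ((((‖(e.symm : EuclideanSpace ℝ (Fin n) →L[ℝ]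
        EuclideanSpace ℝ (Fin n))‖₊)⁻¹ - Real.toNNReal c)⁻¹ : ℝ≥0) : ℝ) ≤
        (δ - c)⁻¹ := by
      rw [NNReal.coe_inv, hsub]
      exact inv_anti₀ (by linarith) (by linarith)
    calc ‖u - v‖ ≤ (((‖(e.symm : EuclideanSpace ℝ (Fin n) →L[ℝ]
          EuclideanSpace ℝ (Fin n))‖₊)⁻¹ - Real.toNNReal c)⁻¹ : ℝ≥0) * ‖f u - f v‖ := h2
    _ ≤ (δ - c)⁻¹ * ‖f u - f v‖ := by
        have := norm_nonneg (f u - f v)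
        nlinarith

set_option maxHeartbeats 4000000 in
lemma key_est {n : ℕ} (f : EuclideanSpace ℝ (Fin n) → EuclideanSpace ℝ (Fin n))
    (hf : ContDiff ℝ 1 f) {δ : ℝ} (hδ : 0 < δ)
    (h : ∀ x, δ ≤ conorm (fderiv ℝ f x)) (a b : EuclideanSpace ℝ (Fin n))
    {c : ℝ} (hc0 : 0 < c) (hc : c < δ) :
    (δ - c) * ‖b - a‖ ≤ ‖f b - f a‖ := by
  rcases subsingleton_or_nontrivial (EuclideanSpace ℝ (Fin n)) with hss | hnt
  · have : b = a := Subsingleton.elim _ _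
    simp [this]
  have hdiff : Differentiable ℝ f := hf.differentiable one_ne_zero
  have hcont : Continuous fun z => fderiv ℝ f z := hf.continuous_fderiv one_ne_zero
  have hA : ∀ x v, δ * ‖v‖ ≤ ‖fderiv ℝ f x v‖ := fun x => conorm_bound (h x)
  set L : ℝ := (δ - c)⁻¹ with hLdef
  have hL0 : 0 < L := by rw [hLdef]; exact inv_pos.2 (by linarith)
  set S : Set (EuclideanSpace ℝ (Fin n)) := Metric.closedBall a ‖b - a‖ with hSdef
  obtain ⟨z₀, hz₀S, hz₀⟩ := (isCompact_closedBall a ‖b - a‖).exists_isMaxOn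
    ⟨a, Metric.mem_closedBall_self (norm_nonneg _)⟩
    ((continuous_norm.comp hcont).continuousOn)
  rw [isMaxOn_iff] at hz₀
  set C : ℝ := ‖fderiv ℝ f z₀‖ with hCdef
  have hC0 : 0 ≤ C := norm_nonneg _
  have hlip : ∀ u ∈ S, ∀ v ∈ S, ‖f u - f v‖ ≤ C * ‖u - v‖ := fun u hu v hv =>
    (convex_closedBall a ‖b - a‖).norm_image_sub_le_of_norm_fderiv_le
      (fun y _ => hdiff y) (fun y hy => hz₀ y hy) hv hu
  set R : ℝ := (1 + L * C) * ‖b - a‖ with hRdef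
  have hR0 : 0 ≤ R := by positivity
  have hUC : UniformContinuousOn (fderiv ℝ f) (Metric.closedBall a (R + 3)) :=
    (isCompact_closedBall a (R + 3)).uniformContinuousOn_of_continuous hcont.continuousOn
  rw [Metric.uniformContinuousOn_iff] at hUC
  obtain ⟨d, hd0, hdd⟩ := hUC c hc0
  set r : ℝ := min 1 (d / 3) with hrdef
  have hr0 : 0 < r := lt_min one_pos (by positivity)
  have hr1 : r ≤ 1 := min_le_left _ _
  have hrd : 2 * r < d := by
    have : r ≤ d / 3 := min_le_right _ _
    linarith
  -- uniform approximation on the compact region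
  have happrox : ∀ x ∈ Metric.closedBall a R,
      ApproximatesLinearOn f (fderiv ℝ f x) (Metric.closedBall x (2*r)) (Real.toNNReal c) := by
    intro x hx u hu v hv
    have hxK' : x ∈ Metric.closedBall a (R + 3) :=
      Metric.closedBall_subset_closedBall (by linarith) hx
    have hsub : Metric.closedBall x (2*r) ⊆ Metric.closedBall a (R + 3) := by
      intro y hy
      rw [Metric.mem_closedBall] at hy hx ⊢
      calc dist y a ≤ dist y x + dist x a := dist_triangle _ _ _
      _ ≤ 2*r + R := by linarith
      _ ≤ R + 3 := by linarith
    set g : EuclideanSpace ℝ (Fin n) → EuclideanSpace ℝ (Fin n) :=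
      fun y => f y - fderiv ℝ f x y with hgdef
    have hgd : ∀ y, DifferentiableAt ℝ g y := fun y =>
      (hdiff y).sub (fderiv ℝ f x).differentiableAt
    have hgderiv : ∀ y ∈ Metric.closedBall x (2*r), ‖fderiv ℝ g y‖ ≤ c := by
      intro y hy
      have : fderiv ℝ g y = fderiv ℝ f y - fderiv ℝ f x := by
        rw [hgdef]
        rw [fderiv_fun_sub (hdiff y) (fderiv ℝ f x).differentiableAt,
          ContinuousLinearMap.fderiv]
      rw [this]
      have hyx : dist y x < d := lt_of_le_of_lt (Metric.mem_closedBall.1 hy) hrd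
      have := hdd y (hsub hy) x hxK' hyx
      rw [dist_eq_norm] at this
      exact this.le
    have hmv := (convex_closedBall x (2*r)).norm_image_sub_le_of_norm_fderiv_le
      (fun y _ => hgd y) hgderiv hv hu
    have heq : g u - g v = f u - f v - (fderiv ℝ f x) (u - v) := by
      rw [hgdef]; simp only [map_sub]; abel
    rw [heq] at hmv
    rw [Real.coe_toNNReal c hc0.le]
    exact hmv
  have loc := fun x hx => loc_lemma hδ hc0 hc (hA x) (happrox x hx)
  -- choice of the grid size
  obtain ⟨N, hN⟩ := exists_nat_gt ((2*(L+1)*(C+1)*(‖b - a‖+1))/r)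
  set sN : ℝ := (N : ℝ) with hsNdef
  have hsN : 0 < sN := by
    have hpos : 0 < (2*(L+1)*(C+1)*(‖b - a‖+1))/r := by positivity
    exact hpos.trans hN
  have hNr' : 2*(L+1)*(C+1)*(‖b - a‖+1) < sN * r := (div_lt_iff₀ hr0).1 hN
  have hN1 : 1 ≤ N := by
    rcases Nat.eq_zero_or_pos N with h0 | h1
    · rw [hsNdef, h0] at hsN; norm_num at hsN
    · exact h1
  set q : ℝ := C * ‖b - a‖ / sN with hqdef
  have hq0 : 0 ≤ q := by positivity
  set ρ : ℝ := L * q with hρdef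
  have hρ0 : 0 ≤ ρ := by positivity
  have hρr : ρ ≤ r / 2 := by
    rw [hρdef, hqdef]
    have heq : L * (C * ‖b - a‖ / sN) = (L * C * ‖b - a‖) / sN := by ring
    rw [heq, div_le_div_iff₀ hsN (by norm_num : (0:ℝ) < 2)]
    nlinarith [mul_nonneg hL0.le hC0, norm_nonneg (b - a),
      mul_nonneg (mul_nonneg hL0.le hC0) (norm_nonneg (b - a)),
      mul_nonneg hL0.le (norm_nonneg (b - a)), mul_nonneg hC0 (norm_nonneg (b - a))]
  have hbr : ‖b - a‖ / sN ≤ r / 2 := by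
    rw [div_le_div_iff₀ hsN (by norm_num : (0:ℝ) < 2)]
    nlinarith [mul_nonneg hL0.le hC0, norm_nonneg (b - a),
      mul_nonneg (mul_nonneg hL0.le hC0) (norm_nonneg (b - a)),
      mul_nonneg hL0.le (norm_nonneg (b - a)), mul_nonneg hC0 (norm_nonneg (b - a))]
  -- grid objects
  set X : ℕ → EuclideanSpace ℝ (Fin n) := fun j => a + ((j:ℝ)/sN) • (b - a) with hXdef
  set Y : ℕ → EuclideanSpace ℝ (Fin n) := fun j => f (X j) with hYdef
  set H : ℕ → ℕ → EuclideanSpace ℝ (Fin n) :=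
    fun j k => Y j + ((k:ℝ)/sN) • (f a - Y j) with hHdef
  have hXa : ∀ j : ℕ, X j - a = ((j:ℝ)/sN) • (b - a) := by
    intro j; simp only [hXdef]; exact add_sub_cancel_left a _
  have hXnorm : ∀ j : ℕ, ‖X j - a‖ = ((j:ℝ)/sN) * ‖b - a‖ := by
    intro j
    rw [hXa j, norm_smul, Real.norm_eq_abs, abs_of_nonneg (by positivity)]
  have hX0 : X 0 = a := by simp [hXdef]
  have hXN : X N = b := by
    simp only [hXdef, div_self hsN.ne', one_smul]
    rw [← hsNdef, div_self hsN.ne', one_smul, add_comm, sub_add_cancel]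
  have hXS : ∀ j : ℕ, j ≤ N → X j ∈ S := by
    intro j hj
    rw [hSdef, Metric.mem_closedBall, dist_eq_norm, hXnorm j]
    have hj' : (j:ℝ)/sN ≤ 1 := by
      rw [div_le_one hsN, hsNdef]; exact_mod_cast hj
    exact mul_le_of_le_one_left (norm_nonneg _) hj'
  have hXd : ∀ j : ℕ, X (j+1) - X j = (1/sN) • (b - a) := by
    intro j
    simp only [hXdef]
    have : ((j+1:ℕ):ℝ)/sN = (j:ℝ)/sN + 1/sN := by push_cast; ring
    rw [this, add_smul]
    abel
  have hY0 : Y 0 = f a := by rw [hYdef]; simp only; rw [hX0]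
  have hYN : Y N = f b := by rw [hYdef]; simp only; rw [hXN]
  have hYfa : ∀ j : ℕ, j ≤ N → ‖Y j - f a‖ ≤ C * ‖b - a‖ := by
    intro j hj
    have h1 := hlip (X j) (hXS j hj) a (by
      rw [hSdef]; exact Metric.mem_closedBall_self (norm_nonneg _))
    have h2 : Y j - f a = f (X j) - f a := by rw [hYdef]
    rw [h2]
    refine h1.trans ?_
    rw [hXnorm j]
    have hj' : (j:ℝ)/sN ≤ 1 := by
      rw [div_le_one hsN, hsNdef]; exact_mod_cast hj
    exact mul_le_mul_of_nonneg_left (mul_le_of_le_one_left (norm_nonneg _) hj') hC0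
  have hYY : ∀ j : ℕ, j + 1 ≤ N → ‖Y (j+1) - Y j‖ ≤ q := by
    intro j hj
    have h1 := hlip (X (j+1)) (hXS (j+1) hj) (X j) (hXS j (by omega))
    have h2 : Y (j+1) - Y j = f (X (j+1)) - f (X j) := by rw [hYdef]
    rw [h2]
    refine h1.trans (le_of_eq ?_)
    rw [hXd j, norm_smul, Real.norm_eq_abs, abs_of_nonneg (by positivity), hqdef]
    ring
  have hH0 : ∀ j : ℕ, H j 0 = Y j := by
    intro j; rw [hHdef]; simp
  have hHN : ∀ j : ℕ, H j N = f a := by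
    intro j
    simp only [hHdef, div_self hsN.ne', one_smul]
    rw [← hsNdef, div_self hsN.ne', one_smul, add_comm, sub_add_cancel]
  have hHk : ∀ j k : ℕ, H j (k+1) - H j k = (1/sN) • (f a - Y j) := by
    intro j k
    simp only [hHdef]
    have : ((k+1:ℕ):ℝ)/sN = (k:ℝ)/sN + 1/sN := by push_cast; ring
    rw [this, add_smul]
    abel
  have hHknorm : ∀ j k : ℕ, ‖H j (k+1) - H j k‖ = (1/sN) * ‖f a - Y j‖ := by
    intro j k
    rw [hHk j k, norm_smul, Real.norm_eq_abs, abs_of_nonneg (by positivity)]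
  have hHj : ∀ j k : ℕ, k ≤ N → ‖H (j+1) k - H j k‖ ≤ ‖Y (j+1) - Y j‖ := by
    intro j k hk
    have heq : H (j+1) k - H j k = (1 - (k:ℝ)/sN) • (Y (j+1) - Y j) := by
      simp only [hHdef, smul_sub, sub_smul, one_smul]
      abel
    rw [heq, norm_smul, Real.norm_eq_abs]
    have hk1 : (k:ℝ)/sN ≤ 1 := by
      rw [div_le_one hsN, hsNdef]; exact_mod_cast hk
    have hk0 : 0 ≤ (k:ℝ)/sN := by positivity
    rw [abs_of_nonneg (by linarith)]
    nlinarith [norm_nonneg (Y (j+1) - Y j)]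
  -- the discrete lifted homotopy (monodromy along the grid)
  have hamem : a ∈ Metric.closedBall a R := Metric.mem_closedBall_self hR0
  have chain : ∀ j, j ≤ N → ∃ w : ℕ → EuclideanSpace ℝ (Fin n),
      w 0 = X j ∧ (∀ k, k ≤ N → f (w k) = H j k) ∧
      (∀ k, k ≤ N → ‖w k - a‖ ≤ ((j:ℝ)/sN) * ((1 + L*C) * ‖b - a‖)) ∧
      (∀ k, k < N → ‖w (k+1) - w k‖ ≤ (L/sN) * ‖f a - Y j‖) ∧
      w N = a := by
    intro j
    induction j with
    | zero =>
      intro _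
      refine ⟨fun _ => a, by rw [hX0], ?_, ?_, ?_, rfl⟩
      · intro k hk
        simp only [hHdef, hY0]
        rw [sub_self, smul_zero, add_zero]
      · intro k hk
        simp only [sub_self, norm_zero, Nat.cast_zero, zero_div, zero_mul]
        exact le_rfl
      · intro k hk
        simp only [sub_self, norm_zero, hY0]
        positivity
    | succ j ih =>
      intro hj1
      have hjN : j ≤ N := by omega
      obtain ⟨w, hw0, hw2, hw3, hw4, hw5⟩ := ih hjN
      have hjsN : (j:ℝ)/sN ≤ 1 := by
        rw [div_le_one hsN, hsNdef]; exact_mod_cast hjN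
      have hwK : ∀ k, k ≤ N → w k ∈ Metric.closedBall a R := by
        intro k hk
        rw [Metric.mem_closedBall, dist_eq_norm]
        refine (hw3 k hk).trans ?_
        rw [hRdef]
        have h0 : 0 ≤ (1 + L*C) * ‖b - a‖ := by positivity
        nlinarith
      have hqρ : (δ - c) * ρ = q := by
        rw [hρdef, hLdef, ← mul_assoc, mul_inv_cancel₀ (sub_pos.2 hc).ne', one_mul]
      -- construct the new nodes
      have hex : ∀ k, ∃ z, 1 ≤ k → k ≤ N →
          f z = H (j+1) k ∧ ‖z - w k‖ ≤ ρ := by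
        intro k
        by_cases hk : 1 ≤ k ∧ k ≤ N
        · obtain ⟨hk1, hkN⟩ := hk
          have hsurj := (loc (w k) (hwK k hkN)).1 ρ hρ0 (by linarith)
          have hmem : H (j+1) k ∈ Metric.closedBall (f (w k)) ((δ - c) * ρ) := by
            rw [Metric.mem_closedBall, dist_eq_norm, hw2 k hkN, hqρ]
            exact (hHj j k hkN).trans (hYY j hj1)
          obtain ⟨z, hz1, hz2⟩ := hsurj hmem
          rw [Metric.mem_closedBall, dist_eq_norm] at hz1
          exact ⟨z, fun _ _ => ⟨hz2, hz1⟩⟩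
        · exact ⟨a, fun h1 h2 => absurd ⟨h1, h2⟩ hk⟩
      choose W hW using hex
      set w' : ℕ → EuclideanSpace ℝ (Fin n) := fun k => if k = 0 then X (j+1) else W k
        with hw'def
      have hρq' : (L/sN) * ‖f a - Y j‖ ≤ ρ := by
        have h1 : ‖f a - Y j‖ ≤ C * ‖b - a‖ := by
          rw [norm_sub_rev]; exact hYfa j hjN
        rw [hρdef, hqdef]
        have hLs : 0 ≤ L / sN := by positivity
        calc (L/sN) * ‖f a - Y j‖ ≤ (L/sN) * (C * ‖b - a‖) :=
          mul_le_mul_of_nonneg_left h1 hLs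
        _ = L * (C * ‖b - a‖ / sN) := by ring
      -- the new chain satisfies the required properties
      have hP2 : ∀ k, k ≤ N → f (w' k) = H (j+1) k := by
        intro k hk
        rcases Nat.eq_zero_or_pos k with rfl | hk1
        · simp only [hw'def, if_pos rfl]
          rw [hH0 (j+1), hYdef]
        · simp only [hw'def, if_neg (Nat.pos_iff_ne_zero.1 hk1)]
          exact (hW k hk1 hk).1
      have hstep : ∀ k, k < N → ‖w (k+1) - w k‖ ≤ ρ :=
        fun k hk => (hw4 k hk).trans hρq'
      refine ⟨w', by simp [hw'def], hP2, ?_, ?_, ?_⟩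
      · -- P3 : staying in the compact region
        intro k hk
        have hfrac : ((j+1:ℕ):ℝ)/sN = (j:ℝ)/sN + 1/sN := by push_cast; ring
        have h0 : 0 ≤ (1 + L*C) * ‖b - a‖ := by positivity
        rcases Nat.eq_zero_or_pos k with rfl | hk1
        · simp only [hw'def, if_pos rfl]
          rw [hXnorm (j+1), hfrac]
          have hfrac0 : 0 ≤ (j:ℝ)/sN + 1/sN := by positivity
          exact mul_le_mul_of_nonneg_left
            (le_mul_of_one_le_left (norm_nonneg _)
              (by nlinarith [mul_nonneg hL0.le hC0])) hfrac0
        · simp only [hw'def, if_neg (Nat.pos_iff_ne_zero.1 hk1)]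
          have h2 := (hW k hk1 hk).2
          have h3 := hw3 k hk
          have h4 : ‖W k - a‖ ≤ ρ + ((j:ℝ)/sN) * ((1 + L*C) * ‖b - a‖) := by
            calc ‖W k - a‖ ≤ ‖W k - w k‖ + ‖w k - a‖ := norm_sub_le_norm_sub_add_norm_sub _ _ _
            _ ≤ ρ + ((j:ℝ)/sN) * ((1 + L*C) * ‖b - a‖) := add_le_add h2 h3
          refine h4.trans ?_
          rw [hfrac]
          have hρle : ρ ≤ (1/sN) * ((1 + L*C) * ‖b - a‖) := by
            rw [hρdef, hqdef]
            have e1 : L * (C * ‖b - a‖ / sN) = (L * C * ‖b - a‖) / sN := by ring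
            have e2 : (1/sN) * ((1 + L*C) * ‖b - a‖) = ((1 + L*C) * ‖b - a‖) / sN := by
              ring
            rw [e1, e2, div_le_div_iff_of_pos_right hsN]
            nlinarith [norm_nonneg (b - a), mul_nonneg hL0.le hC0,
              mul_nonneg (mul_nonneg hL0.le hC0) (norm_nonneg (b - a))]
          nlinarith
      · -- P4 : consecutive bound via the antilipschitz estimate
        intro k hk
        have hkN : k ≤ N := le_of_lt hk
        have hwk := hwK k hkN
        have hu : w' (k+1) ∈ Metric.closedBall (w k) (2*r) := by
          rw [Metric.mem_closedBall, dist_eq_norm]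
          simp only [hw'def, if_neg (Nat.succ_ne_zero k)]
          calc ‖W (k+1) - w k‖ ≤ ‖W (k+1) - w (k+1)‖ + ‖w (k+1) - w k‖ :=
            norm_sub_le_norm_sub_add_norm_sub _ _ _
          _ ≤ ρ + ρ := add_le_add (hW (k+1) (by omega) hk).2 (hstep k hk)
          _ ≤ 2*r := by linarith
        have hv : w' k ∈ Metric.closedBall (w k) (2*r) := by
          rw [Metric.mem_closedBall, dist_eq_norm]
          rcases Nat.eq_zero_or_pos k with rfl | hk1
          · simp only [hw'def, if_pos rfl]
            rw [hw0]
            have : X (j+1) - X j = (1/sN) • (b - a) := hXd j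
            rw [this, norm_smul, Real.norm_eq_abs, abs_of_nonneg (by positivity)]
            have : (1/sN) * ‖b - a‖ = ‖b - a‖ / sN := by ring
            rw [this]
            linarith
          · simp only [hw'def, if_neg (Nat.pos_iff_ne_zero.1 hk1)]
            exact (hW k hk1 hkN).2.trans (by linarith)
        have hanti := (loc (w k) hwk).2 (w' (k+1)) hu (w' k) hv
        rw [hP2 (k+1) hk, hP2 k hkN] at hanti
        refine hanti.trans ?_
        rw [hHknorm (j+1) k, ← hLdef]
        apply le_of_eq
        ring
      · -- P5 : the endpoint is fixed (monodromy)
        have hNne : N ≠ 0 := by omega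
        simp only [hw'def, if_neg hNne]
        have hfW : f (W N) = f a := by
          rw [(hW N hN1 le_rfl).1, hHN (j+1)]
        have hWa : ‖W N - a‖ ≤ ρ := by
          have := (hW N hN1 le_rfl).2
          rw [hw5] at this
          exact this
        have hu : W N ∈ Metric.closedBall a (2*r) := by
          rw [Metric.mem_closedBall, dist_eq_norm]
          linarith
        have hv : a ∈ Metric.closedBall a (2*r) :=
          Metric.mem_closedBall_self (by linarith)
        have hanti := (loc a hamem).2 (W N) hu a hv
        rw [hfW, sub_self, norm_zero, mul_zero] at hanti
        have : W N - a = 0 := by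
          rw [← norm_le_zero_iff]; exact hanti
        exact sub_eq_zero.1 this
  -- conclusion: telescoping along the final chain
  obtain ⟨w, hw0, hw2, hw3, hw4, hw5⟩ := chain N le_rfl
  have tele : ∀ k, k ≤ N → ‖w 0 - w k‖ ≤ (k:ℝ) * ((L/sN) * ‖f a - Y N‖) := by
    intro k
    induction k with
    | zero => intro _; simp
    | succ k ih =>
      intro hk
      have hkN : k ≤ N := by omega
      calc ‖w 0 - w (k+1)‖ ≤ ‖w 0 - w k‖ + ‖w k - w (k+1)‖ :=
        norm_sub_le_norm_sub_add_norm_sub _ _ _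
      _ ≤ (k:ℝ) * ((L/sN) * ‖f a - Y N‖) + (L/sN) * ‖f a - Y N‖ := by
          refine add_le_add (ih hkN) ?_
          rw [norm_sub_rev]
          exact hw4 k (by omega)
      _ = ((k+1:ℕ):ℝ) * ((L/sN) * ‖f a - Y N‖) := by push_cast; ring
  have hfin := tele N le_rfl
  rw [hw0, hw5, hXN] at hfin
  have hYNb : ‖f a - Y N‖ = ‖f b - f a‖ := by
    rw [hYN, norm_sub_rev]
  rw [hYNb] at hfin
  have hNL : (N:ℝ) * (L/sN) = L := by
    rw [hsNdef]
    field_simp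
  have hfin2 : ‖b - a‖ ≤ L * ‖f b - f a‖ := by
    calc ‖b - a‖ ≤ (N:ℝ) * ((L/sN) * ‖f b - f a‖) := hfin
    _ = ((N:ℝ) * (L/sN)) * ‖f b - f a‖ := by ring
    _ = L * ‖f b - f a‖ := by rw [hNL]
  have hδc : 0 < δ - c := by linarith
  calc (δ - c) * ‖b - a‖ ≤ (δ - c) * (L * ‖f b - f a‖) :=
    mul_le_mul_of_nonneg_left hfin2 hδc.le
  _ = ‖f b - f a‖ := by
      rw [hLdef]
      field_simp

theorem expansive_of_conorm_bound {n : ℕ}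
    (f : EuclideanSpace ℝ (Fin n) → EuclideanSpace ℝ (Fin n))
    (hf : ContDiff ℝ 1 f) (δ : ℝ) (hδ : 0 < δ)
    (h : ∀ x, δ ≤ conorm (fderiv ℝ f x)) :
    (∀ x x' : EuclideanSpace ℝ (Fin n), δ * ‖x' - x‖ ≤ ‖f x' - f x‖) ∧
    Function.Injective f := by
  have key : ∀ x x' : EuclideanSpace ℝ (Fin n), δ * ‖x' - x‖ ≤ ‖f x' - f x‖ := by
    intro x x'
    rcases eq_or_ne x' x with rfl | hne
    · simp
    have hx0 : 0 < ‖x' - x‖ := norm_pos_iff.2 (sub_ne_zero.2 hne)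
    refine le_of_forall_pos_le_add ?_
    intro ε hε
    set c : ℝ := min (δ/2) (ε/‖x' - x‖) with hcdef
    have hc0 : 0 < c := lt_min (by linarith) (by positivity)
    have hcδ : c < δ := lt_of_le_of_lt (min_le_left _ _) (by linarith)
    have hest := key_est f hf hδ h x x' hc0 hcδ
    have hcε : c * ‖x' - x‖ ≤ ε := by
      have h1 : c ≤ ε/‖x' - x‖ := min_le_right _ _
      rw [le_div_iff₀ hx0] at h1
      exact h1
    nlinarith
  refine ⟨key, ?_⟩
  intro u v huv
  have h1 := key u v
  rw [huv, sub_self, norm_zero] at h1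
  have h2 : ‖v - u‖ ≤ 0 := by nlinarith
  have h3 : v - u = 0 := norm_le_zero_iff.1 h2
  exact (sub_eq_zero.1 h3).symm
end

section
/- Let f : ℝ^n → ℝ^n be a C¹ map such that σ(df(x)) ≥ δ > 0 for all x. Then f is a proper map: the preimage of every compact set is compact; equivalently ‖f(x)‖ → ∞ as ‖x‖ → ∞. -/
open Set Metric

theorem conorm_le {n : ℕ} {A : EuclideanSpace ℝ (Fin n) →L[ℝ] EuclideanSpace ℝ (Fin n)}
    {δ : ℝ} (hA : δ ≤ conorm A) (v : EuclideanSpace ℝ (Fin n)) :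
    δ * ‖v‖ ≤ ‖A v‖ := by
  rcases eq_or_ne v 0 with rfl | hv
  · simp
  · have hv' : (0:ℝ) < ‖v‖ := norm_pos_iff.2 hv
    have hb : BddBelow {y : ℝ | ∃ u : EuclideanSpace ℝ (Fin n), ‖u‖ = 1 ∧ y = ‖A u‖} :=
      ⟨0, by rintro y ⟨u, -, rfl⟩; positivity⟩
    have hm : ‖A (‖v‖⁻¹ • v)‖ ∈ {y : ℝ | ∃ u : EuclideanSpace ℝ (Fin n), ‖u‖ = 1 ∧ y = ‖A u‖} :=
      ⟨‖v‖⁻¹ • v, by rw [norm_smul, norm_inv, norm_norm, inv_mul_cancel₀ hv'.ne'], rfl⟩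
    have h2 := hA.trans (csInf_le hb hm)
    rw [map_smul, norm_smul, norm_inv, norm_norm] at h2
    rw [mul_comm]
    calc ‖v‖ * δ ≤ ‖v‖ * (‖v‖⁻¹ * ‖A v‖) := by
          exact mul_le_mul_of_nonneg_left h2 hv'.le
      _ = ‖A v‖ := by field_simp

/-- Uniform local inverse package on compact balls. -/
theorem unif {n : ℕ} {f : EuclideanSpace ℝ (Fin n) → EuclideanSpace ℝ (Fin n)}
    (hf : ContDiff ℝ 1 f) {δ : ℝ} (hδ : 0 < δ)
    (h : ∀ x, δ ≤ conorm (fderiv ℝ f x))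
    (hnt : Nontrivial (EuclideanSpace ℝ (Fin n))) (R : ℝ) :
    ∃ r > 0, ∀ p ∈ closedBall (0 : EuclideanSpace ℝ (Fin n)) R,
      (∀ u ∈ closedBall p r, ∀ v ∈ closedBall p r, δ/2 * ‖u - v‖ ≤ ‖f u - f v‖) ∧
      (∀ q ∈ closedBall (f p) (δ/2 * r), ∃ u ∈ closedBall p r, f u = q) := by
  have hd : Differentiable ℝ f := hf.differentiable one_ne_zero
  have hcont : Continuous (fderiv ℝ f) := hf.continuous_fderiv one_ne_zero
  have hK : IsCompact (closedBall (0 : EuclideanSpace ℝ (Fin n)) (|R| + 1)) :=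
    isCompact_closedBall _ _
  have hUC : UniformContinuousOn (fderiv ℝ f) (closedBall 0 (|R| + 1)) :=
    hK.uniformContinuousOn_of_continuous hcont.continuousOn
  obtain ⟨d, hd0, hdd⟩ := (Metric.uniformContinuousOn_iff).1 hUC (δ/2) (by positivity)
  refine ⟨min (d/2) 1, by positivity, fun p hp => ?_⟩
  set r := min (d/2) 1 with hr
  have hr0 : 0 < r := by positivity
  have hr1 : r ≤ 1 := min_le_right _ _
  have hsub : closedBall p r ⊆ closedBall (0 : EuclideanSpace ℝ (Fin n)) (|R| + 1) := by
    intro u hu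
    have h1 : ‖u - p‖ ≤ r := by simpa [dist_eq_norm] using hu
    have h2 : ‖p‖ ≤ R := by simpa [dist_eq_norm] using hp
    have h3 : ‖u‖ ≤ ‖u - p‖ + ‖p‖ := by
      simpa using norm_add_le (u - p) p
    have : ‖u‖ ≤ |R| + 1 := by
      have := le_abs_self R
      linarith
    simpa [dist_eq_norm] using this
  -- the approximation property
  have happrox : ApproximatesLinearOn f (fderiv ℝ f p) (closedBall p r) ((δ/2).toNNReal) := by
    intro x hx y hy
    have hb : ∀ u ∈ closedBall p r, ‖fderiv ℝ f u - fderiv ℝ f p‖ ≤ δ/2 := by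
      intro u hu
      have h1 : dist u p < d := by
        have : dist u p ≤ r := hu
        have : r < d := lt_of_le_of_lt (min_le_left _ _) (by linarith)
        linarith [mem_closedBall.1 hu]
      have := hdd u (hsub hu) p (hsub (mem_closedBall_self hr0.le)) h1
      rw [dist_eq_norm] at this
      exact this.le
    have := (convex_closedBall p r).norm_image_sub_le_of_norm_fderiv_le'
      (fun u _ => hd u) hb hy hx
    rw [Real.coe_toNNReal _ (by positivity)]
    simpa using this
  -- build the continuous linear equiv
  have hinj : Function.Injective (fderiv ℝ f p) := by
    intro v v' hvv'
    have h0 : fderiv ℝ f p (v - v') = 0 := by rw [map_sub, hvv', sub_self]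
    have h1 := conorm_le (h p) (v - v')
    rw [h0, norm_zero] at h1
    have h2 : ‖v - v'‖ ≤ 0 := by nlinarith [norm_nonneg (v - v')]
    have := le_antisymm h2 (norm_nonneg _)
    rwa [norm_eq_zero, sub_eq_zero] at this
  have hbij : Function.Bijective ((fderiv ℝ f p) : EuclideanSpace ℝ (Fin n) →ₗ[ℝ] EuclideanSpace ℝ (Fin n)) :=
    ⟨hinj, LinearMap.injective_iff_surjective.1 hinj⟩
  let A : EuclideanSpace ℝ (Fin n) ≃L[ℝ] EuclideanSpace ℝ (Fin n) :=
    (LinearEquiv.ofBijective _ hbij).toContinuousLinearEquiv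
  have hAeq : (A : EuclideanSpace ℝ (Fin n) →L[ℝ] EuclideanSpace ℝ (Fin n)) = fderiv ℝ f p := by
    ext v; rfl
  have hAap : ∀ v, A v = fderiv ℝ f p v := fun v => by rw [← hAeq]; rfl
  -- norm bound on the inverse
  have hsymm : ∀ u, ‖A.symm u‖ ≤ δ⁻¹ * ‖u‖ := by
    intro u
    have h1 := conorm_le (h p) (A.symm u)
    rw [← hAap, A.apply_symm_apply] at h1
    rw [inv_mul_eq_div, le_div_iff₀ hδ]
    nlinarith
  have hNle : ‖(A.symm : EuclideanSpace ℝ (Fin n) →L[ℝ] EuclideanSpace ℝ (Fin n))‖ ≤ δ⁻¹ :=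
    ContinuousLinearMap.opNorm_le_bound _ (by positivity) hsymm
  have hNpos : 0 < ‖(A.symm : EuclideanSpace ℝ (Fin n) →L[ℝ] EuclideanSpace ℝ (Fin n))‖ := by
    rw [norm_pos_iff]
    intro hzero
    obtain ⟨u, hu⟩ := exists_ne (0 : EuclideanSpace ℝ (Fin n))
    apply hu
    have h0 : A.symm u = 0 := by
      have : (A.symm : EuclideanSpace ℝ (Fin n) →L[ℝ] EuclideanSpace ℝ (Fin n)) u = 0 := by
        rw [hzero]; rfl
      exact this
    have := congrArg A h0
    simpa using this
  have hNinv : δ ≤ ‖(A.symm : EuclideanSpace ℝ (Fin n) →L[ℝ] EuclideanSpace ℝ (Fin n))‖⁻¹ :=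
    (le_inv_comm₀ hδ hNpos).2 hNle
  have hcN : ((δ/2).toNNReal) < ‖(A.symm : EuclideanSpace ℝ (Fin n) →L[ℝ] EuclideanSpace ℝ (Fin n))‖₊⁻¹ := by
    rw [← NNReal.coe_lt_coe, NNReal.coe_inv, coe_nnnorm, Real.coe_toNNReal _ (by positivity)]
    calc δ/2 < δ := by linarith
      _ ≤ _ := hNinv
  have happrox' : ApproximatesLinearOn f
      ((A : EuclideanSpace ℝ (Fin n) →L[ℝ] EuclideanSpace ℝ (Fin n)))
      (closedBall p r) ((δ/2).toNNReal) := by rw [hAeq]; exact happrox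
  set Nr : ℝ := ‖(A.symm : EuclideanSpace ℝ (Fin n) →L[ℝ] EuclideanSpace ℝ (Fin n))‖ with hNr
  have hEpos : (0:ℝ) < Nr⁻¹ - δ/2 := by simp only [hNr]; linarith
  have hE2 : δ/2 ≤ Nr⁻¹ - δ/2 := by simp only [hNr]; linarith
  constructor
  · -- antilipschitz
    intro u hu v hv
    have anti := happrox'.antilipschitz (Or.inr hcN)
    have h1 := anti.le_mul_dist ⟨u, hu⟩ ⟨v, hv⟩
    simp only [Set.restrict_apply] at h1
    have h1x : ‖u - v‖ ≤ ((‖(A.symm : EuclideanSpace ℝ (Fin n) →L[ℝ] EuclideanSpace ℝ (Fin n))‖₊⁻¹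
        - (δ/2).toNNReal)⁻¹ : NNReal) * ‖f u - f v‖ := by
      rw [← dist_eq_norm, ← dist_eq_norm]; exact h1
    clear h1
    have hKval : ((‖(A.symm : EuclideanSpace ℝ (Fin n) →L[ℝ] EuclideanSpace ℝ (Fin n))‖₊⁻¹
        - (δ/2).toNNReal)⁻¹ : NNReal) = ((Nr⁻¹ - δ/2)⁻¹ : ℝ) := by
      rw [NNReal.coe_inv, NNReal.coe_sub hcN.le, NNReal.coe_inv, coe_nnnorm,
        Real.coe_toNNReal _ (by positivity)]
    rw [hKval] at h1x
    set D : ℝ := ‖f u - f v‖ with hD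
    have hD0 : 0 ≤ D := norm_nonneg _
    calc δ/2 * ‖u - v‖ ≤ δ/2 * ((Nr⁻¹ - δ/2)⁻¹ * D) := by
          apply mul_le_mul_of_nonneg_left h1x (by positivity)
      _ = (δ/2 * (Nr⁻¹ - δ/2)⁻¹) * D := by ring
      _ ≤ 1 * D := by
          apply mul_le_mul_of_nonneg_right _ hD0
          calc δ/2 * (Nr⁻¹ - δ/2)⁻¹ ≤ (Nr⁻¹ - δ/2) * (Nr⁻¹ - δ/2)⁻¹ :=
                mul_le_mul_of_nonneg_right hE2 (by positivity)
            _ = 1 := mul_inv_cancel₀ hEpos.ne'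
      _ = D := one_mul D
  · -- surjectivity onto a smaller ball
    intro q hq
    have hsurj := happrox'.surjOn_closedBall_of_nonlinearRightInverse
      A.toNonlinearRightInverse hr0.le (subset_refl _)
    have hnn : (A.toNonlinearRightInverse.nnnorm : ℝ) = Nr := rfl
    have hrad : δ/2 * r ≤ (((A.toNonlinearRightInverse.nnnorm : ℝ))⁻¹ - ((δ/2).toNNReal : ℝ)) * r := by
      rw [hnn, Real.coe_toNNReal _ (by positivity)]
      nlinarith
    exact hsurj (closedBall_subset_closedBall hrad hq)


/-- Segment lifting under a uniform local-inverse hypothesis. -/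
theorem lift_exists {n : ℕ} {f : EuclideanSpace ℝ (Fin n) → EuclideanSpace ℝ (Fin n)}
    {δ' : ℝ} (hδ' : 0 < δ')
    (H : ∀ R : ℝ, ∃ r > 0, ∀ p ∈ closedBall (0 : EuclideanSpace ℝ (Fin n)) R,
      (∀ u ∈ closedBall p r, ∀ v ∈ closedBall p r, δ' * ‖u - v‖ ≤ ‖f u - f v‖) ∧
      (∀ q ∈ closedBall (f p) (δ' * r), ∃ u ∈ closedBall p r, f u = q))
    (x₀ w : EuclideanSpace ℝ (Fin n)) :
    ∃ γ : ℝ → EuclideanSpace ℝ (Fin n), γ 0 = x₀ ∧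
      (∀ s ∈ Icc (0:ℝ) 1, f (γ s) = f x₀ + s • w) ∧
      (∀ s ∈ Icc (0:ℝ) 1, ∀ t ∈ Icc (0:ℝ) 1, ‖γ s - γ t‖ ≤ (‖w‖/δ') * |s - t|) := by
  rcases eq_or_ne w 0 with rfl | hw
  · exact ⟨fun _ => x₀, rfl, fun s _ => by simp, fun s _ t _ => by simp⟩
  have hw0 : 0 < ‖w‖ := norm_pos_iff.2 hw
  set L : ℝ := ‖w‖ / δ' with hL
  have hL0 : 0 < L := by positivity
  obtain ⟨r, hr0, hP⟩ := H (‖x₀‖ + L)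
  set ε : ℝ := δ' * r / ‖w‖ with hε
  have hε0 : 0 < ε := by positivity
  set Good : ℝ → Prop := fun t => ∃ γ : ℝ → EuclideanSpace ℝ (Fin n), γ 0 = x₀ ∧
      (∀ s ∈ Icc (0:ℝ) t, f (γ s) = f x₀ + s • w) ∧
      (∀ s ∈ Icc (0:ℝ) t, ∀ s' ∈ Icc (0:ℝ) t, ‖γ s - γ s'‖ ≤ L * |s - s'|) with hGood
  have good0 : Good 0 := by
    refine ⟨fun _ => x₀, rfl, ?_, ?_⟩
    · intro s hs
      have : s = 0 := le_antisymm hs.2 hs.1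
      simp [this]
    · intro s _ s' _
      simp [mul_nonneg hL0.le (abs_nonneg _)]
  have step : ∀ t, 0 ≤ t → t < 1 → Good t → Good (min 1 (t + ε)) := by
    rintro t ht0 ht1 ⟨γ, hγ0, hγf, hγL⟩
    set t' := min 1 (t + ε) with ht'
    have htt' : t ≤ t' := le_min ht1.le (by linarith)
    have ht'1 : t' ≤ 1 := min_le_left _ _
    set p := γ t with hpdef
    have hfp : f p = f x₀ + t • w := hγf t ⟨ht0, le_rfl⟩
    have hpR : p ∈ closedBall (0 : EuclideanSpace ℝ (Fin n)) (‖x₀‖ + L) := by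
      rw [mem_closedBall, dist_zero_right]
      have h1 := hγL t ⟨ht0, le_rfl⟩ 0 ⟨le_rfl, ht0⟩
      rw [hγ0] at h1
      have h2 : |t - 0| ≤ 1 := by rw [sub_zero, abs_of_nonneg ht0]; exact ht1.le
      have h3 : ‖p - x₀‖ ≤ L := by
        calc ‖p - x₀‖ ≤ L * |t - 0| := h1
          _ ≤ L * 1 := mul_le_mul_of_nonneg_left h2 hL0.le
          _ = L := mul_one L
      calc ‖p‖ ≤ ‖p - x₀‖ + ‖x₀‖ := by simpa using norm_add_le (p - x₀) x₀
        _ ≤ L + ‖x₀‖ := by linarith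
        _ = ‖x₀‖ + L := by ring
    obtain ⟨ha, hb⟩ := hP p hpR
    have hqmem : ∀ s ∈ Icc t t', f x₀ + s • w ∈ closedBall (f p) (δ' * r) := by
      intro s hs
      rw [mem_closedBall, dist_eq_norm, hfp]
      have heq : (f x₀ + s • w) - (f x₀ + t • w) = (s - t) • w := by
        rw [sub_smul]; abel
      rw [heq, norm_smul, Real.norm_eq_abs, abs_of_nonneg (by linarith [hs.1] : (0:ℝ) ≤ s - t)]
      have hstε : s - t ≤ ε := by
        have := hs.2
        have h4 : t' ≤ t + ε := min_le_right _ _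
        linarith
      calc (s - t) * ‖w‖ ≤ ε * ‖w‖ := mul_le_mul_of_nonneg_right hstε hw0.le
        _ = δ' * r := by rw [hε]; field_simp
    have hc : ∀ s : ℝ, ∃ u, s ∈ Icc t t' → (u ∈ closedBall p r ∧ f u = f x₀ + s • w) := by
      intro s
      by_cases hs : s ∈ Icc t t'
      · obtain ⟨u, hu1, hu2⟩ := hb _ (hqmem s hs)
        exact ⟨u, fun _ => ⟨hu1, hu2⟩⟩
      · exact ⟨x₀, fun hs' => absurd hs' hs⟩
    choose uu huu using hc
    have bridge : ∀ s', t < s' → s' ≤ t' → ‖p - uu s'‖ ≤ L * (s' - t) := by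
      intro s' hs'1 hs'2
      have hmem := (huu s' ⟨hs'1.le, hs'2⟩).1
      have hfu := (huu s' ⟨hs'1.le, hs'2⟩).2
      have h5 := ha p (mem_closedBall_self hr0.le) (uu s') hmem
      rw [hfp, hfu] at h5
      have heq : (f x₀ + t • w) - (f x₀ + s' • w) = (t - s') • w := by
        rw [sub_smul]; abel
      rw [heq, norm_smul, Real.norm_eq_abs, abs_of_nonpos (by linarith : t - s' ≤ 0)] at h5
      rw [hL, div_mul_eq_mul_div, le_div_iff₀ hδ']
      nlinarith
    have piece2 : ∀ s s', t < s → s ≤ t' → t < s' → s' ≤ t' → ‖uu s - uu s'‖ ≤ L * |s - s'| := by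
      intro s s' h1 h2 h3 h4
      have hm1 := (huu s ⟨h1.le, h2⟩).1
      have hm2 := (huu s' ⟨h3.le, h4⟩).1
      have h5 := ha (uu s) hm1 (uu s') hm2
      rw [(huu s ⟨h1.le, h2⟩).2, (huu s' ⟨h3.le, h4⟩).2] at h5
      have heq : (f x₀ + s • w) - (f x₀ + s' • w) = (s - s') • w := by
        rw [sub_smul]; abel
      rw [heq, norm_smul, Real.norm_eq_abs] at h5
      rw [hL, div_mul_eq_mul_div, le_div_iff₀ hδ']
      nlinarith
    refine ⟨fun s => if s ≤ t then γ s else uu s, by simp [ht0, hγ0], ?_, ?_⟩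
    · intro s hs
      by_cases hst : s ≤ t
      · simp only [if_pos hst]; exact hγf s ⟨hs.1, hst⟩
      · push_neg at hst
        simp only [if_neg (not_le.2 hst)]
        exact (huu s ⟨hst.le, hs.2⟩).2
    · have hmix : ∀ s ∈ Icc (0:ℝ) t', ∀ s' ∈ Icc (0:ℝ) t', s ≤ s' →
          ‖(if s ≤ t then γ s else uu s) - (if s' ≤ t then γ s' else uu s')‖ ≤ L * (s' - s) := by
        intro s hs s' hs' hss'
        by_cases h2 : s' ≤ t
        · have h1 : s ≤ t := le_trans hss' h2
          simp only [if_pos h1, if_pos h2]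
          have := hγL s ⟨hs.1, h1⟩ s' ⟨hs'.1, h2⟩
          rwa [abs_of_nonpos (by linarith), neg_sub] at this
        · push_neg at h2
          by_cases h1 : s ≤ t
          · simp only [if_pos h1, if_neg (not_le.2 h2)]
            have hA : ‖γ s - p‖ ≤ L * (t - s) := by
              have := hγL s ⟨hs.1, h1⟩ t ⟨ht0, le_rfl⟩
              rwa [abs_of_nonpos (by linarith), neg_sub] at this
            have hB := bridge s' h2 hs'.2
            calc ‖γ s - uu s'‖ ≤ ‖γ s - p‖ + ‖p - uu s'‖ := norm_sub_le_norm_sub_add_norm_sub _ _ _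
              _ ≤ L * (t - s) + L * (s' - t) := add_le_add hA hB
              _ = L * (s' - s) := by ring
          · push_neg at h1
            simp only [if_neg (not_le.2 h1), if_neg (not_le.2 h2)]
            have := piece2 s s' h1 hs.2 h2 hs'.2
            rwa [abs_of_nonpos (by linarith), neg_sub] at this
      intro s hs s' hs'
      rcases le_total s s' with hss' | hss'
      · have := hmix s hs s' hs' hss'
        rwa [abs_of_nonpos (by linarith), neg_sub]
      · have := hmix s' hs' s hs hss'
        rw [norm_sub_rev] at this
        rwa [abs_of_nonneg (by linarith)]
  have allk : ∀ k : ℕ, Good (min 1 ((k:ℝ) * ε)) := by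
    intro k
    induction k with
    | zero => simpa [min_eq_right (zero_le_one (α := ℝ))] using good0
    | succ k ih =>
      by_cases h1 : 1 ≤ (k:ℝ) * ε
      · have e1 : min 1 ((k:ℝ) * ε) = 1 := min_eq_left h1
        have e2 : min 1 (((k:ℕ)+1 : ℝ) * ε) = 1 := min_eq_left (by nlinarith)
        rw [Nat.cast_succ] at *
        rw [e2]
        rwa [e1] at ih
      · push_neg at h1
        have e1 : min 1 ((k:ℝ) * ε) = (k:ℝ) * ε := min_eq_right h1.le
        rw [e1] at ih
        have hstep := step _ (by positivity) h1 ih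
        rw [Nat.cast_succ]
        convert hstep using 2
        ring
  obtain ⟨k, hk⟩ := exists_nat_ge (1/ε)
  have h1k : 1 ≤ (k:ℝ) * ε := by
    rw [div_le_iff₀ hε0] at hk
    linarith
  have := allk k
  rw [min_eq_left h1k] at this
  exact this

theorem lift_stable {n : ℕ} {f : EuclideanSpace ℝ (Fin n) → EuclideanSpace ℝ (Fin n)}
    {δ' r R : ℝ} (hδ' : 0 < δ') (hr0 : 0 < r)
    (ha : ∀ p ∈ closedBall (0 : EuclideanSpace ℝ (Fin n)) R,
      ∀ u ∈ closedBall p r, ∀ v ∈ closedBall p r, δ' * ‖u - v‖ ≤ ‖f u - f v‖)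
    {x₁ x₂ w₁ w₂ : EuclideanSpace ℝ (Fin n)} {γ₁ γ₂ : ℝ → EuclideanSpace ℝ (Fin n)}
    (hγ₁0 : γ₁ 0 = x₁) (hγ₂0 : γ₂ 0 = x₂)
    (hf₁ : ∀ s ∈ Icc (0:ℝ) 1, f (γ₁ s) = f x₁ + s • w₁)
    (hf₂ : ∀ s ∈ Icc (0:ℝ) 1, f (γ₂ s) = f x₂ + s • w₂)
    (hL₁ : ∀ s ∈ Icc (0:ℝ) 1, ∀ t ∈ Icc (0:ℝ) 1, ‖γ₁ s - γ₁ t‖ ≤ (‖w₁‖/δ') * |s - t|)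
    (hL₂ : ∀ s ∈ Icc (0:ℝ) 1, ∀ t ∈ Icc (0:ℝ) 1, ‖γ₂ s - γ₂ t‖ ≤ (‖w₂‖/δ') * |s - t|)
    (hmem : ∀ s ∈ Icc (0:ℝ) 1, γ₁ s ∈ closedBall (0 : EuclideanSpace ℝ (Fin n)) R)
    (hclose : ‖x₁ - x₂‖ ≤ r/4)
    (himg : (‖f x₁ - f x₂‖ + ‖w₁ - w₂‖)/δ' ≤ r/4) :
    ∀ t ∈ Icc (0:ℝ) 1, ‖γ₁ t - γ₂ t‖ ≤ r/4 := by
  obtain ⟨L, hLdef⟩ : ∃ L : ℝ, L = ‖w₁‖/δ' + ‖w₂‖/δ' := ⟨_, rfl⟩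
  have hL0 : 0 ≤ L := by rw [hLdef]; positivity
  have dLip : ∀ u ∈ Icc (0:ℝ) 1, ∀ u' ∈ Icc (0:ℝ) 1,
      ‖γ₁ u - γ₂ u‖ ≤ ‖γ₁ u' - γ₂ u'‖ + L * |u - u'| := by
    intro u hu u' hu'
    have h1 := hL₁ u hu u' hu'
    have h2 := hL₂ u' hu' u hu
    have h3 : ‖γ₁ u - γ₂ u‖ ≤ ‖γ₁ u - γ₁ u'‖ + ‖γ₁ u' - γ₂ u'‖ + ‖γ₂ u' - γ₂ u‖ := by
      have := norm_add₃_le (a := γ₁ u - γ₁ u') (b := γ₁ u' - γ₂ u') (c := γ₂ u' - γ₂ u)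
      simpa using this
    have h4 : |u' - u| = |u - u'| := abs_sub_comm u' u
    rw [h4] at h2
    calc ‖γ₁ u - γ₂ u‖ ≤ ‖γ₁ u - γ₁ u'‖ + ‖γ₁ u' - γ₂ u'‖ + ‖γ₂ u' - γ₂ u‖ := h3
      _ ≤ (‖w₁‖/δ') * |u - u'| + ‖γ₁ u' - γ₂ u'‖ + (‖w₂‖/δ') * |u - u'| := by
          exact add_le_add (add_le_add h1 le_rfl) h2
      _ = ‖γ₁ u' - γ₂ u'‖ + L * |u - u'| := by rw [hLdef]; ring
  have improve : ∀ u ∈ Icc (0:ℝ) 1, ‖γ₁ u - γ₂ u‖ ≤ r → ‖γ₁ u - γ₂ u‖ ≤ r/4 := by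
    intro u hu hur
    have hp := hmem u hu
    have hmem2 : γ₂ u ∈ closedBall (γ₁ u) r := by
      rw [mem_closedBall, dist_eq_norm, norm_sub_rev]; exact hur
    have h5 := ha (γ₁ u) hp (γ₁ u) (mem_closedBall_self hr0.le) (γ₂ u) hmem2
    rw [hf₁ u hu, hf₂ u hu] at h5
    have heq : (f x₁ + u • w₁) - (f x₂ + u • w₂) = (f x₁ - f x₂) + u • (w₁ - w₂) := by
      rw [smul_sub]; abel
    rw [heq] at h5
    have h6 : ‖(f x₁ - f x₂) + u • (w₁ - w₂)‖ ≤ ‖f x₁ - f x₂‖ + ‖w₁ - w₂‖ := by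
      calc ‖(f x₁ - f x₂) + u • (w₁ - w₂)‖ ≤ ‖f x₁ - f x₂‖ + ‖u • (w₁ - w₂)‖ := norm_add_le _ _
        _ ≤ ‖f x₁ - f x₂‖ + ‖w₁ - w₂‖ := by
            apply add_le_add le_rfl
            rw [norm_smul, Real.norm_eq_abs]
            have : |u| ≤ 1 := abs_le.2 ⟨by linarith [hu.1], hu.2⟩
            nlinarith [norm_nonneg (w₁ - w₂)]
    have h7 : δ' * ‖γ₁ u - γ₂ u‖ ≤ ‖f x₁ - f x₂‖ + ‖w₁ - w₂‖ := le_trans h5 h6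
    rw [div_le_iff₀ hδ'] at himg
    nlinarith
  set A : Set ℝ := {t | t ∈ Icc (0:ℝ) 1 ∧ ∀ u ∈ Icc (0:ℝ) t, ‖γ₁ u - γ₂ u‖ ≤ r/4} with hA
  have mem0 : (0:ℝ) ∈ A := by
    refine ⟨⟨le_rfl, zero_le_one⟩, fun u hu => ?_⟩
    have : u = 0 := le_antisymm hu.2 hu.1
    rw [this, hγ₁0, hγ₂0]
    exact hclose
  have bddA : BddAbove A := ⟨1, fun t ht => ht.1.2⟩
  have hne : A.Nonempty := ⟨0, mem0⟩
  obtain ⟨τ, hτdef⟩ : ∃ τ : ℝ, τ = sSup A := ⟨_, rfl⟩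
  have hτ0 : 0 ≤ τ := by rw [hτdef]; exact le_csSup bddA mem0
  have hτ1 : τ ≤ 1 := by rw [hτdef]; exact csSup_le hne (fun t ht => ht.1.2)
  have hIco : ∀ u, 0 ≤ u → u < τ → ‖γ₁ u - γ₂ u‖ ≤ r/4 := by
    intro u hu0 huτ
    obtain ⟨t, htA, hut⟩ := exists_lt_of_lt_csSup hne (show u < sSup A by rw [← hτdef]; exact huτ)
    exact htA.2 u ⟨hu0, hut.le⟩
  have hdτ : ‖γ₁ τ - γ₂ τ‖ ≤ r/4 := by
    rcases eq_or_lt_of_le hτ0 with heq | hlt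
    · rw [← heq, hγ₁0, hγ₂0]; exact hclose
    · apply le_of_forall_pos_le_add
      intro η hη
      obtain ⟨u, hu⟩ : ∃ u : ℝ, u = max 0 (τ - η/(L+1)) := ⟨_, rfl⟩
      have hu0 : 0 ≤ u := by rw [hu]; exact le_max_left _ _
      have huτ : u < τ := by
        rcases le_total 0 (τ - η/(L+1)) with hc | hc
        · rw [hu]; rw [max_eq_right hc]
          have : 0 < η/(L+1) := by positivity
          linarith
        · rw [hu]; rw [max_eq_left hc]; exact hlt
      have huge : τ - η/(L+1) ≤ u := by rw [hu]; exact le_max_right _ _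
      have h8 := dLip τ ⟨hτ0, hτ1⟩ u ⟨hu0, by linarith⟩
      have h9 := hIco u hu0 huτ
      have h10 : |τ - u| ≤ η/(L+1) := by
        rw [abs_of_nonneg (by linarith)]; linarith
      have h11 : L * |τ - u| ≤ η := by
        have hm : L * |τ - u| ≤ L * (η/(L+1)) := mul_le_mul_of_nonneg_left h10 hL0
        have : L * (η/(L+1)) ≤ η := by
          rw [mul_div_assoc', div_le_iff₀ (by linarith)]
          nlinarith
        linarith
      linarith
  have hτA : τ ∈ A := by
    refine ⟨⟨hτ0, hτ1⟩, fun u hu => ?_⟩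
    rcases lt_or_eq_of_le hu.2 with hlt | heq
    · exact hIco u hu.1 hlt
    · rw [heq]; exact hdτ
  have hτeq : τ = 1 := by
    by_contra hne1
    have hτlt : τ < 1 := lt_of_le_of_ne hτ1 hne1
    obtain ⟨η, hη⟩ : ∃ η : ℝ, η = min (1 - τ) (r/(4*L+4)) := ⟨_, rfl⟩
    have hη0 : 0 < η := by rw [hη]; exact lt_min (by linarith) (by positivity)
    have hLη : L * η ≤ r/4 := by
      have h12 : η ≤ r/(4*L+4) := by rw [hη]; exact min_le_right _ _
      have hm : L * η ≤ L * (r/(4*L+4)) := mul_le_mul_of_nonneg_left h12 hL0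
      have h13 : L * (r/(4*L+4)) ≤ r/4 := by
        rw [mul_div_assoc', div_le_div_iff₀ (by linarith) (by linarith)]
        nlinarith
      linarith
    have hclaim : τ + η ∈ A := by
      have hηle : η ≤ 1 - τ := by rw [hη]; exact min_le_left _ _
      refine ⟨⟨by linarith, by linarith⟩, fun u hu => ?_⟩
      rcases le_or_gt u τ with hc | hc
      · exact hτA.2 u ⟨hu.1, hc⟩
      · have hu1 : u ≤ 1 := by
          have := min_le_left (1 - τ) (r/(4*L+4))
          have := hu.2
          linarith
        have h14 := dLip u ⟨hu.1, hu1⟩ τ ⟨hτ0, hτ1⟩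
        have h15 : |u - τ| ≤ η := by
          rw [abs_of_nonneg (by linarith)]
          linarith [hu.2]
        have h16 : ‖γ₁ u - γ₂ u‖ ≤ r/2 := by
          have hm : L * |u - τ| ≤ L * η := mul_le_mul_of_nonneg_left h15 hL0
          linarith
        exact improve u ⟨hu.1, hu1⟩ (by linarith)
    have := le_csSup bddA hclaim
    rw [← hτdef] at this
    linarith
  intro t ht
  exact hτA.2 t ⟨ht.1, by rw [hτeq]; exact ht.2⟩

theorem inj_of_unif {n : ℕ} {f : EuclideanSpace ℝ (Fin n) → EuclideanSpace ℝ (Fin n)}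
    {δ' : ℝ} (hδ' : 0 < δ') (hfc : Continuous f)
    (H : ∀ R : ℝ, ∃ r > 0, ∀ p ∈ closedBall (0 : EuclideanSpace ℝ (Fin n)) R,
      (∀ u ∈ closedBall p r, ∀ v ∈ closedBall p r, δ' * ‖u - v‖ ≤ ‖f u - f v‖) ∧
      (∀ q ∈ closedBall (f p) (δ' * r), ∃ u ∈ closedBall p r, f u = q)) :
    Function.Injective f := by
  intro a b hab
  obtain ⟨c, hc⟩ : ∃ c : ℝ → EuclideanSpace ℝ (Fin n), c = fun s => a + s • (b - a) := ⟨_, rfl⟩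
  obtain ⟨w, hw⟩ : ∃ w : ℝ → EuclideanSpace ℝ (Fin n), w = fun s => f a - f (c s) := ⟨_, rfl⟩
  have hex : ∀ s : ℝ, ∃ γ : ℝ → EuclideanSpace ℝ (Fin n), γ 0 = c s ∧
      (∀ u ∈ Icc (0:ℝ) 1, f (γ u) = f (c s) + u • (w s)) ∧
      (∀ u ∈ Icc (0:ℝ) 1, ∀ t ∈ Icc (0:ℝ) 1, ‖γ u - γ t‖ ≤ (‖w s‖/δ') * |u - t|) :=
    fun s => lift_exists hδ' H (c s) (w s)
  choose γ hγ0 hγf hγL using hex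
  obtain ⟨e, he⟩ : ∃ e : ℝ → EuclideanSpace ℝ (Fin n), e = fun s => γ s 1 := ⟨_, rfl⟩
  have hfe : ∀ s, f (e s) = f a := by
    intro s
    simp only [he]
    have h1 := hγf s 1 ⟨zero_le_one, le_rfl⟩
    rw [h1, hw]
    simp
  have hc0 : c 0 = a := by rw [hc]; simp
  have hc1 : c 1 = b := by rw [hc]; simp
  have hconst : ∀ s, w s = 0 → e s = c s := by
    intro s hws
    have h1 := hγL s 1 ⟨zero_le_one, le_rfl⟩ 0 ⟨le_rfl, zero_le_one⟩
    rw [hws, norm_zero, zero_div, zero_mul] at h1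
    have h2 : γ s 1 = γ s 0 := by
      have := le_antisymm h1 (norm_nonneg _)
      rwa [norm_eq_zero, sub_eq_zero] at this
    simp only [he]
    rw [h2, hγ0]
  have he0 : e 0 = a := by
    rw [hconst 0 (by simp only [hw]; rw [hc0, sub_self]), hc0]
  have he1 : e 1 = b := by
    rw [hconst 1 (by simp only [hw]; rw [hc1, ← hab, sub_self]), hc1]
  -- uniform bound
  have hcontc : Continuous c := by
    rw [hc]
    exact continuous_const.add (continuous_id.smul continuous_const)
  have hcont_fc : Continuous fun s => f (c s) := hfc.comp hcontc
  obtain ⟨C, hC⟩ := (isCompact_Icc (a := (0:ℝ)) (b := 1)).exists_bound_of_continuousOn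
    (f := fun s => w s) (by rw [hw]; exact (continuous_const.sub hcont_fc).continuousOn)
  have hC' : ∀ s ∈ Icc (0:ℝ) 1, ‖w s‖ ≤ C := hC
  have hC0 : 0 ≤ C := le_trans (norm_nonneg _) (hC' 0 ⟨le_rfl, zero_le_one⟩)
  obtain ⟨R, hR⟩ : ∃ R : ℝ, R = ‖a‖ + ‖b - a‖ + C/δ' := ⟨_, rfl⟩
  obtain ⟨r, hr0, hP⟩ := H R
  have ha' : ∀ p ∈ closedBall (0 : EuclideanSpace ℝ (Fin n)) R,
      ∀ u ∈ closedBall p r, ∀ v ∈ closedBall p r, δ' * ‖u - v‖ ≤ ‖f u - f v‖ :=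
    fun p hp => (hP p hp).1
  have hmemall : ∀ s ∈ Icc (0:ℝ) 1, ∀ u ∈ Icc (0:ℝ) 1,
      γ s u ∈ closedBall (0 : EuclideanSpace ℝ (Fin n)) R := by
    intro s hs u hu
    rw [mem_closedBall, dist_zero_right]
    have h1 := hγL s u hu 0 ⟨le_rfl, zero_le_one⟩
    rw [hγ0] at h1
    have h2 : |u - 0| ≤ 1 := by rw [sub_zero, abs_of_nonneg hu.1]; exact hu.2
    have h3 : ‖γ s u - c s‖ ≤ ‖w s‖/δ' := by
      calc ‖γ s u - c s‖ ≤ (‖w s‖/δ') * |u - 0| := h1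
        _ ≤ (‖w s‖/δ') * 1 := by
            apply mul_le_mul_of_nonneg_left h2 (by positivity)
        _ = ‖w s‖/δ' := mul_one _
    have h4 : ‖w s‖/δ' ≤ C/δ' := by
      gcongr
      exact hC' s hs
    have h5 : ‖c s‖ ≤ ‖a‖ + ‖b - a‖ := by
      rw [hc]
      calc ‖a + s • (b - a)‖ ≤ ‖a‖ + ‖s • (b - a)‖ := norm_add_le _ _
        _ ≤ ‖a‖ + ‖b - a‖ := by
            apply add_le_add le_rfl
            rw [norm_smul, Real.norm_eq_abs]
            have : |s| ≤ 1 := abs_le.2 ⟨by linarith [hs.1], hs.2⟩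
            nlinarith [norm_nonneg (b - a)]
    calc ‖γ s u‖ ≤ ‖γ s u - c s‖ + ‖c s‖ := by simpa using norm_add_le (γ s u - c s) (c s)
      _ ≤ C/δ' + (‖a‖ + ‖b - a‖) := by linarith
      _ = R := by rw [hR]; ring
  -- local constancy of endpoints
  have key : ∀ s₀ ∈ Icc (0:ℝ) 1, ∃ ρ > 0, ∀ s ∈ Icc (0:ℝ) 1, |s - s₀| < ρ → e s = e s₀ := by
    intro s₀ hs₀
    have hca : ContinuousAt (fun s => f (c s)) s₀ := hcont_fc.continuousAt
    obtain ⟨ρ₂, hρ₂0, hρ₂⟩ := Metric.continuousAt_iff.1 hca (δ' * r / 8) (by positivity)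
    obtain ⟨ρ₁, hρ₁0, hρ₁⟩ : ∃ ρ₁ > 0, ∀ s : ℝ, |s - s₀| < ρ₁ → ‖c s - c s₀‖ ≤ r/4 := by
      refine ⟨(r/4)/(‖b - a‖ + 1), by positivity, fun s hsd => ?_⟩
      have hcs : c s - c s₀ = (s - s₀) • (b - a) := by simp only [hc]; rw [sub_smul]; abel
      rw [hcs, norm_smul, Real.norm_eq_abs]
      have h1 : |s - s₀| * ‖b - a‖ ≤ (r/4)/(‖b - a‖ + 1) * ‖b - a‖ := by
        apply mul_le_mul_of_nonneg_right hsd.le (norm_nonneg _)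
      have h2 : (r/4)/(‖b - a‖ + 1) * ‖b - a‖ ≤ r/4 := by
        rw [div_mul_eq_mul_div, div_le_iff₀ (by positivity)]
        nlinarith [norm_nonneg (b - a)]
      linarith
    refine ⟨min ρ₁ ρ₂, lt_min hρ₁0 hρ₂0, fun s hs hsd => ?_⟩
    have hsd1 : |s - s₀| < ρ₁ := lt_of_lt_of_le hsd (min_le_left _ _)
    have hsd2 : |s - s₀| < ρ₂ := lt_of_lt_of_le hsd (min_le_right _ _)
    have hdist : dist (f (c s)) (f (c s₀)) < δ' * r / 8 := hρ₂ (by rwa [Real.dist_eq])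
    rw [dist_eq_norm] at hdist
    have hclose : ‖c s₀ - c s‖ ≤ r/4 := by
      rw [norm_sub_rev]; exact hρ₁ s hsd1
    have himg : (‖f (c s₀) - f (c s)‖ + ‖w s₀ - w s‖)/δ' ≤ r/4 := by
      have hws : w s₀ - w s = f (c s) - f (c s₀) := by simp only [hw]; abel
      have key2 : r / 4 * δ' = δ' * r / 4 := by ring
      rw [hws, div_le_iff₀ hδ', norm_sub_rev (f (c s₀)), key2]
      linarith
    have hstab := lift_stable hδ' hr0 ha' (hγ0 s₀) (hγ0 s) (hγf s₀) (hγf s)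
      (hγL s₀) (hγL s) (fun u hu => hmemall s₀ hs₀ u hu) hclose himg
    have hd1 := hstab 1 ⟨zero_le_one, le_rfl⟩
    have hmem2 : γ s 1 ∈ closedBall (γ s₀ 1) r := by
      rw [mem_closedBall, dist_eq_norm, norm_sub_rev]
      linarith
    have h6 := ha' (γ s₀ 1) (hmemall s₀ hs₀ 1 ⟨zero_le_one, le_rfl⟩)
      (γ s₀ 1) (mem_closedBall_self hr0.le) (γ s 1) hmem2
    have h7 : f (γ s₀ 1) = f (γ s 1) := by
      have e1 := hfe s₀
      have e2 := hfe s
      simp only [he] at e1 e2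
      rw [e1, e2]
    rw [h7, sub_self, norm_zero] at h6
    have h8 : ‖γ s₀ 1 - γ s 1‖ = 0 := by
      have h9 : δ' * ‖γ s₀ 1 - γ s 1‖ = 0 :=
        le_antisymm h6 (mul_nonneg hδ'.le (norm_nonneg _))
      rcases mul_eq_zero.1 h9 with hcase | hcase
      · exact absurd hcase hδ'.ne'
      · exact hcase
    rw [norm_eq_zero, sub_eq_zero] at h8
    simp only [he]
    exact h8.symm
  -- global constancy via sSup
  obtain ⟨S, hS⟩ : ∃ S : Set ℝ, S = {s | s ∈ Icc (0:ℝ) 1 ∧ e s = a} := ⟨_, rfl⟩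
  have mem0 : (0:ℝ) ∈ S := by rw [hS]; exact ⟨⟨le_rfl, zero_le_one⟩, he0⟩
  have hneS : S.Nonempty := ⟨0, mem0⟩
  have bddS : BddAbove S := by
    refine ⟨1, fun t ht => ?_⟩
    rw [hS] at ht; exact ht.1.2
  obtain ⟨τ, hτdef⟩ : ∃ τ : ℝ, τ = sSup S := ⟨_, rfl⟩
  have hτ0 : 0 ≤ τ := by rw [hτdef]; exact le_csSup bddS mem0
  have hτ1 : τ ≤ 1 := by
    rw [hτdef]
    exact csSup_le hneS (fun t ht => by rw [hS] at ht; exact ht.1.2)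
  obtain ⟨ρ, hρ0, hρ⟩ := key τ ⟨hτ0, hτ1⟩
  have heτ : e τ = a := by
    obtain ⟨s, hsS, hslt⟩ := exists_lt_of_lt_csSup hneS
      (show τ - ρ/2 < sSup S by rw [← hτdef]; linarith)
    have hsle : s ≤ τ := by rw [hτdef]; exact le_csSup bddS hsS
    rw [hS] at hsS
    have : |s - τ| < ρ := by rw [abs_of_nonpos (by linarith)]; linarith
    rw [← hρ s hsS.1 this]
    exact hsS.2
  have hτeq : τ = 1 := by
    by_contra hne1
    have hτlt : τ < 1 := lt_of_le_of_ne hτ1 hne1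
    obtain ⟨s', hs'⟩ : ∃ s' : ℝ, s' = min 1 (τ + ρ/2) := ⟨_, rfl⟩
    have hs'1 : s' ≤ 1 := by rw [hs']; exact min_le_left _ _
    have hs'τ : τ < s' := by rw [hs']; exact lt_min hτlt (by linarith)
    have hs'2 : s' ≤ τ + ρ/2 := by rw [hs']; exact min_le_right _ _
    have hd : |s' - τ| < ρ := by rw [abs_of_nonneg (by linarith)]; linarith
    have : e s' = a := by rw [hρ s' ⟨by linarith, hs'1⟩ hd]; exact heτ
    have hmemS : s' ∈ S := by rw [hS]; exact ⟨⟨by linarith, hs'1⟩, this⟩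
    have := le_csSup bddS hmemS
    rw [← hτdef] at this
    linarith
  rw [hτeq] at heτ
  rw [he1] at heτ
  exact heτ.symm


theorem proper_of_conorm_bound {n : ℕ}
    (f : EuclideanSpace ℝ (Fin n) → EuclideanSpace ℝ (Fin n))
    (hf : ContDiff ℝ 1 f) (δ : ℝ) (hδ : 0 < δ)
    (h : ∀ x, δ ≤ conorm (fderiv ℝ f x)) :
    (∀ K : Set (EuclideanSpace ℝ (Fin n)), IsCompact K → IsCompact (f ⁻¹' K)) ∧
    Filter.Tendsto (fun x => ‖f x‖) (Filter.cocompact _) Filter.atTop := by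
  have hfc : Continuous f := hf.continuous
  have hnt : Nontrivial (EuclideanSpace ℝ (Fin n)) := by
    rcases subsingleton_or_nontrivial (EuclideanSpace ℝ (Fin n)) with hs | hn
    · exfalso
      have hset : {y : ℝ | ∃ v : EuclideanSpace ℝ (Fin n), ‖v‖ = 1 ∧ y = ‖(fderiv ℝ f 0) v‖} = ∅ := by
        ext y
        simp only [Set.mem_setOf_eq, Set.mem_empty_iff_false, iff_false, not_exists]
        intro v hv
        rw [Subsingleton.elim v 0, norm_zero] at hv
        exact one_ne_zero hv.1.symm
      have h0 := h 0
      rw [conorm, hset, Real.sInf_empty] at h0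
      linarith
    · exact hn
  have hδ2 : 0 < δ/2 := by linarith
  have H := fun R => unif hf hδ h hnt R
  have hinj := inj_of_unif hδ2 hfc H
  have est : ∀ a b : EuclideanSpace ℝ (Fin n), δ/2 * ‖b - a‖ ≤ ‖f b - f a‖ := by
    intro a b
    obtain ⟨γ, hγ0, hγf, hγL⟩ := lift_exists hδ2 H a (f b - f a)
    have h1 : f (γ 1) = f b := by
      rw [hγf 1 ⟨zero_le_one, le_rfl⟩, one_smul]
      abel
    have h2 : γ 1 = b := hinj h1
    have h3 := hγL 0 ⟨le_rfl, zero_le_one⟩ 1 ⟨zero_le_one, le_rfl⟩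
    rw [hγ0, h2] at h3
    rw [show |(0:ℝ) - 1| = 1 by norm_num, mul_one] at h3
    have h4 := (le_div_iff₀ hδ2).1 h3
    rw [norm_sub_rev b a, mul_comm]
    exact h4
  have hpre : ∀ K : Set (EuclideanSpace ℝ (Fin n)), IsCompact K → IsCompact (f ⁻¹' K) := by
    intro K hK
    refine Metric.isCompact_iff_isClosed_bounded.2 ⟨hK.isClosed.preimage hfc, ?_⟩
    obtain ⟨C, hC⟩ := hK.isBounded.subset_closedBall (f 0)
    apply (Metric.isBounded_closedBall (x := (0 : EuclideanSpace ℝ (Fin n))) (r := 2*C/δ)).subset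
    intro x hx
    have h1 := est 0 x
    rw [sub_zero] at h1
    have h2 : dist (f x) (f 0) ≤ C := hC hx
    rw [dist_eq_norm] at h2
    rw [mem_closedBall, dist_zero_right]
    rw [le_div_iff₀ hδ]
    nlinarith [norm_nonneg x, norm_nonneg (f x - f 0)]
  refine ⟨hpre, ?_⟩
  rw [Filter.tendsto_atTop]
  intro M
  refine Filter.eventually_iff.2 (Filter.mem_cocompact.2
    ⟨f ⁻¹' (closedBall 0 M), hpre _ (isCompact_closedBall _ _), ?_⟩)
  intro x hx
  simp only [Set.mem_compl_iff, Set.mem_preimage, mem_closedBall, dist_zero_right, not_le] at hx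
  exact le_of_lt hx
end

section
/- (Hadamard) Let f : ℝ^n → ℝ^n be a C¹ map such that σ(df(x)) ≥ δ for all x ∈ ℝ^n, for some fixed δ > 0. Then f is a global homeomorphism of ℝ^n onto ℝ^n. -/
set_option maxHeartbeats 1000000

open Set Filter Metric Topology

abbrev Euc (n : ℕ) := EuclideanSpace ℝ (Fin n)

namespace Hadamard

variable {n : ℕ}

lemma conorm_est {A : EuclideanSpace ℝ (Fin n) →L[ℝ] EuclideanSpace ℝ (Fin n)}
    {δ : ℝ} (hδ : 0 < δ) (h : δ ≤ conorm A) [Nonempty (Fin n)]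
    (v : EuclideanSpace ℝ (Fin n)) : δ * ‖v‖ ≤ ‖A v‖ := by
  rcases eq_or_ne v 0 with rfl | hv
  · simp
  · have hnv : (0:ℝ) < ‖v‖ := norm_pos_iff.mpr hv
    set u : EuclideanSpace ℝ (Fin n) := ‖v‖⁻¹ • v with hu
    have hun : ‖u‖ = 1 := by
      rw [hu, norm_smul, norm_inv, norm_norm, inv_mul_cancel₀ (ne_of_gt hnv)]
    have hmem : ‖A u‖ ∈ {y : ℝ | ∃ w : EuclideanSpace ℝ (Fin n), ‖w‖ = 1 ∧ y = ‖A w‖} :=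
      ⟨u, hun, rfl⟩
    have hbdd : BddBelow {y : ℝ | ∃ w : EuclideanSpace ℝ (Fin n), ‖w‖ = 1 ∧ y = ‖A w‖} :=
      ⟨0, fun y ⟨w, _, hy⟩ => hy ▸ norm_nonneg _⟩
    have : δ ≤ ‖A u‖ := le_trans h (csInf_le hbdd hmem)
    have hAu : ‖A u‖ = ‖v‖⁻¹ * ‖A v‖ := by
      rw [hu, map_smul, norm_smul, norm_inv, norm_norm]
    rw [hAu] at this
    calc δ * ‖v‖ ≤ (‖v‖⁻¹ * ‖A v‖) * ‖v‖ := by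
          apply mul_le_mul_of_nonneg_right this (le_of_lt hnv)
      _ = ‖A v‖ := by field_simp

variable {f : Euc n → Euc n} {δ : ℝ}

noncomputable def derivEquiv (hδ : 0 < δ)
    (hest : ∀ x v, δ * ‖v‖ ≤ ‖fderiv ℝ f x v‖) (x : Euc n) : Euc n ≃L[ℝ] Euc n := by
  refine (LinearEquiv.ofBijective (fderiv ℝ f x : Euc n →ₗ[ℝ] Euc n) ⟨?_, ?_⟩).toContinuousLinearEquiv
  · intro v w hvw
    have h0 : fderiv ℝ f x (v - w) = 0 := by
      simp only [map_sub]; rw [sub_eq_zero]; exact hvw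
    have := hest x (v - w)
    rw [h0, norm_zero] at this
    have : ‖v - w‖ ≤ 0 := by nlinarith [norm_nonneg (v - w)]
    have : v - w = 0 := norm_le_zero_iff.mp this
    exact sub_eq_zero.mp this
  · exact (LinearMap.injective_iff_surjective).mp (by
      intro v w hvw
      have h0 : fderiv ℝ f x (v - w) = 0 := by
        simp only [map_sub]; rw [sub_eq_zero]; exact hvw
      have := hest x (v - w)
      rw [h0, norm_zero] at this
      have : ‖v - w‖ ≤ 0 := by nlinarith [norm_nonneg (v - w)]
      have : v - w = 0 := norm_le_zero_iff.mp this
      exact sub_eq_zero.mp this)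

lemma derivEquiv_coe (hδ : 0 < δ) (hest : ∀ x v, δ * ‖v‖ ≤ ‖fderiv ℝ f x v‖) (x : Euc n) :
    (derivEquiv hδ hest x : Euc n →L[ℝ] Euc n) = fderiv ℝ f x := by
  ext v; rfl

lemma derivEquiv_symm_bound (hδ : 0 < δ) (hest : ∀ x v, δ * ‖v‖ ≤ ‖fderiv ℝ f x v‖)
    (x : Euc n) (w : Euc n) : ‖(derivEquiv hδ hest x).symm w‖ ≤ δ⁻¹ * ‖w‖ := by
  have h1 := hest x ((derivEquiv hδ hest x).symm w)
  have h2 : fderiv ℝ f x ((derivEquiv hδ hest x).symm w) = w := by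
    have := (derivEquiv hδ hest x).apply_symm_apply w
    rw [← derivEquiv_coe hδ hest x]; exact this
  rw [h2] at h1
  rw [inv_mul_eq_div, le_div_iff₀' hδ]
  exact h1

lemma hsd (hf : ContDiff ℝ 1 f) (hδ : 0 < δ) (hest : ∀ x v, δ * ‖v‖ ≤ ‖fderiv ℝ f x v‖)
    (x : Euc n) : HasStrictFDerivAt f (derivEquiv hδ hest x : Euc n →L[ℝ] Euc n) x := by
  rw [derivEquiv_coe]
  exact hf.hasStrictFDerivAt one_ne_zero


lemma lift_hasDerivWithinAt (hf : ContDiff ℝ 1 f) (hδ : 0 < δ)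
    (hest : ∀ x v, δ * ‖v‖ ≤ ‖fderiv ℝ f x v‖)
    {p p' γ : ℝ → Euc n} {I : Set ℝ}
    (hγ : ContinuousOn γ I) (hlift : ∀ s ∈ I, f (γ s) = p s)
    {s₀ : ℝ} (hs₀ : s₀ ∈ I) (hp : HasDerivAt p (p' s₀) s₀) :
    HasDerivWithinAt γ ((derivEquiv hδ hest (γ s₀)).symm (p' s₀)) I s₀ := by
  set x := γ s₀ with hx
  have hsf := hsd hf hδ hest x
  set g := hsf.localInverse f _ x with hg
  have hgf : ∀ᶠ y in 𝓝 x, g (f y) = y := hsf.eventually_left_inverse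
  have hev : ∀ᶠ s in 𝓝[I] s₀, g (p s) = γ s := by
    have h1 : Tendsto γ (𝓝[I] s₀) (𝓝 x) := hγ s₀ hs₀
    filter_upwards [h1.eventually hgf, self_mem_nhdsWithin] with s hs hsI
    rw [← hlift s hsI]; exact hs
  have hgd : HasFDerivAt g ((derivEquiv hδ hest x).symm : Euc n →L[ℝ] Euc n) (f x) :=
    hsf.to_localInverse.hasFDerivAt
  have hcomp : HasDerivAt (fun s => g (p s)) ((derivEquiv hδ hest x).symm (p' s₀)) s₀ := by
    have hfx : f x = p s₀ := hlift s₀ hs₀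
    rw [hfx] at hgd
    exact hgd.comp_hasDerivAt s₀ hp
  refine (hcomp.hasDerivWithinAt).congr_of_eventuallyEq ?_ ?_
  · exact (hev.mono fun s hs => hs.symm)
  · exact (hev.self_of_nhdsWithin hs₀).symm

lemma lift_lipschitz (hf : ContDiff ℝ 1 f) (hδ : 0 < δ)
    (hest : ∀ x v, δ * ‖v‖ ≤ ‖fderiv ℝ f x v‖)
    {p p' γ : ℝ → Euc n} {I : Set ℝ} (hI : Convex ℝ I)
    (hγ : ContinuousOn γ I) (hlift : ∀ s ∈ I, f (γ s) = p s)
    (hp : ∀ s ∈ I, HasDerivAt p (p' s) s) {M : ℝ} (hM' : ∀ s ∈ I, ‖p' s‖ ≤ M)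
    {s t : ℝ} (hs : s ∈ I) (ht : t ∈ I) : ‖γ s - γ t‖ ≤ (δ⁻¹ * M) * ‖s - t‖ := by
  refine hI.norm_image_sub_le_of_norm_hasDerivWithin_le
    (fun u hu => lift_hasDerivWithinAt hf hδ hest hγ hlift hu (hp u hu)) ?_ ht hs
  intro u hu
  calc ‖(derivEquiv hδ hest (γ u)).symm (p' u)‖ ≤ δ⁻¹ * ‖p' u‖ :=
        derivEquiv_symm_bound hδ hest _ _
    _ ≤ δ⁻¹ * M := by
        have := hM' u hu
        have h0 : (0:ℝ) ≤ δ⁻¹ := le_of_lt (inv_pos.mpr hδ)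
        nlinarith

lemma lift_eventually_eq (hf : ContDiff ℝ 1 f) (hδ : 0 < δ)
    (hest : ∀ x v, δ * ‖v‖ ≤ ‖fderiv ℝ f x v‖)
    {p γ₁ γ₂ : ℝ → Euc n} {I : Set ℝ}
    (h1c : ContinuousOn γ₁ I) (h2c : ContinuousOn γ₂ I)
    (h1l : ∀ s ∈ I, f (γ₁ s) = p s) (h2l : ∀ s ∈ I, f (γ₂ s) = p s)
    {s₀ : ℝ} (hs₀ : s₀ ∈ I) (heq : γ₁ s₀ = γ₂ s₀) :
    ∀ᶠ s in 𝓝[I] s₀, γ₁ s = γ₂ s := by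
  set x := γ₁ s₀ with hx
  have hsf := hsd hf hδ hest x
  set g := hsf.localInverse f _ x with hg
  have hgf : ∀ᶠ y in 𝓝 x, g (f y) = y := hsf.eventually_left_inverse
  have t1 : Tendsto γ₁ (𝓝[I] s₀) (𝓝 x) := h1c s₀ hs₀
  have t2 : Tendsto γ₂ (𝓝[I] s₀) (𝓝 x) := heq ▸ h2c s₀ hs₀
  filter_upwards [t1.eventually hgf, t2.eventually hgf, self_mem_nhdsWithin]
    with s e1 e2 hsI
  rw [← e1, ← e2, h1l s hsI, h2l s hsI]

lemma lift_unique (hf : ContDiff ℝ 1 f) (hδ : 0 < δ)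
    (hest : ∀ x v, δ * ‖v‖ ≤ ‖fderiv ℝ f x v‖)
    {p γ₁ γ₂ : ℝ → Euc n} {T : ℝ}
    (h1c : ContinuousOn γ₁ (Icc 0 T)) (h2c : ContinuousOn γ₂ (Icc 0 T))
    (h1l : ∀ s ∈ Icc 0 T, f (γ₁ s) = p s) (h2l : ∀ s ∈ Icc 0 T, f (γ₂ s) = p s)
    (h0 : γ₁ 0 = γ₂ 0) : ∀ s ∈ Icc 0 T, γ₁ s = γ₂ s := by
  rintro s₁ ⟨hs₁0, hs₁T⟩
  set Z := {s | s ∈ Icc 0 s₁ ∧ γ₁ s = γ₂ s} with hZ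
  have hsub : Z ⊆ Icc 0 s₁ := fun s hs => hs.1
  have hsubT : Icc 0 s₁ ⊆ Icc 0 T := Icc_subset_Icc le_rfl hs₁T
  have hZc : IsClosed Z := by
    have : Z = Icc 0 s₁ ∩ (fun s => γ₁ s - γ₂ s) ⁻¹' {0} := by
      ext s
      simp only [hZ, Set.mem_setOf_eq, Set.mem_inter_iff, Set.mem_preimage,
        Set.mem_singleton_iff, sub_eq_zero]
    rw [this]
    exact ContinuousOn.preimage_isClosed_of_isClosed
      ((h1c.mono hsubT).sub (h2c.mono hsubT)) isClosed_Icc isClosed_singleton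
  have hZne : Z.Nonempty := ⟨0, ⟨le_rfl, hs₁0⟩, h0⟩
  have hZcp : IsCompact Z := (isCompact_Icc).of_isClosed_subset hZc hsub
  have hu := hZcp.sSup_mem hZne
  set u := sSup Z with husup
  obtain ⟨⟨hu0, hus₁⟩, hueq⟩ := hu
  rcases eq_or_lt_of_le hus₁ with heqq | hlt
  · exact heqq ▸ hueq
  · exfalso
    have huI : u ∈ Icc 0 T := ⟨hu0, le_trans (le_of_lt hlt) hs₁T⟩
    have hev := lift_eventually_eq hf hδ hest h1c h2c h1l h2l huI hueq
    rw [eventually_nhdsWithin_iff, Metric.eventually_nhds_iff] at hev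
    obtain ⟨ε, hε, hball⟩ := hev
    set s := min s₁ (u + ε/2) with hs
    have hsu : u < s := lt_min hlt (by linarith)
    have hsIcc : s ∈ Icc 0 s₁ := ⟨le_trans hu0 (le_of_lt hsu), min_le_left _ _⟩
    have hsT : s ∈ Icc 0 T := hsubT hsIcc
    have hdist : dist s u < ε := by
      rw [Real.dist_eq, abs_of_pos (by linarith)]
      have : s ≤ u + ε/2 := min_le_right _ _
      linarith
    have hmem : s ∈ Z := ⟨hsIcc, hball hdist hsT⟩
    exact absurd (le_csSup hZcp.bddAbove hmem) (not_le.mpr hsu)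

lemma glue_cont {γ η : ℝ → Euc n} {A B u : ℝ}
    (hγ : ContinuousOn γ (Icc A B ∩ Iic u)) (hη : ContinuousOn η (Icc A B ∩ Ici u))
    (heq : γ u = η u) :
    ContinuousOn (fun s => if s ≤ u then γ s else η s) (Icc A B) := by
  apply ContinuousOn.if
  · intro a ha
    have : a ∈ frontier (Iic u) := ha.2
    rw [frontier_Iic] at this
    rw [mem_singleton_iff] at this
    subst this; exact heq
  · have : closure {a : ℝ | a ≤ u} = Iic u := by
      rw [show {a : ℝ | a ≤ u} = Iic u from rfl, closure_Iic]
    rw [this]; exact hγ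
  · have : closure {a : ℝ | ¬ a ≤ u} = Ici u := by
      have h1 : {a : ℝ | ¬ a ≤ u} = Ioi u := by ext a; simp [not_le]
      rw [h1, closure_Ioi]
    rw [this]; exact hη

theorem lift_exists (hf : ContDiff ℝ 1 f) (hδ : 0 < δ)
    (hest : ∀ x v, δ * ‖v‖ ≤ ‖fderiv ℝ f x v‖)
    {p p' : ℝ → Euc n} {T M : ℝ} (hT : 0 ≤ T)
    (hp : ∀ s ∈ Icc 0 T, HasDerivAt p (p' s) s) (hM : ∀ s ∈ Icc 0 T, ‖p' s‖ ≤ M)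
    {a : Euc n} (ha : f a = p 0) :
    ∃ γ : ℝ → Euc n, γ 0 = a ∧ ContinuousOn γ (Icc 0 T) ∧
      ∀ s ∈ Icc 0 T, f (γ s) = p s := by
  classical
  set C : ℝ := δ⁻¹ * M with hC
  have hM0 : 0 ≤ M := le_trans (norm_nonneg _) (hM 0 ⟨le_rfl, hT⟩)
  have hC0 : 0 ≤ C := mul_nonneg (le_of_lt (inv_pos.mpr hδ)) hM0
  set S : Set ℝ := {t | t ∈ Icc 0 T ∧ ∃ γ : ℝ → Euc n, γ 0 = a ∧
    ContinuousOn γ (Icc 0 t) ∧ ∀ s ∈ Icc 0 t, f (γ s) = p s} with hS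
  have h0S : (0:ℝ) ∈ S := by
    refine ⟨⟨le_rfl, hT⟩, fun _ => a, rfl, continuousOn_const, ?_⟩
    intro s hs
    have : s = 0 := le_antisymm (by simpa using hs.2) hs.1
    rw [this]; exact ha
  have hSne : S.Nonempty := ⟨0, h0S⟩
  have hSbdd : BddAbove S := ⟨T, fun t ht => ht.1.2⟩
  set u := sSup S with hu
  have hu0 : 0 ≤ u := le_csSup hSbdd h0S
  have huT : u ≤ T := csSup_le hSne (fun t ht => ht.1.2)
  -- Step 2 : Liftable u
  have hLu : ∃ γ : ℝ → Euc n, γ 0 = a ∧ ContinuousOn γ (Icc 0 u) ∧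
      ∀ s ∈ Icc 0 u, f (γ s) = p s := by
    rcases eq_or_lt_of_le hu0 with h0u | h0u
    · refine ⟨fun _ => a, rfl, continuousOn_const, ?_⟩
      intro s hs
      have : s = 0 := le_antisymm (h0u ▸ hs.2) hs.1
      rw [this]; exact ha
    -- u > 0
    set F : ℝ → Euc n := fun s =>
      if hs : ∃ t, t ∈ S ∧ s < t then hs.choose_spec.1.2.choose s else a with hF
    -- coherence: F agrees with any chosen lift
    have key : ∀ s t, (ht : t ∈ S) → 0 ≤ s → s < t → F s = ht.2.choose s := by
      intro s t ht hs0 hst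
      have hex : ∃ t, t ∈ S ∧ s < t := ⟨t, ht, hst⟩
      rw [hF]
      simp only [dif_pos hex]
      set t₁ := hex.choose with ht₁
      obtain ⟨ht₁S, hst₁⟩ := hex.choose_spec
      set γ₁ := hex.choose_spec.1.2.choose with hγ₁
      obtain ⟨hγ₁0, hγ₁c, hγ₁l⟩ := hex.choose_spec.1.2.choose_spec
      set γ₂ := ht.2.choose with hγ₂
      obtain ⟨hγ₂0, hγ₂c, hγ₂l⟩ := ht.2.choose_spec
      set m := min t₁ t with hm
      have hsub₁ : Icc (0:ℝ) m ⊆ Icc 0 t₁ := Icc_subset_Icc le_rfl (min_le_left _ _)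
      have hsub₂ : Icc (0:ℝ) m ⊆ Icc 0 t := Icc_subset_Icc le_rfl (min_le_right _ _)
      exact lift_unique hf hδ hest (hγ₁c.mono hsub₁) (hγ₂c.mono hsub₂)
        (fun s hs => hγ₁l s (hsub₁ hs)) (fun s hs => hγ₂l s (hsub₂ hs))
        (hγ₁0.trans hγ₂0.symm) s ⟨hs0, le_min (le_of_lt hst₁) (le_of_lt hst)⟩
    have hagree : ∀ v, 0 ≤ v → v < u → ∃ t, ∃ ht : t ∈ S, v < t ∧
        (∀ s ∈ Icc 0 v, F s = ht.2.choose s) := by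
      intro v hv0 hvu
      obtain ⟨t, htS, hvt⟩ := exists_lt_of_lt_csSup hSne hvu
      exact ⟨t, htS, hvt, fun s hs => key s t htS hs.1 (lt_of_le_of_lt hs.2 hvt)⟩
    have hFc : ∀ v, 0 ≤ v → v < u → ContinuousOn F (Icc 0 v) := by
      intro v hv0 hvu
      obtain ⟨t, htS, hvt, heq⟩ := hagree v hv0 hvu
      obtain ⟨hγ0, hγc, hγl⟩ := htS.2.choose_spec
      exact (hγc.mono (Icc_subset_Icc le_rfl (le_of_lt hvt))).congr heq
    have hFl : ∀ v, 0 ≤ v → v < u → ∀ s ∈ Icc 0 v, f (F s) = p s := by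
      intro v hv0 hvu s hs
      obtain ⟨t, htS, hvt, heq⟩ := hagree v hv0 hvu
      obtain ⟨hγ0, hγc, hγl⟩ := htS.2.choose_spec
      rw [heq s hs]
      exact hγl s ⟨hs.1, le_trans hs.2 (le_of_lt hvt)⟩
    have hF0 : F 0 = a := by
      obtain ⟨t, htS, hvt, heq⟩ := hagree 0 le_rfl h0u
      obtain ⟨hγ0, hγc, hγl⟩ := htS.2.choose_spec
      rw [heq 0 ⟨le_rfl, le_rfl⟩]; exact hγ0
    -- continuity on Ico 0 u
    have hFco : ContinuousOn F (Ico 0 u) := by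
      intro s hs
      obtain ⟨hs0, hsu⟩ := hs
      obtain ⟨v, hsv, hvu⟩ := exists_between hsu
      have hv0 : 0 ≤ v := le_trans hs0 (le_of_lt hsv)
      have hcont := (hFc v hv0 hvu) s ⟨hs0, le_of_lt hsv⟩
      refine hcont.mono_of_mem_nhdsWithin ?_
      have h1 : Iio v ∈ 𝓝[Ico 0 u] s := nhdsWithin_le_nhds (Iio_mem_nhds hsv)
      refine mem_of_superset (Filter.inter_mem h1 self_mem_nhdsWithin) ?_
      rintro x ⟨hx1, hx2, _⟩
      exact ⟨hx2, le_of_lt hx1⟩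
    have hFlo : ∀ s ∈ Ico 0 u, f (F s) = p s := by
      intro s hs
      exact hFl s hs.1 hs.2 s ⟨hs.1, le_rfl⟩
    have hIcoSub : Ico (0:ℝ) u ⊆ Icc 0 T := fun s hs => ⟨hs.1, le_trans (le_of_lt hs.2) huT⟩
    have hlip : ∀ s ∈ Ico (0:ℝ) u, ∀ t ∈ Ico (0:ℝ) u, ‖F s - F t‖ ≤ C * ‖s - t‖ := by
      intro s hs t ht
      exact lift_lipschitz hf hδ hest (convex_Ico 0 u) hFco hFlo
        (fun s hs => hp s (hIcoSub hs)) (fun s hs => hM s (hIcoSub hs)) hs ht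
    -- the limit point b
    set w : ℕ → ℝ := fun k => u - u / (k + 1) with hw
    have hwmem : ∀ k, w k ∈ Ico (0:ℝ) u := by
      intro k
      have hk1 : (0:ℝ) < k + 1 := by positivity
      constructor
      · have : u / (k+1) ≤ u / 1 := by
          apply div_le_div_of_nonneg_left (le_of_lt h0u) one_pos
          · simp
        simp only [div_one] at this
        simp [hw]; linarith
      · have : 0 < u / (k+1) := div_pos h0u hk1
        simp [hw]; linarith
    have hwt : Tendsto w atTop (𝓝 u) := by
      have h1 : Tendsto (fun k : ℕ => u / (k + 1)) atTop (𝓝 0) := by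
        have := tendsto_one_div_add_atTop_nhds_zero_nat.const_mul u
        simpa [div_eq_mul_inv, mul_comm] using this
      have h2 := Tendsto.sub (tendsto_const_nhds : Tendsto (fun _ : ℕ => u) atTop (𝓝 u)) h1
      simpa using h2
    have hcauchy : CauchySeq (fun k => F (w k)) := by
      refine cauchySeq_of_le_tendsto_0 (fun N => C * (2 * (u / (N + 1)))) (fun m k N hm hk => ?_) ?_
      ·
        have h1 := hlip (w m) (hwmem m) (w k) (hwmem k)
        rw [dist_eq_norm]
        refine le_trans h1 ?_
        have hub : ‖w m - w k‖ ≤ 2 * (u / (N+1)) := by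
          have e1 : w m - w k = u / (k+1) - u / (m+1) := by rw [hw]; ring
          have hmono : ∀ i j : ℕ, i ≤ j → u / (j+1) ≤ u / (i+1) := by
            intro i j hij
            apply div_le_div_of_nonneg_left (le_of_lt h0u)
            · positivity
            · have : (i:ℝ) ≤ j := Nat.cast_le.mpr hij
              linarith
          have h2 := hmono N m hm
          have h3 := hmono N k hk
          have h4 : 0 < u / (↑m+1) := div_pos h0u (by positivity)
          have h5 : 0 < u / (↑k+1) := div_pos h0u (by positivity)
          rw [e1, Real.norm_eq_abs, abs_le]
          constructor <;> nlinarith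
        nlinarith
      · have h1 : Tendsto (fun N : ℕ => u / (N + 1)) atTop (𝓝 0) := by
          have := tendsto_one_div_add_atTop_nhds_zero_nat.const_mul u
          simpa [div_eq_mul_inv, mul_comm] using this
        have := (h1.const_mul 2).const_mul C
        simpa [mul_assoc] using this
    obtain ⟨b, hb⟩ := cauchySeq_tendsto_of_complete hcauchy
    -- the glued lift
    set γ : ℝ → Euc n := fun s => if s < u then F s else b with hγ
    have hγval : ∀ s, s < u → γ s = F s := fun s hs => by simp [hγ, if_pos hs]
    have hγu : γ u = b := by simp [hγ]
    have hbnd : ∀ s ∈ Icc (0:ℝ) u, ‖γ s - b‖ ≤ C * ‖s - u‖ := by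
      intro s hs
      rcases lt_or_ge s u with hsu | hsu
      · rw [hγval s hsu]
        have ht1 : Tendsto (fun k => ‖F s - F (w k)‖) atTop (𝓝 ‖F s - b‖) :=
          (tendsto_const_nhds.sub hb).norm
        have ht2 : Tendsto (fun k => C * ‖s - w k‖) atTop (𝓝 (C * ‖s - u‖)) :=
          ((tendsto_const_nhds.sub hwt).norm).const_mul C
        refine le_of_tendsto_of_tendsto' ht1 ht2 (fun k => ?_)
        exact hlip s ⟨hs.1, hsu⟩ (w k) (hwmem k)
      · have : s = u := le_antisymm hs.2 hsu
        subst this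
        rw [hγu]
        simp
    have hγlipIcc : ∀ s ∈ Icc (0:ℝ) u, ∀ t ∈ Icc (0:ℝ) u, ‖γ s - γ t‖ ≤ C * ‖s - t‖ := by
      intro s hs t ht
      rcases lt_or_ge s u with hsu | hsu <;> rcases lt_or_ge t u with htu | htu
      · rw [hγval s hsu, hγval t htu]
        exact hlip s ⟨hs.1, hsu⟩ t ⟨ht.1, htu⟩
      · have htu' : t = u := le_antisymm ht.2 htu
        subst htu'
        rw [hγu]
        exact hbnd s hs
      · have hsu' : s = u := le_antisymm hs.2 hsu
        calc ‖γ s - γ t‖ = ‖γ t - b‖ := by rw [norm_sub_rev, hsu', hγu]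
          _ ≤ C * ‖t - u‖ := hbnd t ht
          _ = C * ‖s - t‖ := by rw [norm_sub_rev, hsu']
      · have : s = u := le_antisymm hs.2 hsu
        have h2 : t = u := le_antisymm ht.2 htu
        subst this; subst h2
        simp
    have hγcont : ContinuousOn γ (Icc 0 u) := by
      have : LipschitzOnWith (Real.toNNReal C) γ (Icc 0 u) := by
        apply LipschitzOnWith.of_dist_le'
        intro x hx y hy
        rw [dist_eq_norm, dist_eq_norm]
        exact hγlipIcc x hx y hy
      exact this.continuousOn
    have hγ0 : γ 0 = a := by rw [hγval 0 h0u]; exact hF0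
    have hγlift : ∀ s ∈ Icc (0:ℝ) u, f (γ s) = p s := by
      intro s hs
      rcases lt_or_ge s u with hsu | hsu
      · rw [hγval s hsu]; exact hFlo s ⟨hs.1, hsu⟩
      · have hsq : s = u := le_antisymm hs.2 hsu
        rw [hsq, hγu]
        have ht1 : Tendsto (fun k => f (F (w k))) atTop (𝓝 (f b)) :=
          ((hf.continuous.tendsto b).comp hb)
        have ht2 : Tendsto (fun k => p (w k)) atTop (𝓝 (p u)) :=
          ((hp u ⟨hu0, huT⟩).continuousAt.tendsto).comp hwt
        exact tendsto_nhds_unique (ht1.congr (fun k => hFlo (w k) (hwmem k))) ht2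
    exact ⟨γ, hγ0, hγcont, hγlift⟩
  -- Step 3 : u = T
  rcases eq_or_lt_of_le huT with huT' | huT'
  · rw [← huT']; exact hLu
  · exfalso
    obtain ⟨γ, hγ0, hγc, hγl⟩ := hLu
    set x := γ u with hx
    have hsf := hsd hf hδ hest x
    set e := hsf.toOpenPartialHomeomorph f with he
    have hecoe : (e : Euc n → Euc n) = f := hsf.toOpenPartialHomeomorph_coe
    have hxsrc : x ∈ e.source := hsf.mem_toOpenPartialHomeomorph_source
    have hfx_tgt : f x ∈ e.target := by
      have := e.map_source hxsrc
      rwa [hecoe] at this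
    have hpu : p u = f x := (hγl u ⟨hu0, le_rfl⟩).symm
    have hpc : ContinuousAt p u := (hp u ⟨hu0, huT⟩).continuousAt
    have hev : ∀ᶠ s in 𝓝 u, p s ∈ e.target := by
      apply hpc.eventually_mem
      rw [hpu]
      exact e.open_target.mem_nhds hfx_tgt
    rw [Metric.eventually_nhds_iff] at hev
    obtain ⟨ε, hε, hball⟩ := hev
    set t' := min T (u + ε/2) with ht'
    have hut' : u < t' := lt_min huT' (by linarith)
    have ht'T : t' ≤ T := min_le_left _ _
    have ht'0 : 0 ≤ t' := le_trans hu0 (le_of_lt hut')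
    have htgt : ∀ s ∈ Icc u t', p s ∈ e.target := by
      intro s hs
      apply hball
      rw [Real.dist_eq, abs_of_nonneg (by linarith [hs.1])]
      have : s ≤ u + ε/2 := le_trans hs.2 (min_le_right _ _)
      linarith [hs.1]
    set η : ℝ → Euc n := fun s => e.symm (p s) with hη
    have hηu : η u = x := by
      rw [hη]
      simp only
      rw [hpu]
      have := e.left_inv hxsrc
      rwa [hecoe] at this
    have hηc : ContinuousOn η (Icc u t') := by
      apply (e.continuousOn_symm).comp
      · intro s hs
        exact (hp s ⟨le_trans hu0 hs.1, le_trans hs.2 ht'T⟩).continuousAt.continuousWithinAt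
      · intro s hs
        exact htgt s hs
    have hηl : ∀ s ∈ Icc u t', f (η s) = p s := by
      intro s hs
      rw [hη]
      simp only
      have := e.right_inv (htgt s hs)
      rwa [hecoe] at this
    set γ' : ℝ → Euc n := fun s => if s ≤ u then γ s else η s with hγ'
    have hγ'c : ContinuousOn γ' (Icc 0 t') := by
      apply glue_cont
      · exact hγc.mono (fun s hs => ⟨hs.1.1, hs.2⟩)
      · exact hηc.mono (fun s hs => ⟨hs.2, hs.1.2⟩)
      · rw [hηu]
    have hγ'0 : γ' 0 = a := by
      rw [hγ']; simp only [if_pos hu0]; exact hγ0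
    have hγ'l : ∀ s ∈ Icc 0 t', f (γ' s) = p s := by
      intro s hs
      rw [hγ']
      by_cases hsu : s ≤ u
      · simp only [if_pos hsu]; exact hγl s ⟨hs.1, hsu⟩
      · simp only [if_neg hsu]
        exact hηl s ⟨le_of_lt (not_le.mp hsu), hs.2⟩
    have ht'S : t' ∈ S := ⟨⟨ht'0, ht'T⟩, γ', hγ'0, hγ'c, hγ'l⟩
    exact absurd (le_csSup hSbdd ht'S) (not_le.mpr hut')

lemma quant (hf : ContDiff ℝ 1 f) (hδ : 0 < δ)
    (hest : ∀ x v, δ * ‖v‖ ≤ ‖fderiv ℝ f x v‖) {R : ℝ} (a : Euc n) :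
    ∃ r : ℝ, 0 < r ∧ ∀ x ∈ closedBall a R, ∀ x' ∈ closedBall a R, ‖x' - x‖ ≤ r →
      (δ/2) * ‖x' - x‖ ≤ ‖f x' - f x‖ := by
  have hdfc : Continuous (fderiv ℝ f) := hf.continuous_fderiv one_ne_zero
  have hK : IsCompact (closedBall a R) := isCompact_closedBall a R
  have huc : UniformContinuousOn (fderiv ℝ f) (closedBall a R) :=
    hK.uniformContinuousOn_of_continuous hdfc.continuousOn
  rw [Metric.uniformContinuousOn_iff] at huc
  obtain ⟨r, hr, hball⟩ := huc (δ/2) (by positivity)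
  refine ⟨r/2, by positivity, ?_⟩
  intro x hx x' hx' hxx'
  set A := fderiv ℝ f x with hA
  have hseg : segment ℝ x x' ⊆ closedBall a R :=
    (convex_closedBall a R).segment_subset hx hx'
  have hsegx : segment ℝ x x' ⊆ closedBall x ‖x' - x‖ := by
    apply (convex_closedBall x ‖x' - x‖).segment_subset
    · simp
    · simp [dist_eq_norm, norm_sub_rev]
  have hbd : ∀ z ∈ segment ℝ x x', ‖fderiv ℝ f z - A‖ ≤ δ/2 := by
    intro z hz
    have hz1 : z ∈ closedBall a R := hseg hz
    have hz2 : dist z x < r := by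
      have := hsegx hz
      rw [mem_closedBall, dist_eq_norm] at this
      calc dist z x = ‖z - x‖ := dist_eq_norm _ _
        _ ≤ ‖x' - x‖ := this
        _ ≤ r/2 := hxx'
        _ < r := by linarith
    have := hball z hz1 x hx hz2
    rw [dist_eq_norm] at this
    exact le_of_lt this
  have hg : ∀ z ∈ segment ℝ x x', HasFDerivWithinAt (fun z => f z - A z)
      (fderiv ℝ f z - A) (segment ℝ x x') z := by
    intro z hz
    exact ((hf.differentiable one_ne_zero z).hasFDerivAt.sub (A.hasFDerivAt)).hasFDerivWithinAt
  have hmv := (convex_segment x x').norm_image_sub_le_of_norm_hasFDerivWithin_le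
    hg hbd (left_mem_segment ℝ x x') (right_mem_segment ℝ x x')
  have h1 : ‖(f x' - A x') - (f x - A x)‖ ≤ δ/2 * ‖x' - x‖ := hmv
  have h2 : δ * ‖x' - x‖ ≤ ‖A (x' - x)‖ := hest x (x' - x)
  have h3 : ‖A (x' - x)‖ - ‖(f x' - A x') - (f x - A x)‖ ≤ ‖f x' - f x‖ := by
    have hkey : A (x' - x) + ((f x' - A x') - (f x - A x)) = f x' - f x := by
      rw [map_sub]; abel
    have h4 : ‖A (x' - x)‖ ≤ ‖A (x' - x) + ((f x' - A x') - (f x - A x))‖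
        + ‖(f x' - A x') - (f x - A x)‖ := norm_le_add_norm_add _ _
    rw [hkey] at h4
    linarith
  linarith

lemma surj (hf : ContDiff ℝ 1 f) (hδ : 0 < δ)
    (hest : ∀ x v, δ * ‖v‖ ≤ ‖fderiv ℝ f x v‖) : Function.Surjective f := by
  intro y
  set p : ℝ → Euc n := fun s => f 0 + s • (y - f 0) with hp
  have hpd : ∀ s ∈ Icc (0:ℝ) 1, HasDerivAt p (y - f 0) s := by
    intro s _
    have h1 : HasDerivAt (fun s : ℝ => s • (y - f 0)) (y - f 0) s := by
      simpa using (hasDerivAt_id s).smul_const (y - f 0)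
    exact h1.const_add (f 0)
  obtain ⟨γ, hγ0, hγc, hγl⟩ := lift_exists hf hδ hest (zero_le_one) hpd
    (fun s _ => le_rfl) (a := 0) (by simp [hp])
  refine ⟨γ 1, ?_⟩
  have := hγl 1 ⟨zero_le_one, le_rfl⟩
  rw [this, hp]
  simp

lemma inj (hf : ContDiff ℝ 1 f) (hδ : 0 < δ)
    (hest : ∀ x v, δ * ‖v‖ ≤ ‖fderiv ℝ f x v‖) : Function.Injective f := by
  intro a b hab
  by_contra hne
  set c := f a with hc
  set L : ℝ → Euc n := fun s => a + s • (b - a) with hL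
  have hL0 : L 0 = a := by simp [hL]
  have hL1 : L 1 = b := by simp [hL]
  have hLc : Continuous L := by
    apply continuous_const.add (continuous_id.smul continuous_const)
  have hLd : ∀ s : ℝ, HasDerivAt L (b - a) s := by
    intro s
    have h1 : HasDerivAt (fun s : ℝ => s • (b - a)) (b - a) s := by
      simpa using (hasDerivAt_id s).smul_const (b - a)
    exact h1.const_add a
  set q : ℝ → ℝ → Euc n := fun t s => c + (1 - t) • (f (L s) - c) with hq
  set q' : ℝ → ℝ → Euc n := fun t s => (1 - t) • (fderiv ℝ f (L s) (b - a)) with hq'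
  have hqd : ∀ t : ℝ, ∀ s ∈ Icc (0:ℝ) 1, HasDerivAt (q t) (q' t s) s := by
    intro t s _
    have hfL : HasDerivAt (fun s => f (L s)) (fderiv ℝ f (L s) (b - a)) s :=
      (hf.differentiable one_ne_zero (L s)).hasFDerivAt.comp_hasDerivAt s (hLd s)
    have h2 : HasDerivAt (fun s => f (L s) - c) (fderiv ℝ f (L s) (b - a)) s := hfL.sub_const c
    have h3 := h2.const_smul (1 - t)
    exact h3.const_add c
  -- uniform bound M on the derivative
  have hcontd : Continuous (fun s : ℝ => fderiv ℝ f (L s) (b - a)) := by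
    exact ((hf.continuous_fderiv one_ne_zero).comp hLc).clm_apply continuous_const
  obtain ⟨M, hMb⟩ := (isCompact_Icc (a := (0:ℝ)) (b := 1)).exists_bound_of_continuousOn
    hcontd.continuousOn
  have hM0 : 0 ≤ M := le_trans (norm_nonneg _) (hMb 0 ⟨le_rfl, zero_le_one⟩)
  have hq'bd : ∀ t ∈ Icc (0:ℝ) 1, ∀ s ∈ Icc (0:ℝ) 1, ‖q' t s‖ ≤ M := by
    intro t ht s hs
    rw [hq']
    simp only
    rw [norm_smul, Real.norm_eq_abs, abs_of_nonneg (by linarith [ht.2])]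
    calc (1 - t) * ‖fderiv ℝ f (L s) (b - a)‖ ≤ 1 * ‖fderiv ℝ f (L s) (b - a)‖ := by
          apply mul_le_mul_of_nonneg_right _ (norm_nonneg _)
          linarith [ht.1]
      _ = ‖fderiv ℝ f (L s) (b - a)‖ := one_mul _
      _ ≤ M := hMb s hs
  have hq0 : ∀ t : ℝ, q t 0 = c := by intro t; simp [hq, hL0, ← hc]
  have hfa : ∀ t : ℝ, f a = q t 0 := by intro t; rw [hq0]
  -- the lifts
  have H : ∀ t : ℝ, t ∈ Icc (0:ℝ) 1 → ∃ γ : ℝ → Euc n, γ 0 = a ∧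
      ContinuousOn γ (Icc 0 1) ∧ ∀ s ∈ Icc (0:ℝ) 1, f (γ s) = q t s := by
    intro t ht
    exact lift_exists hf hδ hest zero_le_one (hqd t) (hq'bd t ht) (hfa t)
  choose! Γ hΓ0 hΓc hΓl using H
  set C := δ⁻¹ * M with hCdef
  have hC0 : 0 ≤ C := mul_nonneg (le_of_lt (inv_pos.mpr hδ)) hM0
  have hΓlip : ∀ t ∈ Icc (0:ℝ) 1, ∀ s ∈ Icc (0:ℝ) 1, ∀ s' ∈ Icc (0:ℝ) 1,
      ‖Γ t s - Γ t s'‖ ≤ C * ‖s - s'‖ := by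
    intro t ht s hs s' hs'
    exact lift_lipschitz hf hδ hest (convex_Icc 0 1) (hΓc t ht) (hΓl t ht)
      (hqd t) (hq'bd t ht) hs hs'
  have hΓball : ∀ t ∈ Icc (0:ℝ) 1, ∀ s ∈ Icc (0:ℝ) 1, Γ t s ∈ closedBall a C := by
    intro t ht s hs
    rw [mem_closedBall, dist_eq_norm]
    calc ‖Γ t s - a‖ = ‖Γ t s - Γ t 0‖ := by rw [hΓ0 t ht]
      _ ≤ C * ‖s - 0‖ := hΓlip t ht s hs 0 ⟨le_rfl, zero_le_one⟩
      _ = C * ‖s‖ := by rw [sub_zero]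
      _ ≤ C * 1 := by
          apply mul_le_mul_of_nonneg_left _ hC0
          rw [Real.norm_eq_abs, abs_of_nonneg hs.1]; exact hs.2
      _ = C := mul_one C
  -- quantitative injectivity radius
  obtain ⟨r, hr, hquant⟩ := quant hf hδ hest (R := C) a
  -- bound N on ‖f (L s) - c‖
  obtain ⟨N, hNb⟩ := (isCompact_Icc (a := (0:ℝ)) (b := 1)).exists_bound_of_continuousOn
    (((hf.continuous.comp hLc).sub continuous_const).continuousOn)
  have hN0 : 0 ≤ N := le_trans (norm_nonneg _) (hNb 0 ⟨le_rfl, zero_le_one⟩)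
  set ε₀ := (δ * r) / (8 * (N + 1)) with hε₀
  have hε₀pos : 0 < ε₀ := by positivity
  have hqdiff : ∀ t t' : ℝ, |t - t'| ≤ ε₀ → ∀ s ∈ Icc (0:ℝ) 1,
      ‖q t s - q t' s‖ ≤ δ * r / 8 := by
    intro t t' htt' s hs
    have he : q t s - q t' s = (t' - t) • (f (L s) - c) := by
      rw [hq]; simp only [sub_smul, one_smul]
      module
    rw [he, norm_smul, Real.norm_eq_abs]
    have h1 : |t' - t| ≤ ε₀ := by rwa [abs_sub_comm]
    have h2 : ‖f (L s) - c‖ ≤ N := hNb s hs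
    calc |t' - t| * ‖f (L s) - c‖ ≤ ε₀ * N :=
          mul_le_mul h1 h2 (norm_nonneg _) (le_of_lt hε₀pos)
      _ ≤ δ * r / 8 := by
          rw [hε₀]
          rw [div_mul_eq_mul_div, div_le_div_iff₀ (by positivity) (by norm_num)]
          nlinarith
  -- key implication and clopen argument
  have hkey : ∀ t ∈ Icc (0:ℝ) 1, ∀ t' ∈ Icc (0:ℝ) 1, |t - t'| ≤ ε₀ →
      ∀ s ∈ Icc (0:ℝ) 1, ‖Γ t s - Γ t' s‖ ≤ r → ‖Γ t s - Γ t' s‖ ≤ r/4 := by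
    intro t ht t' ht' htt' s hs hle
    have h1 := hquant (Γ t' s) (hΓball t' ht' s hs) (Γ t s) (hΓball t ht s hs) hle
    have h2 : f (Γ t s) - f (Γ t' s) = q t s - q t' s := by
      rw [hΓl t ht s hs, hΓl t' ht' s hs]
    rw [h2] at h1
    have h3 := hqdiff t t' htt' s hs
    have h4 : (δ/2) * ‖Γ t s - Γ t' s‖ ≤ δ * r / 8 := le_trans h1 h3
    calc ‖Γ t s - Γ t' s‖ = (δ/2)⁻¹ * ((δ/2) * ‖Γ t s - Γ t' s‖) := by
          field_simp
      _ ≤ (δ/2)⁻¹ * (δ * r / 8) := by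
          apply mul_le_mul_of_nonneg_left h4
          positivity
      _ = r/4 := by field_simp; ring
  have hclose : ∀ t ∈ Icc (0:ℝ) 1, ∀ t' ∈ Icc (0:ℝ) 1, |t - t'| ≤ ε₀ →
      ∀ s ∈ Icc (0:ℝ) 1, ‖Γ t s - Γ t' s‖ ≤ r/4 := by
    intro t ht t' ht' htt' s₁ hs₁
    set d : ℝ → ℝ := fun s => ‖Γ t s - Γ t' s‖ with hd
    have hdc : ContinuousOn d (Icc 0 1) := ((hΓc t ht).sub (hΓc t' ht')).norm
    set Z := {s | s ∈ Icc (0:ℝ) s₁ ∧ d s ≤ r/4} with hZ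
    have hsubT : Icc (0:ℝ) s₁ ⊆ Icc (0:ℝ) 1 := Icc_subset_Icc le_rfl hs₁.2
    have hZc : IsClosed Z := by
      have : Z = Icc 0 s₁ ∩ d ⁻¹' (Iic (r/4)) := by
        ext s; simp [hZ, and_comm]
      rw [this]
      exact ContinuousOn.preimage_isClosed_of_isClosed (hdc.mono hsubT)
        isClosed_Icc isClosed_Iic
    have h0Z : (0:ℝ) ∈ Z := by
      refine ⟨⟨le_rfl, hs₁.1⟩, ?_⟩
      have : d 0 = 0 := by
        rw [hd]; simp only
        rw [hΓ0 t ht, hΓ0 t' ht', sub_self, norm_zero]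
      rw [this]; positivity
    have hZne : Z.Nonempty := ⟨0, h0Z⟩
    have hZcp : IsCompact Z := (isCompact_Icc).of_isClosed_subset hZc (fun s hs => hs.1)
    obtain ⟨⟨hm0, hms₁⟩, hmle⟩ := hZcp.sSup_mem hZne
    set m := sSup Z with hm
    rcases eq_or_lt_of_le hms₁ with hms | hms
    · rwa [← hms]
    · exfalso
      have hmI : m ∈ Icc (0:ℝ) 1 := ⟨hm0, le_trans (le_of_lt hms) hs₁.2⟩
      have hdcm : ContinuousWithinAt d (Icc 0 1) m := hdc m hmI
      have hev : ∀ᶠ s in 𝓝[Icc (0:ℝ) 1] m, d s < r :=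
        Filter.Tendsto.eventually_lt_const (by linarith) hdcm
      rw [eventually_nhdsWithin_iff, Metric.eventually_nhds_iff] at hev
      obtain ⟨ε', hε', hball'⟩ := hev
      set s := min s₁ (m + ε'/2) with hsdef
      have hsm : m < s := lt_min hms (by linarith)
      have hsIcc : s ∈ Icc (0:ℝ) s₁ := ⟨le_trans hm0 (le_of_lt hsm), min_le_left _ _⟩
      have hsI1 : s ∈ Icc (0:ℝ) 1 := hsubT hsIcc
      have hdist : dist s m < ε' := by
        rw [Real.dist_eq, abs_of_pos (by linarith)]
        have : s ≤ m + ε'/2 := min_le_right _ _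
        linarith
      have hds : d s < r := hball' hdist hsI1
      have hds4 : d s ≤ r/4 := hkey t ht t' ht' htt' s hsI1 (le_of_lt hds)
      have hmemZ : s ∈ Z := ⟨hsIcc, hds4⟩
      exact absurd (le_csSup hZcp.bddAbove hmemZ) (not_le.mpr hsm)
  -- endpoint rigidity
  have hstep : ∀ t ∈ Icc (0:ℝ) 1, ∀ t' ∈ Icc (0:ℝ) 1, |t - t'| ≤ ε₀ → Γ t 1 = Γ t' 1 := by
    intro t ht t' ht' htt'
    have h1mem : (1:ℝ) ∈ Icc (0:ℝ) 1 := ⟨zero_le_one, le_rfl⟩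
    have hd1 : ‖Γ t 1 - Γ t' 1‖ ≤ r/4 := hclose t ht t' ht' htt' 1 h1mem
    have hfb : f b = c := hab.symm
    have hq1 : ∀ τ : ℝ, q τ 1 = c := by
      intro τ
      rw [hq]; simp only
      rw [hL1, hfb, sub_self, smul_zero, add_zero]
    have hcc : f (Γ t 1) = f (Γ t' 1) := by
      rw [hΓl t ht 1 h1mem, hΓl t' ht' 1 h1mem, hq1, hq1]
    have h2 := hquant (Γ t' 1) (hΓball t' ht' 1 h1mem) (Γ t 1) (hΓball t ht 1 h1mem)
      (le_trans hd1 (by linarith))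
    rw [hcc, sub_self, norm_zero] at h2
    have h3 : ‖Γ t 1 - Γ t' 1‖ ≤ 0 := by nlinarith
    have h4 : Γ t 1 - Γ t' 1 = 0 := norm_le_zero_iff.mp h3
    exact sub_eq_zero.mp h4
  -- grid induction
  obtain ⟨k, hk⟩ := exists_nat_gt (1/ε₀)
  have hk0 : (0:ℝ) < k + 1 := by positivity
  have hkε : 1 / ((k:ℝ) + 1) ≤ ε₀ := by
    rw [div_le_iff₀ hk0]
    have h1 : 1 / ε₀ < (k:ℝ) + 1 := by linarith
    rw [div_lt_iff₀ hε₀pos] at h1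
    linarith
  have hmemj : ∀ j : ℕ, j ≤ k + 1 → ((j:ℝ)/((k:ℝ)+1)) ∈ Icc (0:ℝ) 1 := by
    intro j hj
    constructor
    · positivity
    · rw [div_le_one hk0]
      have : (j:ℝ) ≤ (k:ℝ) + 1 := by exact_mod_cast hj
      linarith
  have hind : ∀ j : ℕ, j ≤ k + 1 → Γ ((j:ℝ)/((k:ℝ)+1)) 1 = Γ 0 1 := by
    intro j
    induction j with
    | zero => intro _; norm_num
    | succ i ih =>
      intro hj
      have hi : i ≤ k + 1 := le_trans (Nat.le_succ i) hj
      have hstep' := hstep ((((i:ℕ)+1:ℕ):ℝ)/((k:ℝ)+1)) (by exact_mod_cast hmemj (i+1) hj)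
        ((i:ℝ)/((k:ℝ)+1)) (hmemj i hi) ?_
      · rw [hstep']
        exact ih hi
      · push_cast
        rw [div_sub_div_same]
        have : ((i:ℝ) + 1 - i) = 1 := by ring
        rw [this, abs_of_pos (by positivity)]
        exact hkε
  have hfinal : Γ 1 1 = Γ 0 1 := by
    have h5 := hind (k+1) le_rfl
    have hcast : (((k+1:ℕ)):ℝ) = (k:ℝ)+1 := by push_cast; ring
    rw [hcast, div_self (ne_of_gt hk0)] at h5
    exact h5
  -- identify the two ends
  have h1mem : (1:ℝ) ∈ Icc (0:ℝ) 1 := ⟨zero_le_one, le_rfl⟩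
  have h0mem : (0:ℝ) ∈ Icc (0:ℝ) 1 := ⟨le_rfl, zero_le_one⟩
  have hΓ11 : Γ 1 1 = a := by
    have hconst : ∀ s ∈ Icc (0:ℝ) 1, f ((fun _ => a) s) = q 1 s := by
      intro s _
      rw [hq]; simp; exact hc.symm
    have := lift_unique hf hδ hest (hΓc 1 h1mem) continuousOn_const
      (hΓl 1 h1mem) hconst (by rw [hΓ0 1 h1mem]) 1 h1mem
    exact this
  have hΓ01 : Γ 0 1 = b := by
    have hLlift : ∀ s ∈ Icc (0:ℝ) 1, f (L s) = q 0 s := by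
      intro s _
      rw [hq]; simp
    have := lift_unique hf hδ hest (hΓc 0 h0mem) hLc.continuousOn
      (hΓl 0 h0mem) hLlift (by rw [hΓ0 0 h0mem, hL0]) 1 h1mem
    rw [this, hL1]
  exact absurd (hΓ11 ▸ hΓ01 ▸ hfinal) hne

end Hadamard

theorem hadamard_global_homeomorphism {n : ℕ}
    (f : EuclideanSpace ℝ (Fin n) → EuclideanSpace ℝ (Fin n))
    (hf : ContDiff ℝ 1 f) (δ : ℝ) (hδ : 0 < δ)
    (h : ∀ x, δ ≤ conorm (fderiv ℝ f x)) :
    ∃ g : EuclideanSpace ℝ (Fin n) ≃ₜ EuclideanSpace ℝ (Fin n), ∀ x, g x = f x := by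
  by_cases hn : n = 0
  · subst hn
    exfalso
    have h0 := h 0
    have hempty : {y : ℝ | ∃ v : EuclideanSpace ℝ (Fin 0), ‖v‖ = 1 ∧ y = ‖fderiv ℝ f 0 v‖}
        = ∅ := by
      ext y
      simp only [Set.mem_setOf_eq, Set.mem_empty_iff_false, iff_false]
      rintro ⟨v, hv, _⟩
      have hv0 : v = 0 := Subsingleton.elim v 0
      rw [hv0, norm_zero] at hv
      exact one_ne_zero hv.symm
    rw [conorm, hempty, Real.sInf_empty] at h0
    linarith
  · haveI : Nonempty (Fin n) := ⟨⟨0, Nat.pos_of_ne_zero hn⟩⟩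
    have hest : ∀ x v, δ * ‖v‖ ≤ ‖fderiv ℝ f x v‖ := fun x v =>
      Hadamard.conorm_est hδ (h x) v
    have hinj := Hadamard.inj hf hδ hest
    have hsurj := Hadamard.surj hf hδ hest
    have hopen : IsOpenMap f := by
      have hloc : IsLocalHomeomorph f := by
        apply IsLocalHomeomorph.mk
        intro x
        have hsf := Hadamard.hsd hf hδ hest x
        refine ⟨hsf.toOpenPartialHomeomorph f, hsf.mem_toOpenPartialHomeomorph_source, ?_⟩
        intro s _
        exact (congrFun hsf.toOpenPartialHomeomorph_coe s).symm
      exact hloc.isOpenMap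
    exact ⟨Equiv.toHomeomorphOfContinuousOpen (Equiv.ofBijective f ⟨hinj, hsurj⟩)
      hf.continuous hopen, fun x => rfl⟩
end

section
/- (Hadamard integral condition, C¹ case) Let f : ℝ^n → ℝ^n be a C¹ map and c : [0,∞) → (0,∞) a locally integrable function with ∫₀^∞ c(t) dt = ∞, such that σ(df(x)) ≥ c(‖x‖) for all x ∈ ℝ^n. Then f is proper: there is no sequence x_k with ‖x_k‖ → ∞ and f(x_k) convergent. -/
open Set Filter Metric MeasureTheory intervalIntegral Topology

namespace Hadamard

variable {n : ℕ}

local notation "E" => EuclideanSpace ℝ (Fin n)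

lemma conorm_set_bddBelow (A : E →L[ℝ] E) :
    BddBelow {y : ℝ | ∃ v : E, ‖v‖ = 1 ∧ y = ‖A v‖} :=
  ⟨0, fun y ⟨v, _, hy⟩ => hy ▸ norm_nonneg _⟩

lemma conorm_nonneg (A : E →L[ℝ] E) : 0 ≤ conorm A :=
  Real.sInf_nonneg fun y ⟨v, _, hy⟩ => hy ▸ norm_nonneg _

lemma conorm_le (A : E →L[ℝ] E) {v : E} (hv : ‖v‖ = 1) : conorm A ≤ ‖A v‖ :=
  csInf_le (conorm_set_bddBelow A) ⟨v, hv, rfl⟩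

lemma conorm_mul_le (A : E →L[ℝ] E) (v : E) : conorm A * ‖v‖ ≤ ‖A v‖ := by
  rcases eq_or_ne v 0 with rfl | hv
  · simp
  · have hnv : ‖v‖ ≠ 0 := norm_ne_zero_iff.2 hv
    have h1 : ‖‖v‖⁻¹ • v‖ = 1 := by
      rw [norm_smul, norm_inv, norm_norm, inv_mul_cancel₀ hnv]
    have := conorm_le A h1
    rw [A.map_smul, norm_smul, norm_inv, norm_norm] at this
    calc conorm A * ‖v‖ ≤ ‖v‖⁻¹ * ‖A v‖ * ‖v‖ := by
          apply mul_le_mul_of_nonneg_right this (norm_nonneg v)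
      _ = ‖A v‖ := by field_simp
/-- The conorm of the derivative. -/
noncomputable def kf (f : E → E) (x : E) : ℝ := conorm (fderiv ℝ f x)

lemma exists_equiv {A : E →L[ℝ] E} (hA : 0 < conorm A) :
    ∃ B : E ≃L[ℝ] E, (B : E →L[ℝ] E) = A := by
  have hinj : Function.Injective A := by
    intro a b hab
    have h0 : A (a - b) = 0 := by rw [map_sub, hab, sub_self]
    have h2 := conorm_mul_le A (a - b)
    rw [h0, norm_zero] at h2
    have h3 : ‖a - b‖ ≤ 0 := by nlinarith [norm_nonneg (a - b)]
    have h4 := le_antisymm h3 (norm_nonneg _)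
    rwa [norm_eq_zero, sub_eq_zero] at h4
  have hsurj : Function.Surjective A :=
    (LinearMap.injective_iff_surjective (f := (A : E →ₗ[ℝ] E))).1 hinj
  refine ⟨(LinearEquiv.ofBijective (A : E →ₗ[ℝ] E) ⟨hinj, hsurj⟩).toContinuousLinearEquiv, ?_⟩
  ext x; rfl

lemma exists_unit (hn : n ≠ 0) : ∃ u : E, ‖u‖ = 1 :=
  ⟨EuclideanSpace.single ⟨0, Nat.pos_of_ne_zero hn⟩ (1 : ℝ), by
    rw [EuclideanSpace.norm_single]; norm_num⟩

lemma conorm_le_add (hn : n ≠ 0) (A B : E →L[ℝ] E) :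
    conorm A ≤ conorm B + ‖A - B‖ := by
  obtain ⟨u, hu⟩ := exists_unit hn
  have key : conorm A - ‖A - B‖ ≤ conorm B := by
    show _ ≤ sInf {y : ℝ | ∃ v : E, ‖v‖ = 1 ∧ y = ‖B v‖}
    refine le_csInf ⟨‖B u‖, ⟨u, hu, rfl⟩⟩ ?_
    rintro y ⟨v, hv, rfl⟩
    have h1 : conorm A ≤ ‖A v‖ := conorm_le A hv
    have h2 : ‖A v‖ ≤ ‖B v‖ + ‖(A - B) v‖ := by
      calc ‖A v‖ = ‖B v + (A - B) v‖ := by congr 1; simp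
        _ ≤ ‖B v‖ + ‖(A - B) v‖ := norm_add_le _ _
    have h3 : ‖(A - B) v‖ ≤ ‖A - B‖ := by
      calc ‖(A - B) v‖ ≤ ‖A - B‖ * ‖v‖ := (A - B).le_opNorm v
        _ = ‖A - B‖ := by rw [hv, mul_one]
    linarith
  linarith

lemma conorm_dist_le (hn : n ≠ 0) (A B : E →L[ℝ] E) :
    |conorm A - conorm B| ≤ ‖A - B‖ := by
  rw [abs_le]
  constructor
  · have := conorm_le_add hn B A
    rw [norm_sub_rev] at this
    linarith
  · have := conorm_le_add hn A B
    linarith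

lemma kf_continuous (f : E → E) (hn : n ≠ 0) (hf : ContDiff ℝ 1 f) : Continuous (kf f) := by
  have l : LipschitzWith 1 (conorm (n := n)) := by
    apply LipschitzWith.of_dist_le_mul
    intro A B
    rw [NNReal.coe_one, one_mul, Real.dist_eq, dist_eq_norm]
    exact conorm_dist_le hn A B
  exact l.continuous.comp (hf.continuous_fderiv one_ne_zero)

lemma kf_pos (f : E → E) (c : ℝ → ℝ) (h : ∀ x, c ‖x‖ ≤ conorm (fderiv ℝ f x))
    (hcpos : ∀ t : ℝ, 0 ≤ t → 0 < c t) (x : E) : 0 < kf f x :=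
  lt_of_lt_of_le (hcpos _ (norm_nonneg x)) (h x)

/-- minimum of `kf` over a sphere -/
noncomputable def mf (f : E → E) (r : ℝ) : ℝ := sInf (kf f '' sphere (0 : E) r)

lemma kf_image_bddBelow (f : E → E) (s : Set E) : BddBelow (kf f '' s) :=
  ⟨0, fun y ⟨v, _, hy⟩ => hy ▸ conorm_nonneg _⟩

lemma mf_le_kf (f : E → E) (x : E) : mf f ‖x‖ ≤ kf f x :=
  csInf_le (kf_image_bddBelow f _) ⟨x, by simp [mem_sphere_zero_iff_norm], rfl⟩

lemma sphere_nonempty' (hn : n ≠ 0) {r : ℝ} (hr : 0 ≤ r) :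
    (sphere (0 : E) r).Nonempty := by
  obtain ⟨u, hu⟩ := exists_unit (n := n) hn
  exact ⟨r • u, by rw [mem_sphere_zero_iff_norm, norm_smul, hu, mul_one,
    Real.norm_eq_abs, abs_of_nonneg hr]⟩

lemma c_le_mf (f : E → E) (c : ℝ → ℝ) (hn : n ≠ 0)
    (h : ∀ x, c ‖x‖ ≤ conorm (fderiv ℝ f x))
    {r : ℝ} (hr : 0 ≤ r) : c r ≤ mf f r := by
  obtain ⟨v₀, hv₀⟩ := sphere_nonempty' hn hr
  show _ ≤ sInf (kf f '' sphere (0 : E) r)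
  refine le_csInf ⟨kf f v₀, ⟨v₀, hv₀, rfl⟩⟩ ?_
  rintro y ⟨v, hv, rfl⟩
  rw [mem_sphere_zero_iff_norm] at hv
  have := h v
  rwa [hv] at this

lemma mf_nonneg (f : E → E) (r : ℝ) : 0 ≤ mf f r :=
  Real.sInf_nonneg fun y ⟨v, _, hy⟩ => hy ▸ conorm_nonneg _

lemma mf_pos (f : E → E) (c : ℝ → ℝ) (hn : n ≠ 0)
    (h : ∀ x, c ‖x‖ ≤ conorm (fderiv ℝ f x))
    (hcpos : ∀ t : ℝ, 0 ≤ t → 0 < c t) {r : ℝ} (hr : 0 ≤ r) : 0 < mf f r :=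
  lt_of_lt_of_le (hcpos r hr) (c_le_mf f c hn h hr)

lemma mf_attained (f : E → E) (hn : n ≠ 0) (hf : ContDiff ℝ 1 f) {r : ℝ} (hr : 0 ≤ r) :
    ∃ x : E, x ∈ sphere (0 : E) r ∧ mf f r = kf f x := by
  obtain ⟨x, hx, hmin⟩ := (isCompact_sphere (0 : E) r).exists_isMinOn
    (sphere_nonempty' hn hr) ((kf_continuous f hn hf).continuousOn)
  refine ⟨x, hx, (IsLeast.csInf_eq ⟨⟨x, hx, rfl⟩, ?_⟩)⟩
  rintro y ⟨v, hv, rfl⟩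
  exact hmin hv
lemma exists_close_on_sphere (hn : n ≠ 0) {r s : ℝ} (hr : 0 ≤ r) (x : E) (hx : ‖x‖ = s) :
    ∃ y : E, ‖y‖ = r ∧ ‖y - x‖ = |r - s| := by
  by_cases h0 : s = 0
  · subst h0
    have hx0 : x = 0 := norm_eq_zero.1 hx
    obtain ⟨u, hu⟩ := exists_unit (n := n) hn
    refine ⟨r • u, ?_, ?_⟩
    · rw [norm_smul, hu, mul_one, Real.norm_eq_abs, abs_of_nonneg hr]
    · rw [hx0, sub_zero, norm_smul, hu, mul_one, Real.norm_eq_abs, sub_zero]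
  · have hs : 0 < s := lt_of_le_of_ne (hx ▸ norm_nonneg x) (Ne.symm h0)
    refine ⟨(r / s) • x, ?_, ?_⟩
    · rw [norm_smul, hx, Real.norm_eq_abs, abs_div, abs_of_nonneg hr, abs_of_pos hs]
      field_simp
    · have e : (r / s) • x - x = ((r - s) / s) • x := by
        rw [sub_div, div_self (ne_of_gt hs), sub_smul, one_smul]
      rw [e, norm_smul, hx, Real.norm_eq_abs, abs_div, abs_of_pos hs]
      field_simp

lemma mf_continuousOn (f : E → E) (hn : n ≠ 0) (hf : ContDiff ℝ 1 f) :
    ContinuousOn (mf f) (Ici (0 : ℝ)) := by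
  intro r₀ hr₀
  rw [mem_Ici] at hr₀
  rw [Metric.continuousWithinAt_iff]
  intro ε hε
  have huc := (isCompact_closedBall (0 : E) (r₀ + 1)).uniformContinuousOn_of_continuous
    ((kf_continuous f hn hf).continuousOn)
  rw [Metric.uniformContinuousOn_iff] at huc
  obtain ⟨δ, hδ, hprop⟩ := huc (ε / 2) (half_pos hε)
  refine ⟨min δ 1, lt_min hδ one_pos, ?_⟩
  intro r hr hdist
  rw [mem_Ici] at hr
  rw [Real.dist_eq] at hdist
  have hdistδ : |r - r₀| < δ := lt_of_lt_of_le hdist (min_le_left _ _)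
  have habs := abs_lt.1 (lt_of_lt_of_le hdist (min_le_right _ _))
  have hmem : ∀ y : E, ‖y‖ = r ∨ ‖y‖ = r₀ → y ∈ closedBall (0 : E) (r₀ + 1) := by
    intro y hy
    rw [mem_closedBall, dist_zero_right]
    rcases hy with hy | hy <;> rw [hy] <;> linarith
  have bound1 : mf f r ≤ mf f r₀ + ε / 2 := by
    obtain ⟨x₀, hx₀s, hmx₀⟩ := mf_attained f hn hf hr₀
    rw [mem_sphere_zero_iff_norm] at hx₀s
    obtain ⟨y, hy, hyx⟩ := exists_close_on_sphere hn hr x₀ hx₀s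
    have h1 : mf f r ≤ kf f y := by have := mf_le_kf f y; rwa [hy] at this
    have h2 : dist (kf f y) (kf f x₀) < ε / 2 := by
      refine hprop y (hmem y (Or.inl hy)) x₀ (hmem x₀ (Or.inr hx₀s)) ?_
      rw [dist_eq_norm, hyx]; exact hdistδ
    rw [Real.dist_eq] at h2
    have h3 := (abs_lt.1 h2).2
    rw [← hmx₀] at h3
    linarith
  have bound2 : mf f r₀ ≤ mf f r + ε / 2 := by
    obtain ⟨x₀, hx₀s, hmx₀⟩ := mf_attained f hn hf hr
    rw [mem_sphere_zero_iff_norm] at hx₀s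
    obtain ⟨y, hy, hyx⟩ := exists_close_on_sphere hn hr₀ x₀ hx₀s
    have h1 : mf f r₀ ≤ kf f y := by have := mf_le_kf f y; rwa [hy] at this
    have h2 : dist (kf f y) (kf f x₀) < ε / 2 := by
      refine hprop y (hmem y (Or.inr hy)) x₀ (hmem x₀ (Or.inl hx₀s)) ?_
      rw [dist_eq_norm, hyx, abs_sub_comm]; exact hdistδ
    rw [Real.dist_eq] at h2
    have h3 := (abs_lt.1 h2).2
    rw [← hmx₀] at h3
    linarith
  rw [Real.dist_eq, abs_lt]
  constructor <;> linarith

/-- integrand for the radial potential, as a function of `s = r ^ 2`. -/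
noncomputable def qf (f : E → E) (s : ℝ) : ℝ :=
  mf f (Real.sqrt s) / (2 * max 1 (Real.sqrt s))

lemma qf_den_pos (s : ℝ) : 0 < 2 * max 1 (Real.sqrt s) :=
  mul_pos two_pos (lt_of_lt_of_le one_pos (le_max_left _ _))

lemma qf_nonneg (f : E → E) (s : ℝ) : 0 ≤ qf f s :=
  div_nonneg (mf_nonneg f _) (le_of_lt (qf_den_pos s))

lemma qf_continuous (f : E → E) (hn : n ≠ 0) (hf : ContDiff ℝ 1 f) :
    Continuous (qf f) := by
  have h1 : Continuous fun s : ℝ => mf f (Real.sqrt s) :=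
    (mf_continuousOn f hn hf).comp_continuous Real.continuous_sqrt
      fun s => mem_Ici.2 (Real.sqrt_nonneg s)
  have h2 : Continuous fun s : ℝ => 2 * max 1 (Real.sqrt s) :=
    continuous_const.mul (continuous_const.max Real.continuous_sqrt)
  exact h1.div h2 fun s => ne_of_gt (qf_den_pos s)

/-- radial potential as a function of `σ = r ^ 2`. -/
noncomputable def PhiR (f : E → E) (σ : ℝ) : ℝ := ∫ s in (0 : ℝ)..σ, qf f s

/-- The potential `Φ`. -/
noncomputable def Phi (f : E → E) (x : E) : ℝ := PhiR f (‖x‖ ^ 2)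

lemma PhiR_hasDerivAt (f : E → E) (hn : n ≠ 0) (hf : ContDiff ℝ 1 f) (σ : ℝ) :
    HasDerivAt (PhiR f) (qf f σ) σ :=
  ((qf_continuous f hn hf).integral_hasStrictDerivAt 0 σ).hasDerivAt

lemma Phi_hasFDerivAt (f : E → E) (hn : n ≠ 0) (hf : ContDiff ℝ 1 f) (x : E) :
    HasFDerivAt (Phi f) ((qf f (‖x‖ ^ 2)) • (2 • innerSL ℝ x : E →L[ℝ] ℝ)) x :=
  (PhiR_hasDerivAt f hn hf (‖x‖ ^ 2)).comp_hasFDerivAt x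
    (hasStrictFDerivAt_norm_sq x).hasFDerivAt

lemma Phi_fderiv_norm_le (f : E → E) (x : E) :
    ‖(qf f (‖x‖ ^ 2)) • (2 • innerSL ℝ x : E →L[ℝ] ℝ)‖ ≤ kf f x := by
  have hq := qf_nonneg f (‖x‖ ^ 2)
  have h1 : ‖(qf f (‖x‖ ^ 2)) • (2 • innerSL ℝ x : E →L[ℝ] ℝ)‖
      ≤ qf f (‖x‖ ^ 2) * (2 * ‖x‖) := by
    refine le_trans (ContinuousLinearMap.opNorm_smul_le _ _) ?_
    rw [Real.norm_eq_abs, abs_of_nonneg hq]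
    apply mul_le_mul_of_nonneg_left _ hq
    calc ‖(2 • innerSL ℝ x : E →L[ℝ] ℝ)‖ = ‖(innerSL ℝ x : E →L[ℝ] ℝ) + innerSL ℝ x‖ := by
          rw [two_smul]
      _ ≤ ‖(innerSL ℝ x : E →L[ℝ] ℝ)‖ + ‖(innerSL ℝ x : E →L[ℝ] ℝ)‖ := norm_add_le _ _
      _ = 2 * ‖x‖ := by rw [innerSL_apply_norm]; ring
  have hsq : Real.sqrt (‖x‖ ^ 2) = ‖x‖ := Real.sqrt_sq (norm_nonneg x)
  have h2 : qf f (‖x‖ ^ 2) * (2 * ‖x‖) ≤ mf f ‖x‖ := by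
    rw [qf, hsq]
    set r := ‖x‖ with hr
    have hM : (0 : ℝ) < max 1 r := lt_of_lt_of_le one_pos (le_max_left _ _)
    have he : mf f r / (2 * max 1 r) * (2 * r) = mf f r * (r / max 1 r) := by
      field_simp
    rw [he]
    calc mf f r * (r / max 1 r) ≤ mf f r * 1 := by
          apply mul_le_mul_of_nonneg_left _ (mf_nonneg f r)
          rw [div_le_one hM]
          exact le_max_right _ _
      _ = mf f r := mul_one _
  exact le_trans h1 (le_trans h2 (mf_le_kf f x))

lemma c_intervalIntegrable (c : ℝ → ℝ)
    (hcint : ∀ T : ℝ, IntervalIntegrable c volume 0 T) (a b : ℝ) :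
    IntervalIntegrable c volume a b :=
  (hcint a).symm.trans (hcint b)

lemma PhiR_lower (f : E → E) (c : ℝ → ℝ) (hn : n ≠ 0) (hf : ContDiff ℝ 1 f)
    (h : ∀ x, c ‖x‖ ≤ conorm (fderiv ℝ f x))
    (hcint : ∀ T : ℝ, IntervalIntegrable c volume 0 T)
    {r : ℝ} (hr : 1 ≤ r) :
    (∫ t in (1 : ℝ)..r, c t) ≤ PhiR f (r ^ 2) := by
  have hq := qf_continuous f hn hf
  have hr0 : (0 : ℝ) ≤ r := le_trans zero_le_one hr
  have hr2 : (1 : ℝ) ≤ r ^ 2 := by nlinarith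
  have e1 : PhiR f (r ^ 2) = (∫ s in (0 : ℝ)..1, qf f s) + ∫ s in (1 : ℝ)..r ^ 2, qf f s :=
    (integral_add_adjacent_intervals (hq.intervalIntegrable _ _)
      (hq.intervalIntegrable _ _)).symm
  have e2 : 0 ≤ ∫ s in (0 : ℝ)..1, qf f s :=
    integral_nonneg zero_le_one fun u _ => qf_nonneg f u
  have e3' := integral_comp_mul_deriv (a := (1:ℝ)) (b := r) (f := fun t : ℝ => t ^ 2)
    (f' := fun t => 2 * t) (g := qf f)
    (fun x _ => by simpa using hasDerivAt_pow 2 x)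
    ((continuous_const.mul continuous_id).continuousOn) hq
  norm_num at e3'
  have e3 : (∫ s in (1 : ℝ)..r ^ 2, qf f s)
      = ∫ t in (1 : ℝ)..r, (qf f ∘ fun t => t ^ 2) t * (2 * t) := e3'.symm
  have e4 : (∫ t in (1 : ℝ)..r, (qf f ∘ fun t => t ^ 2) t * (2 * t))
      = ∫ t in (1 : ℝ)..r, mf f t := by
    apply integral_congr
    intro t ht
    rw [uIcc_of_le hr] at ht
    have ht1 : 1 ≤ t := ht.1
    have ht0 : 0 < t := lt_of_lt_of_le one_pos ht1
    simp only [Function.comp]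
    rw [qf, Real.sqrt_sq (le_of_lt ht0), max_eq_right ht1]
    field_simp
  have e5 : (∫ t in (1 : ℝ)..r, c t) ≤ ∫ t in (1 : ℝ)..r, mf f t := by
    apply integral_mono_on hr (c_intervalIntegrable c hcint 1 r)
    · apply ContinuousOn.intervalIntegrable
      apply (mf_continuousOn f hn hf).mono
      rw [uIcc_of_le hr]
      intro t ht
      exact mem_Ici.2 (le_trans zero_le_one ht.1)
    · intro t ht
      exact c_le_mf f c hn h (le_trans zero_le_one ht.1)
  rw [e1, e3, e4]
  linarith

lemma Phi_lower (f : E → E) (c : ℝ → ℝ) (hn : n ≠ 0) (hf : ContDiff ℝ 1 f)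
    (h : ∀ x, c ‖x‖ ≤ conorm (fderiv ℝ f x))
    (hcint : ∀ T : ℝ, IntervalIntegrable c volume 0 T)
    (x : E) (hx : 1 ≤ ‖x‖) : (∫ t in (1 : ℝ)..‖x‖, c t) ≤ Phi f x :=
  PhiR_lower f c hn hf h hcint hx

lemma G_tendsto (c : ℝ → ℝ) (hcint : ∀ T : ℝ, IntervalIntegrable c volume 0 T)
    (hdiv : Tendsto (fun T => ∫ t in (0 : ℝ)..T, c t) atTop atTop) :
    Tendsto (fun T => ∫ t in (1 : ℝ)..T, c t) atTop atTop := by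
  have he : ∀ T : ℝ, (∫ t in (1 : ℝ)..T, c t)
      = (∫ t in (0 : ℝ)..T, c t) + -(∫ t in (0 : ℝ)..1, c t) := by
    intro T
    have := integral_add_adjacent_intervals (hcint 1) (c_intervalIntegrable c hcint 1 T)
    linarith
  have := tendsto_atTop_add_const_right atTop (-(∫ t in (0 : ℝ)..1, c t)) hdiv
  refine this.congr fun T => (he T).symm

lemma Phi_coercive (f : E → E) (c : ℝ → ℝ) (hn : n ≠ 0) (hf : ContDiff ℝ 1 f)
    (h : ∀ x, c ‖x‖ ≤ conorm (fderiv ℝ f x))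
    (hcpos : ∀ t : ℝ, 0 ≤ t → 0 < c t)
    (hcint : ∀ T : ℝ, IntervalIntegrable c volume 0 T)
    (hdiv : Tendsto (fun T => ∫ t in (0 : ℝ)..T, c t) atTop atTop)
    (B : ℝ) : ∃ R : ℝ, 0 ≤ R ∧ ∀ x : E, Phi f x ≤ B → ‖x‖ ≤ R := by
  obtain ⟨R, hRB, hR1⟩ := (((G_tendsto c hcint hdiv).eventually
    (eventually_gt_atTop B)).and (eventually_ge_atTop 1)).exists
  refine ⟨R, le_trans zero_le_one hR1, fun x hx => ?_⟩
  by_contra hc'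
  push_neg at hc'
  have hx1 : 1 ≤ ‖x‖ := le_trans hR1 (le_of_lt hc')
  have h1 := Phi_lower f c hn hf h hcint x hx1
  have h2 : (∫ t in (1 : ℝ)..‖x‖, c t)
      = (∫ t in (1 : ℝ)..R, c t) + ∫ t in R..‖x‖, c t :=
    (integral_add_adjacent_intervals (c_intervalIntegrable c hcint 1 R)
      (c_intervalIntegrable c hcint R ‖x‖)).symm
  have h3 : 0 ≤ ∫ t in R..‖x‖, c t := by
    apply integral_nonneg (le_of_lt hc')
    intro u hu
    exact le_of_lt (hcpos u (le_trans (le_trans zero_le_one hR1) hu.1))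
  linarith
lemma hasStrict (f : E → E) (c : ℝ → ℝ) (hf : ContDiff ℝ 1 f)
    (h : ∀ x, c ‖x‖ ≤ conorm (fderiv ℝ f x))
    (hcpos : ∀ t : ℝ, 0 ≤ t → 0 < c t) (x₀ : E) :
    ∃ B : E ≃L[ℝ] E, (B : E →L[ℝ] E) = fderiv ℝ f x₀ ∧
      HasStrictFDerivAt f (B : E →L[ℝ] E) x₀ := by
  obtain ⟨B, hB⟩ := exists_equiv (A := fderiv ℝ f x₀) (kf_pos f c h hcpos x₀)
  refine ⟨B, hB, ?_⟩
  rw [hB]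
  exact hf.hasStrictFDerivAt one_ne_zero

lemma lift_hasDerivWithinAt_s12 (f : E → E) (c : ℝ → ℝ) (hf : ContDiff ℝ 1 f)
    (h : ∀ x, c ‖x‖ ≤ conorm (fderiv ℝ f x))
    (hcpos : ∀ t : ℝ, 0 ≤ t → 0 < c t)
    {a b : E} {T : ℝ} {γ : ℝ → E}
    (hγc : ContinuousOn γ (Icc 0 T))
    (hlift : ∀ s ∈ Icc (0 : ℝ) T, f (γ s) = a + s • (b - a))
    {t : ℝ} (ht : t ∈ Icc (0 : ℝ) T) :
    ∃ w : E, HasDerivWithinAt γ w (Icc 0 T) t ∧ kf f (γ t) * ‖w‖ ≤ ‖b - a‖ := by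
  obtain ⟨B, hB, hs⟩ := hasStrict f c hf h hcpos (γ t)
  set Ψ := hs.toOpenPartialHomeomorph f with hΨ
  have hxsrc : γ t ∈ Ψ.source := hs.mem_toOpenPartialHomeomorph_source
  have hcoe : ∀ z : E, Ψ z = f z := fun z => by rw [hs.toOpenPartialHomeomorph_coe]
  have hev1 : ∀ᶠ s in 𝓝[Icc 0 T] t, γ s ∈ Ψ.source :=
    (hγc t ht).eventually (Ψ.open_source.eventually_mem hxsrc)
  have hev2 : ∀ᶠ s in 𝓝[Icc 0 T] t, s ∈ Icc (0 : ℝ) T := eventually_mem_nhdsWithin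
  have heq : (fun s => Ψ.symm (a + s • (b - a))) =ᶠ[𝓝[Icc 0 T] t] γ := by
    filter_upwards [hev1, hev2] with s h1 h2
    have hli := Ψ.left_inv h1
    rw [← hli]
    congr 1
    rw [hcoe, hlift s h2]
  have hfx : f (γ t) = a + t • (b - a) := hlift t ht
  have hval : Ψ.symm (a + t • (b - a)) = γ t := by
    rw [← hfx, ← hcoe]
    exact Ψ.left_inv hxsrc
  have hinv : HasFDerivAt Ψ.symm (B.symm : E →L[ℝ] E) (a + t • (b - a)) := by
    have h1 := hs.to_localInverse
    rw [hs.localInverse_def, hfx] at h1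
    exact h1.hasFDerivAt
  have hp : HasDerivAt (fun s : ℝ => a + s • (b - a)) (b - a) t := by
    simpa using ((hasDerivAt_id t).smul_const (b - a)).const_add a
  have hcomp : HasDerivWithinAt (fun s => Ψ.symm (a + s • (b - a)))
      (B.symm (b - a)) (Icc 0 T) t :=
    by have := hinv.comp_hasDerivWithinAt t (hp.hasDerivWithinAt (s := Icc 0 T)); exact this
  refine ⟨B.symm (b - a), hcomp.congr_of_eventuallyEq heq.symm hval.symm, ?_⟩
  have h1 := conorm_mul_le (fderiv ℝ f (γ t)) (B.symm (b - a))
  have happ : fderiv ℝ f (γ t) (B.symm (b - a)) = b - a := by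
    rw [← hB]
    simp only [ContinuousLinearEquiv.coe_coe, ContinuousLinearEquiv.apply_symm_apply]
  rw [happ] at h1
  simpa [kf] using h1

lemma lift_estimate (f : E → E) (c : ℝ → ℝ) (hn : n ≠ 0) (hf : ContDiff ℝ 1 f)
    (h : ∀ x, c ‖x‖ ≤ conorm (fderiv ℝ f x))
    (hcpos : ∀ t : ℝ, 0 ≤ t → 0 < c t)
    {a b : E} {T : ℝ} (hT : 0 ≤ T) {γ : ℝ → E}
    (hγc : ContinuousOn γ (Icc 0 T))
    (hlift : ∀ s ∈ Icc (0 : ℝ) T, f (γ s) = a + s • (b - a)) :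
    ∀ t ∈ Icc (0 : ℝ) T, |Phi f (γ t) - Phi f (γ 0)| ≤ ‖b - a‖ * t := by
  have hD : ∀ t ∈ Icc (0 : ℝ) T, ∃ d : ℝ,
      HasDerivWithinAt (fun s => Phi f (γ s)) d (Icc 0 T) t ∧ |d| ≤ ‖b - a‖ := by
    intro t ht
    obtain ⟨w, hw, hbound⟩ := lift_hasDerivWithinAt_s12 f c hf h hcpos hγc hlift ht
    have hΦ := Phi_hasFDerivAt f hn hf (γ t)
    refine ⟨_, hΦ.comp_hasDerivWithinAt t hw, ?_⟩
    have h1 : |(((qf f (‖γ t‖ ^ 2)) • (2 • innerSL ℝ (γ t) : E →L[ℝ] ℝ)) : E →L[ℝ] ℝ) w|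
        ≤ ‖((qf f (‖γ t‖ ^ 2)) • (2 • innerSL ℝ (γ t) : E →L[ℝ] ℝ) : E →L[ℝ] ℝ)‖ * ‖w‖ := by
      rw [← Real.norm_eq_abs]
      exact ContinuousLinearMap.le_opNorm _ w
    have h2 : ‖((qf f (‖γ t‖ ^ 2)) • (2 • innerSL ℝ (γ t) : E →L[ℝ] ℝ) : E →L[ℝ] ℝ)‖ * ‖w‖
        ≤ kf f (γ t) * ‖w‖ :=
      mul_le_mul_of_nonneg_right (Phi_fderiv_norm_le f (γ t)) (norm_nonneg w)
    exact le_trans h1 (le_trans h2 hbound)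
  classical
  set D : ℝ → ℝ := fun t => if ht : t ∈ Icc (0 : ℝ) T then Classical.choose (hD t ht) else 0
    with hDdef
  have hD1 : ∀ t ∈ Icc (0 : ℝ) T,
      HasDerivWithinAt (fun s => Phi f (γ s)) (D t) (Icc 0 T) t := by
    intro t ht
    simp only [hDdef, dif_pos ht]
    exact (Classical.choose_spec (hD t ht)).1
  have hD2 : ∀ t ∈ Icc (0 : ℝ) T, ‖D t‖ ≤ ‖b - a‖ := by
    intro t ht
    simp only [hDdef, dif_pos ht, Real.norm_eq_abs]
    exact (Classical.choose_spec (hD t ht)).2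
  intro t ht
  have h0 : (0 : ℝ) ∈ Icc (0 : ℝ) T := ⟨le_refl 0, hT⟩
  have := Convex.norm_image_sub_le_of_norm_hasDerivWithin_le hD1 hD2 (convex_Icc 0 T) h0 ht
  rw [Real.norm_eq_abs, Real.norm_eq_abs, sub_zero, abs_of_nonneg ht.1] at this
  exact this

lemma lift_unique_s12 (f : E → E) (c : ℝ → ℝ) (hf : ContDiff ℝ 1 f)
    (h : ∀ x, c ‖x‖ ≤ conorm (fderiv ℝ f x))
    (hcpos : ∀ t : ℝ, 0 ≤ t → 0 < c t)
    {α β : ℝ} (hαβ : α ≤ β) {γ₁ γ₂ : ℝ → E}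
    (h₁ : ContinuousOn γ₁ (Icc α β)) (h₂ : ContinuousOn γ₂ (Icc α β))
    (hfeq : ∀ t ∈ Icc α β, f (γ₁ t) = f (γ₂ t))
    {t₀ : ℝ} (ht₀ : t₀ ∈ Icc α β) (hagree : γ₁ t₀ = γ₂ t₀) :
    ∀ t ∈ Icc α β, γ₁ t = γ₂ t := by
  haveI : PreconnectedSpace (Icc α β) := Subtype.preconnectedSpace isPreconnected_Icc
  set S : Set (Icc α β) := {t | γ₁ ↑t = γ₂ ↑t} with hSdef
  have hSclosed : IsClosed S := isClosed_eq h₁.restrict h₂.restrict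
  have hSopen : IsOpen S := by
    rw [isOpen_iff_mem_nhds]
    rintro ⟨t, htm⟩ hts
    have htval : γ₁ t = γ₂ t := hts
    obtain ⟨B, hB, hs⟩ := hasStrict f c hf h hcpos (γ₁ t)
    set Ψ := hs.toOpenPartialHomeomorph f with hΨ
    have hsrc : γ₁ t ∈ Ψ.source := hs.mem_toOpenPartialHomeomorph_source
    have hsrc2 : γ₂ t ∈ Ψ.source := htval ▸ hsrc
    have hinj : Set.InjOn f Ψ.source := by
      have := Ψ.injOn
      have hcoe : (Ψ : E → E) = f := hs.toOpenPartialHomeomorph_coe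
      rwa [hcoe] at this
    have hc1 : ContinuousAt (fun s : Icc α β => γ₁ ↑s) ⟨t, htm⟩ := h₁.restrict.continuousAt
    have hc2 : ContinuousAt (fun s : Icc α β => γ₂ ↑s) ⟨t, htm⟩ := h₂.restrict.continuousAt
    have hm1 := hc1.preimage_mem_nhds (Ψ.open_source.mem_nhds hsrc)
    have hm2 := hc2.preimage_mem_nhds (Ψ.open_source.mem_nhds hsrc2)
    refine Filter.mem_of_superset (Filter.inter_mem hm1 hm2) ?_
    rintro ⟨s, hsm⟩ ⟨hs1, hs2⟩
    exact hinj hs1 hs2 (hfeq s hsm)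
  have huniv : S = univ := IsClopen.eq_univ ⟨hSclosed, hSopen⟩ ⟨⟨t₀, ht₀⟩, hagree⟩
  intro t ht
  have : (⟨t, ht⟩ : Icc α β) ∈ S := huniv ▸ mem_univ _
  exact this
lemma nontrivial_E (hn : n ≠ 0) : Nontrivial (EuclideanSpace ℝ (Fin n)) := by
  obtain ⟨u, hu⟩ := exists_unit (n := n) hn
  refine ⟨u, 0, ?_⟩
  intro h0
  rw [h0, norm_zero] at hu
  norm_num at hu

lemma uniform_section (f : E → E) (c : ℝ → ℝ) (hn : n ≠ 0) (hf : ContDiff ℝ 1 f)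
    (h : ∀ x, c ‖x‖ ≤ conorm (fderiv ℝ f x))
    (hcpos : ∀ t : ℝ, 0 ≤ t → 0 < c t)
    {R : ℝ} (hR : 0 ≤ R) :
    ∃ σ : ℝ, 0 < σ ∧ ∀ x' : E, ‖x'‖ ≤ R → ∃ gs : E → E,
      ContinuousOn gs (ball (f x') σ) ∧ gs (f x') = x' ∧
      ∀ v ∈ ball (f x') σ, f (gs v) = v := by
  obtain ⟨xm, hxm, hmin⟩ := (isCompact_closedBall (0 : E) (R + 1)).exists_isMinOn
    ⟨0, by simp; linarith⟩ ((kf_continuous f hn hf).continuousOn)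
  set μ := kf f xm with hμdef
  have hμpos : 0 < μ := kf_pos f c h hcpos xm
  have huc := (isCompact_closedBall (0 : E) (R + 1)).uniformContinuousOn_of_continuous
    ((hf.continuous_fderiv one_ne_zero).continuousOn)
  rw [Metric.uniformContinuousOn_iff] at huc
  obtain ⟨δ₀, hδ₀, hprop⟩ := huc (μ / 2) (half_pos hμpos)
  set δ := min δ₀ 1 with hδdef
  have hδpos : 0 < δ := lt_min hδ₀ one_pos
  have hδ1 : δ ≤ 1 := min_le_right _ _
  have hδδ₀ : δ ≤ δ₀ := min_le_left _ _
  refine ⟨μ * δ / 8, by positivity, ?_⟩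
  intro x' hx'
  have hballsub : ball x' δ ⊆ closedBall (0 : E) (R + 1) := by
    intro z hz
    rw [mem_ball, dist_eq_norm] at hz
    rw [mem_closedBall, dist_zero_right]
    calc ‖z‖ = ‖z - x' + x'‖ := by rw [sub_add_cancel]
      _ ≤ ‖z - x'‖ + ‖x'‖ := norm_add_le _ _
      _ ≤ 1 + R := by have := lt_of_lt_of_le hz hδ1; linarith
      _ = R + 1 := by ring
  have hx'cb : x' ∈ closedBall (0 : E) (R + 1) := by
    rw [mem_closedBall, dist_zero_right]; linarith
  obtain ⟨B, hB, hs⟩ := hasStrict f c hf h hcpos x'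
  have hμkf : μ ≤ kf f x' := hmin hx'cb
  set cnn : NNReal := ⟨μ / 2, le_of_lt (half_pos hμpos)⟩ with hcnn
  have hap : ApproximatesLinearOn f (B : E →L[ℝ] E) (ball x' δ) cnn := by
    intro z hz w hw
    refine (convex_ball x' δ).norm_image_sub_le_of_norm_hasFDerivWithin_le'
      (f' := fun y => fderiv ℝ f y) (φ := (B : E →L[ℝ] E)) (C := μ / 2)
      (fun y _ => ((hf.differentiable one_ne_zero) y).hasFDerivAt.hasFDerivWithinAt)
      ?_ hw hz
    intro y hy
    rw [hB]
    have := hprop y (hballsub hy) x' hx'cb (by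
      rw [mem_ball] at hy
      exact lt_of_lt_of_le hy hδδ₀)
    rw [dist_eq_norm] at this
    exact le_of_lt this
  haveI : Nontrivial (EuclideanSpace ℝ (Fin n)) := nontrivial_E hn
  have hnotsub : ¬Subsingleton (EuclideanSpace ℝ (Fin n)) := not_subsingleton _
  set N := ‖(B.symm : E →L[ℝ] E)‖₊ with hN
  have hNpos : 0 < N := B.subsingleton_or_nnnorm_symm_pos.resolve_left hnotsub
  have hNle : ((N : NNReal) : ℝ) ≤ μ⁻¹ := by
    apply ContinuousLinearMap.opNorm_le_bound _ (inv_nonneg.2 (le_of_lt hμpos))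
    intro v
    have h1 := conorm_mul_le (fderiv ℝ f x') ((B.symm : E →L[ℝ] E) v)
    have happ : fderiv ℝ f x' ((B.symm : E →L[ℝ] E) v) = v := by
      rw [← hB]
      simp only [ContinuousLinearEquiv.coe_coe, ContinuousLinearEquiv.apply_symm_apply]
    rw [happ] at h1
    have h2 : μ * ‖(B.symm : E →L[ℝ] E) v‖ ≤ ‖v‖ := by
      have h3 : μ * ‖(B.symm : E →L[ℝ] E) v‖ ≤ kf f x' * ‖(B.symm : E →L[ℝ] E) v‖ :=
        mul_le_mul_of_nonneg_right hμkf (norm_nonneg _)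
      exact le_trans h3 (by simpa [kf] using h1)
    rw [inv_mul_eq_div, le_div_iff₀ hμpos]
    linarith [h2]
  have hμleNinv : μ ≤ ((N⁻¹ : NNReal) : ℝ) := by
    rw [NNReal.coe_inv]
    rw [← inv_inv μ]
    apply inv_anti₀
    · exact NNReal.coe_pos.2 hNpos
    · exact hNle
  have hsub : Subsingleton (EuclideanSpace ℝ (Fin n)) ∨ cnn < N⁻¹ := by
    right
    rw [← NNReal.coe_lt_coe]
    have : ((cnn : NNReal) : ℝ) = μ / 2 := rfl
    rw [this]
    linarith
  set Ψ := hap.toOpenPartialHomeomorph f (ball x' δ) hsub isOpen_ball with hΨ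
  have htar : ball (f x') (μ * δ / 8) ⊆ Ψ.target := by
    have hcb : closedBall x' (δ / 2) ⊆ ball x' δ := closedBall_subset_ball (by linarith)
    have h1 := hap.closedBall_subset_target hsub isOpen_ball
      (by positivity : (0 : ℝ) ≤ δ / 2) hcb
    refine subset_trans (fun v hv => ?_) h1
    rw [mem_ball] at hv
    rw [mem_closedBall]
    have hc2 : ((cnn : NNReal) : ℝ) = μ / 2 := rfl
    have hge : μ * δ / 8 ≤ (((N⁻¹ : NNReal) : ℝ) - ((cnn : NNReal) : ℝ)) * (δ / 2) := by
      rw [hc2]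
      nlinarith [hμpos, hδpos]
    linarith
  refine ⟨Ψ.symm, Ψ.continuousOn_symm.mono htar, ?_, ?_⟩
  · have hsrc : x' ∈ Ψ.source := by
      rw [hΨ, hap.toOpenPartialHomeomorph_source]
      exact mem_ball_self hδpos
    exact Ψ.left_inv hsrc
  · intro v hv
    exact Ψ.right_inv (htar hv)

lemma glue_continuousOn {T α β : ℝ} (hα : α ≤ T) (hβ : T ≤ β) {γ₁ γ₂ : ℝ → E}
    (h₁ : ContinuousOn γ₁ (Icc α T)) (h₂ : ContinuousOn γ₂ (Icc T β))
    (heq : γ₁ T = γ₂ T) :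
    ContinuousOn (fun t => if t ≤ T then γ₁ t else γ₂ t) (Icc α β) := by
  set F := fun t => if t ≤ T then γ₁ t else γ₂ t with hF
  have hF1 : ∀ t ∈ Icc α T, F t = γ₁ t := fun t ht => if_pos ht.2
  have hF2 : ∀ t ∈ Icc T β, F t = γ₂ t := by
    intro t ht
    by_cases hle : t ≤ T
    · have hTt : t = T := le_antisymm hle ht.1
      rw [hF]
      simp only [hTt, if_pos (le_refl T), heq]
    · exact if_neg hle
  have hU : Icc α β = Icc α T ∪ Icc T β := (Icc_union_Icc_eq_Icc hα hβ).symm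
  rw [hU]
  intro t ht
  have hcwa1 : ContinuousWithinAt F (Icc α T) t := by
    by_cases h1 : t ∈ Icc α T
    · exact ((h₁ t h1).congr hF1 (hF1 t h1))
    · apply continuousWithinAt_of_notMem_closure
      rwa [isClosed_Icc.closure_eq]
  have hcwa2 : ContinuousWithinAt F (Icc T β) t := by
    by_cases h2 : t ∈ Icc T β
    · exact ((h₂ t h2).congr hF2 (hF2 t h2))
    · apply continuousWithinAt_of_notMem_closure
      rwa [isClosed_Icc.closure_eq]
  exact hcwa1.union hcwa2

lemma lift_exists_s12 (f : E → E) (c : ℝ → ℝ) (hn : n ≠ 0) (hf : ContDiff ℝ 1 f)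
    (h : ∀ x, c ‖x‖ ≤ conorm (fderiv ℝ f x))
    (hcpos : ∀ t : ℝ, 0 ≤ t → 0 < c t)
    (hcint : ∀ T : ℝ, IntervalIntegrable c volume 0 T)
    (hdiv : Tendsto (fun T => ∫ t in (0 : ℝ)..T, c t) atTop atTop)
    (x₀ b : E) :
    ∃ γ : ℝ → E, ContinuousOn γ (Icc 0 1) ∧ γ 0 = x₀ ∧
      ∀ t ∈ Icc (0 : ℝ) 1, f (γ t) = f x₀ + t • (b - f x₀) := by
  set a := f x₀ with ha
  set L := ‖b - a‖ with hL
  have hLpos : 0 ≤ L := norm_nonneg _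
  obtain ⟨R, hR0, hRcoer⟩ := Phi_coercive f c hn hf h hcpos hcint hdiv (Phi f x₀ + L)
  obtain ⟨σ, hσ, hUS⟩ := uniform_section f c hn hf h hcpos hR0
  set η := σ / (L + 1) with hη
  have hηpos : 0 < η := div_pos hσ (by linarith)
  have hηL : η * L < σ := by
    rw [hη, div_mul_eq_mul_div, div_lt_iff₀ (by linarith : (0:ℝ) < L + 1)]
    nlinarith
  have main : ∀ k : ℕ, ∃ γ : ℝ → E, ContinuousOn γ (Icc 0 (min 1 (k * η))) ∧ γ 0 = x₀ ∧
      ∀ t ∈ Icc (0 : ℝ) (min 1 (k * η)), f (γ t) = a + t • (b - a) := by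
    intro k
    induction k with
    | zero =>
      refine ⟨fun _ => x₀, continuousOn_const, rfl, ?_⟩
      intro t ht
      have h1 : min (1 : ℝ) ((0 : ℕ) * η) = 0 := by norm_num
      rw [h1] at ht
      have ht0 : t = 0 := le_antisymm ht.2 ht.1
      rw [ht0]
      simp [ha]
    | succ k ih =>
      obtain ⟨γ, hγc, hγ0, hγl⟩ := ih
      set T := min 1 ((k : ℕ) * η) with hT
      set T' := min 1 (((k : ℕ) + 1 : ℕ) * η) with hT'
      have hT0 : 0 ≤ T := le_min zero_le_one (by positivity)
      have hTT' : T ≤ T' := by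
        apply min_le_min le_rfl
        push_cast
        nlinarith [hηpos]
      have hT'Tη : T' - T ≤ η := by
        rcases le_total (1 : ℝ) ((k : ℕ) * η) with hcase | hcase
        · have e1 : T = 1 := min_eq_left hcase
          have e2 : T' ≤ 1 := min_le_left _ _
          linarith
        · have e1 : T = (k : ℕ) * η := min_eq_right hcase
          have e2 : T' ≤ ((k : ℕ) + 1 : ℕ) * η := min_le_right _ _
          push_cast at e2
          push_cast at e1
          nlinarith
      by_cases hdone : T' ≤ T
      · have hEq : T' = T := le_antisymm hdone hTT'
        rw [hEq]
        exact ⟨γ, hγc, hγ0, hγl⟩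
      have hTmem : T ∈ Icc (0 : ℝ) T := ⟨hT0, le_rfl⟩
      have hΦ : Phi f (γ T) ≤ Phi f x₀ + L := by
        have hest := lift_estimate f c hn hf h hcpos hT0 hγc hγl T hTmem
        rw [hγ0] at hest
        have h2 : L * T ≤ L * 1 := mul_le_mul_of_nonneg_left (min_le_left _ _) hLpos
        have h3 := (abs_le.1 hest).2
        linarith
      have hnorm : ‖γ T‖ ≤ R := hRcoer _ hΦ
      obtain ⟨gs, hgsc, hgs0, hgsf⟩ := hUS (γ T) hnorm
      have hfT : f (γ T) = a + T • (b - a) := hγl T hTmem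
      have hsubball : ∀ t ∈ Icc T T', (a + t • (b - a)) ∈ ball (f (γ T)) σ := by
        intro t ht
        rw [mem_ball, dist_eq_norm, hfT]
        have e : a + t • (b - a) - (a + T • (b - a)) = (t - T) • (b - a) := by
          rw [add_sub_add_left_eq_sub, ← sub_smul]
        rw [e, norm_smul, Real.norm_eq_abs, abs_of_nonneg (sub_nonneg.2 ht.1)]
        have h1 : t - T ≤ η := by
          have := ht.2
          linarith
        calc (t - T) * ‖b - a‖ ≤ η * L := by
              apply mul_le_mul h1 le_rfl (norm_nonneg _) (le_of_lt hηpos)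
          _ < σ := hηL
      refine ⟨fun t => if t ≤ T then γ t else gs (a + t • (b - a)), ?_, ?_, ?_⟩
      · apply glue_continuousOn hT0 hTT' hγc ?_ ?_
        · apply hgsc.comp ((continuous_const.add (continuous_id.smul continuous_const)).continuousOn)
          intro t ht
          exact hsubball t ht
        · rw [← hfT, hgs0]
      · show (if (0:ℝ) ≤ T then γ 0 else gs (a + (0:ℝ) • (b - a))) = x₀
        rw [if_pos hT0]
        exact hγ0
      · intro t ht
        show f (if t ≤ T then γ t else gs (a + t • (b - a))) = a + t • (b - a)
        by_cases hle : t ≤ T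
        · rw [if_pos hle]
          exact hγl t ⟨ht.1, hle⟩
        · rw [if_neg hle]
          exact hgsf _ (hsubball t ⟨le_of_not_ge hle, ht.2⟩)
  obtain ⟨k, hk⟩ : ∃ k : ℕ, 1 ≤ (k : ℕ) * η := by
    obtain ⟨k, hk⟩ := exists_nat_ge (1 / η)
    refine ⟨k, ?_⟩
    rw [div_le_iff₀ hηpos] at hk
    linarith
  obtain ⟨γ, hγc, hγ0, hγl⟩ := main k
  rw [min_eq_left hk] at hγc hγl
  exact ⟨γ, hγc, hγ0, hγl⟩
lemma bridging (f : E → E) (c : ℝ → ℝ) (hf : ContDiff ℝ 1 f)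
    (h : ∀ x, c ‖x‖ ≤ conorm (fderiv ℝ f x))
    (hcpos : ∀ t : ℝ, 0 ≤ t → 0 < c t)
    (z₀ : E) (Γ : E → ℝ → E)
    (hΓc : ∀ u, ContinuousOn (Γ u) (Icc 0 1))
    (hΓl : ∀ u, ∀ t ∈ Icc (0 : ℝ) 1, f (Γ u t) = f z₀ + t • (u - f z₀))
    (u₀ : E) {T₀ : ℝ} (hT₀ : T₀ ∈ Icc (0 : ℝ) 1) :
    ∃ η : ℝ, 0 < η ∧ ∃ ε₁ : ℝ, 0 < ε₁ ∧ ∃ Ψ : OpenPartialHomeomorph E E,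
      IsOpen Ψ.target ∧
      (∀ u : E, ∀ T : ℝ, T ∈ Icc (0 : ℝ) 1 → |T - T₀| < η → ‖u - u₀‖ < η →
        (f z₀ + T • (u - f z₀)) ∈ Ψ.target) ∧
      ContinuousOn Ψ.symm Ψ.target ∧
      (∀ T ∈ Icc (0 : ℝ) 1, |T - T₀| < η → Γ u₀ T ∈ ball (Γ u₀ T₀) (ε₁ / 2)) ∧
      (∀ u : E, ∀ T T' : ℝ, T ∈ Icc (0 : ℝ) 1 → T' ∈ Icc (0 : ℝ) 1 →
        |T - T₀| < η → |T' - T₀| < η → ‖u - u₀‖ < η →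
        Γ u T ∈ ball (Γ u₀ T₀) ε₁ →
        Γ u T' = Ψ.symm (f z₀ + T' • (u - f z₀))) := by
  set y := f z₀ with hy
  set x' := Γ u₀ T₀ with hx'
  obtain ⟨B, hB, hs⟩ := hasStrict f c hf h hcpos x'
  set Ψ := hs.toOpenPartialHomeomorph f with hΨ
  have hcoe : ∀ z : E, Ψ z = f z := fun z => by rw [hs.toOpenPartialHomeomorph_coe]
  have hxsrc : x' ∈ Ψ.source := hs.mem_toOpenPartialHomeomorph_source
  have hfx : f x' = y + T₀ • (u₀ - y) := hΓl u₀ T₀ hT₀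
  have hxtar : (y + T₀ • (u₀ - y)) ∈ Ψ.target := by
    rw [← hfx, ← hcoe]
    exact Ψ.map_source hxsrc
  obtain ⟨ε₁, hε₁, hballsrc⟩ := Metric.isOpen_iff.1 Ψ.open_source x' hxsrc
  obtain ⟨ε₂, hε₂, hballtar⟩ := Metric.isOpen_iff.1 Ψ.open_target _ hxtar
  have hcwa := (hΓc u₀) T₀ hT₀
  rw [Metric.continuousWithinAt_iff] at hcwa
  obtain ⟨η₂, hη₂, hη₂prop⟩ := hcwa (ε₁ / 2) (by linarith)
  set M := ‖u₀ - y‖ with hM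
  have hM0 : 0 ≤ M := norm_nonneg _
  set η := min (ε₂ / (M + 2)) η₂ with hη
  have hηpos : 0 < η := lt_min (by positivity) hη₂
  have hηε₂ : η ≤ ε₂ / (M + 2) := min_le_left _ _
  have hηη₂ : η ≤ η₂ := min_le_right _ _
  -- the parametrized segments stay in the target
  have htarmem : ∀ u : E, ∀ T : ℝ, T ∈ Icc (0 : ℝ) 1 → |T - T₀| < η → ‖u - u₀‖ < η →
      (y + T • (u - y)) ∈ Ψ.target := by
    intro u T hTm hTd hud
    apply hballtar
    rw [mem_ball, dist_eq_norm]
    have e : y + T • (u - y) - (y + T₀ • (u₀ - y))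
        = T • (u - u₀) + (T - T₀) • (u₀ - y) := by
      rw [add_sub_add_left_eq_sub]
      simp only [smul_sub, sub_smul]
      abel
    rw [e]
    have h1 : ‖T • (u - u₀)‖ < η := by
      rw [norm_smul, Real.norm_eq_abs]
      calc |T| * ‖u - u₀‖ ≤ 1 * ‖u - u₀‖ := by
            apply mul_le_mul_of_nonneg_right _ (norm_nonneg _)
            rw [abs_le]; exact ⟨by linarith [hTm.1], hTm.2⟩
        _ = ‖u - u₀‖ := one_mul _
        _ < η := hud
    have h2 : ‖(T - T₀) • (u₀ - y)‖ ≤ η * M := by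
      rw [norm_smul, Real.norm_eq_abs]
      exact mul_le_mul (le_of_lt hTd) le_rfl hM0 (le_of_lt hηpos)
    calc ‖T • (u - u₀) + (T - T₀) • (u₀ - y)‖
        ≤ ‖T • (u - u₀)‖ + ‖(T - T₀) • (u₀ - y)‖ := norm_add_le _ _
      _ < η + η * M := by linarith
      _ = η * (M + 1) := by ring
      _ ≤ (ε₂ / (M + 2)) * (M + 1) := by
          apply mul_le_mul_of_nonneg_right hηε₂ (by linarith)
      _ < ε₂ := by
          rw [div_mul_eq_mul_div, div_lt_iff₀ (by linarith : (0:ℝ) < M + 2)]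
          nlinarith
  refine ⟨η, hηpos, ε₁, hε₁, Ψ, Ψ.open_target, htarmem, Ψ.continuousOn_symm, ?_, ?_⟩
  · intro T hTm hTd
    rw [mem_ball]
    exact hη₂prop hTm (by rw [Real.dist_eq]; exact lt_of_lt_of_le hTd hηη₂)
  · intro u T T' hTm hT'm hTd hT'd hud hball
    set p := fun s : ℝ => y + s • (u - y) with hp
    have hTT₀ := abs_lt.1 hTd
    have hT'T₀ := abs_lt.1 hT'd
    set α := min T T' with hα
    set β := max T T' with hβ
    have hαβ : α ≤ β := min_le_max
    have hJsub : Icc α β ⊆ Icc (0 : ℝ) 1 := by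
      apply Icc_subset_Icc (le_min hTm.1 hT'm.1) (max_le hTm.2 hT'm.2)
    have hJd : ∀ s ∈ Icc α β, |s - T₀| < η := by
      intro s hsm
      rw [abs_lt]
      constructor
      · have : min T T' ≤ s := hsm.1
        rcases min_cases T T' with ⟨he, _⟩ | ⟨he, _⟩ <;> rw [he] at this <;> linarith
      · have : s ≤ max T T' := hsm.2
        rcases max_cases T T' with ⟨he, _⟩ | ⟨he, _⟩ <;> rw [he] at this <;> linarith
    have hptar : ∀ s ∈ Icc α β, p s ∈ Ψ.target := fun s hsm =>
      htarmem u s (hJsub hsm) (hJd s hsm) hud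
    have hpcont : Continuous p :=
      continuous_const.add ((continuous_id.smul continuous_const))
    have h₂c : ContinuousOn (fun s => Ψ.symm (p s)) (Icc α β) :=
      Ψ.continuousOn_symm.comp hpcont.continuousOn hptar
    have hfeq : ∀ s ∈ Icc α β, f (Γ u s) = f (Ψ.symm (p s)) := by
      intro s hsm
      have h1 : f (Γ u s) = p s := hΓl u s (hJsub hsm)
      have h2 : f (Ψ.symm (p s)) = p s := by
        rw [← hcoe]
        exact Ψ.right_inv (hptar s hsm)
      rw [h1, h2]
    have hTJ : T ∈ Icc α β := ⟨min_le_left _ _, le_max_left _ _⟩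
    have hT'J : T' ∈ Icc α β := ⟨min_le_right _ _, le_max_right _ _⟩
    have hagree : Γ u T = Ψ.symm (p T) := by
      have hsrc : Γ u T ∈ Ψ.source := hballsrc hball
      have : p T = f (Γ u T) := (hΓl u T hTm).symm
      rw [this, ← hcoe]
      exact (Ψ.left_inv hsrc).symm
    exact lift_unique_s12 f c hf h hcpos hαβ ((hΓc u).mono hJsub) h₂c hfeq hTJ hagree T' hT'J
lemma section_tendsto (f : E → E) (c : ℝ → ℝ) (hf : ContDiff ℝ 1 f)
    (h : ∀ x, c ‖x‖ ≤ conorm (fderiv ℝ f x))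
    (hcpos : ∀ t : ℝ, 0 ≤ t → 0 < c t)
    (z₀ : E) (Γ : E → ℝ → E)
    (hΓc : ∀ u, ContinuousOn (Γ u) (Icc 0 1))
    (hΓ0 : ∀ u, Γ u 0 = z₀)
    (hΓl : ∀ u, ∀ t ∈ Icc (0 : ℝ) 1, f (Γ u t) = f z₀ + t • (u - f z₀))
    (u₀ : E) : Tendsto (fun u => Γ u 1) (𝓝 u₀) (𝓝 (Γ u₀ 1)) := by
  haveI : PreconnectedSpace (Icc (0 : ℝ) 1) := Subtype.preconnectedSpace isPreconnected_Icc
  set S : Set (Icc (0 : ℝ) 1) :=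
    {T | Tendsto (fun u => Γ u ↑T) (𝓝 u₀) (𝓝 (Γ u₀ ↑T))} with hSdef
  have hS0 : (⟨0, le_rfl, zero_le_one⟩ : Icc (0 : ℝ) 1) ∈ S := by
    show Tendsto (fun u => Γ u 0) (𝓝 u₀) (𝓝 (Γ u₀ 0))
    have he : (fun u => Γ u 0) = fun _ => z₀ := funext hΓ0
    rw [he, hΓ0 u₀]
    exact tendsto_const_nhds
  have hopen : IsOpen S := by
    rw [Metric.isOpen_iff]
    rintro ⟨T₀, hT₀m⟩ hT₀S
    obtain ⟨η, hη, ε₁, hε₁, Ψ, htaro, htarmem, hsymc, hnear, key⟩ :=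
      bridging f c hf h hcpos z₀ Γ hΓc hΓl u₀ hT₀m
    have hT₀self : |T₀ - T₀| < η := by simpa using hη
    have hu₀self : ‖u₀ - u₀‖ < η := by simpa using hη
    have hball₀ : Γ u₀ T₀ ∈ ball (Γ u₀ T₀) ε₁ := mem_ball_self hε₁
    refine ⟨η, hη, ?_⟩
    rintro ⟨T, hTm⟩ hdist
    rw [mem_ball, Subtype.dist_eq, Real.dist_eq] at hdist
    show Tendsto (fun u => Γ u T) (𝓝 u₀) (𝓝 (Γ u₀ T))
    have hval : Γ u₀ T = Ψ.symm (f z₀ + T • (u₀ - f z₀)) :=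
      key u₀ T₀ T hT₀m hTm hT₀self hdist hu₀self hball₀
    have hTendT₀ : Tendsto (fun u => Γ u T₀) (𝓝 u₀) (𝓝 (Γ u₀ T₀)) := hT₀S
    have hev : ∀ᶠ u in 𝓝 u₀, Γ u T = Ψ.symm (f z₀ + T • (u - f z₀)) := by
      have h1 : ∀ᶠ u in 𝓝 u₀, Γ u T₀ ∈ ball (Γ u₀ T₀) ε₁ :=
        hTendT₀.eventually (isOpen_ball.eventually_mem hball₀)
      have h2 : ∀ᶠ u in 𝓝 u₀, ‖u - u₀‖ < η := by
        filter_upwards [isOpen_ball.eventually_mem (mem_ball_self hη)] with u hu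
        rwa [mem_ball, dist_eq_norm] at hu
      filter_upwards [h1, h2] with u h1u h2u
      exact key u T₀ T hT₀m hTm hT₀self hdist h2u h1u
    have hmemtar : (f z₀ + T • (u₀ - f z₀)) ∈ Ψ.target := htarmem u₀ T hTm hdist hu₀self
    have hψca : ContinuousAt Ψ.symm (f z₀ + T • (u₀ - f z₀)) :=
      hsymc.continuousAt (htaro.mem_nhds hmemtar)
    have hpca : Continuous fun u : E => f z₀ + T • (u - f z₀) :=
      continuous_const.add ((continuous_id.sub continuous_const).const_smul T)
    have hlim : Tendsto (fun u => Ψ.symm (f z₀ + T • (u - f z₀))) (𝓝 u₀)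
        (𝓝 (Ψ.symm (f z₀ + T • (u₀ - f z₀)))) :=
      Filter.Tendsto.comp hψca (hpca.tendsto' u₀ _ rfl)
    rw [hval]
    exact Filter.Tendsto.congr' (hev.mono fun u hu => hu.symm) hlim
  have hclosed : IsClosed S := by
    apply IsSeqClosed.isClosed
    intro Ts T₀ hmem htend
    obtain ⟨η, hη, ε₁, hε₁, Ψ, htaro, htarmem, hsymc, hnear, key⟩ :=
      bridging f c hf h hcpos z₀ Γ hΓc hΓl u₀ T₀.2
    have hT₀self : |(T₀ : ℝ) - (T₀ : ℝ)| < η := by simpa using hη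
    have hu₀self : ‖u₀ - u₀‖ < η := by simpa using hη
    obtain ⟨j, hj⟩ := (htend.eventually (isOpen_ball.eventually_mem (mem_ball_self hη))).exists
    have hjd : |(↑(Ts j) : ℝ) - (T₀ : ℝ)| < η := by
      rw [mem_ball, Subtype.dist_eq, Real.dist_eq] at hj
      exact hj
    have hnearj : Γ u₀ ↑(Ts j) ∈ ball (Γ u₀ ↑T₀) (ε₁ / 2) := hnear _ (Ts j).2 hjd
    have hval : Γ u₀ ↑T₀ = Ψ.symm (f z₀ + (T₀ : ℝ) • (u₀ - f z₀)) :=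
      key u₀ T₀ T₀ T₀.2 T₀.2 hT₀self hT₀self hu₀self (mem_ball_self hε₁)
    show Tendsto (fun u => Γ u ↑T₀) (𝓝 u₀) (𝓝 (Γ u₀ ↑T₀))
    have hTendj : Tendsto (fun u => Γ u ↑(Ts j)) (𝓝 u₀) (𝓝 (Γ u₀ ↑(Ts j))) := hmem j
    have hev : ∀ᶠ u in 𝓝 u₀, Γ u ↑T₀ = Ψ.symm (f z₀ + (T₀ : ℝ) • (u - f z₀)) := by
      have h1 : ∀ᶠ u in 𝓝 u₀, Γ u ↑(Ts j) ∈ ball (Γ u₀ ↑(Ts j)) (ε₁ / 2) :=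
        hTendj.eventually (isOpen_ball.eventually_mem (mem_ball_self (half_pos hε₁)))
      have h2 : ∀ᶠ u in 𝓝 u₀, ‖u - u₀‖ < η := by
        filter_upwards [isOpen_ball.eventually_mem (mem_ball_self hη)] with u hu
        rwa [mem_ball, dist_eq_norm] at hu
      filter_upwards [h1, h2] with u h1u h2u
      have hballu : Γ u ↑(Ts j) ∈ ball (Γ u₀ ↑T₀) ε₁ := by
        rw [mem_ball]
        calc dist (Γ u ↑(Ts j)) (Γ u₀ ↑T₀)
            ≤ dist (Γ u ↑(Ts j)) (Γ u₀ ↑(Ts j)) + dist (Γ u₀ ↑(Ts j)) (Γ u₀ ↑T₀) :=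
              dist_triangle _ _ _
          _ < ε₁ / 2 + ε₁ / 2 := add_lt_add (mem_ball.1 h1u) (mem_ball.1 hnearj)
          _ = ε₁ := by ring
      exact key u ↑(Ts j) ↑T₀ (Ts j).2 T₀.2 hjd hT₀self h2u hballu
    have hmemtar : (f z₀ + (T₀ : ℝ) • (u₀ - f z₀)) ∈ Ψ.target :=
      htarmem u₀ T₀ T₀.2 hT₀self hu₀self
    have hψca : ContinuousAt Ψ.symm (f z₀ + (T₀ : ℝ) • (u₀ - f z₀)) :=
      hsymc.continuousAt (htaro.mem_nhds hmemtar)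
    have hpca : Continuous fun u : E => f z₀ + (T₀ : ℝ) • (u - f z₀) :=
      continuous_const.add ((continuous_id.sub continuous_const).const_smul (T₀ : ℝ))
    have hlim : Tendsto (fun u => Ψ.symm (f z₀ + (T₀ : ℝ) • (u - f z₀))) (𝓝 u₀)
        (𝓝 (Ψ.symm (f z₀ + (T₀ : ℝ) • (u₀ - f z₀)))) :=
      Filter.Tendsto.comp hψca (hpca.tendsto' u₀ _ rfl)
    rw [hval]
    exact Filter.Tendsto.congr' (hev.mono fun u hu => hu.symm) hlim
  have huniv : S = univ := IsClopen.eq_univ ⟨hclosed, hopen⟩ ⟨_, hS0⟩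
  have h1S : (⟨1, zero_le_one, le_rfl⟩ : Icc (0 : ℝ) 1) ∈ S := huniv ▸ mem_univ _
  exact h1S
end Hadamard

theorem hadamard_integral_proper {n : ℕ}
    (f : EuclideanSpace ℝ (Fin n) → EuclideanSpace ℝ (Fin n))
    (hf : ContDiff ℝ 1 f) (c : ℝ → ℝ)
    (hcpos : ∀ t : ℝ, 0 ≤ t → 0 < c t)
    (hcint : ∀ T : ℝ, IntervalIntegrable c MeasureTheory.volume 0 T)
    (hdiv : Filter.Tendsto (fun T => ∫ t in (0 : ℝ)..T, c t) Filter.atTop Filter.atTop)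
    (h : ∀ x, c ‖x‖ ≤ conorm (fderiv ℝ f x)) :
    ¬ ∃ (x : ℕ → EuclideanSpace ℝ (Fin n)) (y : EuclideanSpace ℝ (Fin n)),
      Filter.Tendsto (fun k => ‖x k‖) Filter.atTop Filter.atTop ∧
      Filter.Tendsto (fun k => f (x k)) Filter.atTop (nhds y) := by
  rintro ⟨x, y, hx, hy⟩
  rcases eq_or_ne n 0 with hn0 | hn
  · subst hn0
    obtain ⟨k, hk⟩ := (hx.eventually (eventually_ge_atTop 1)).exists
    have h0 : ‖x k‖ = 0 := by
      rw [EuclideanSpace.norm_eq]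
      simp
    rw [h0] at hk
    linarith
  · -- main case
    choose Γ hΓc hΓ0 hΓl using fun (x₀ b : EuclideanSpace ℝ (Fin n)) =>
      Hadamard.lift_exists_s12 f c hn hf h hcpos hcint hdiv x₀ b
    set z : ℕ → EuclideanSpace ℝ (Fin n) := fun k => Γ (x k) y 1 with hz
    have hfz : ∀ k, f (z k) = y := by
      intro k
      have := hΓl (x k) y 1 ⟨zero_le_one, le_rfl⟩
      simpa using this
    have hΦz : ∀ k, Hadamard.Phi f (x k) - ‖y - f (x k)‖ ≤ Hadamard.Phi f (z k) := by
      intro k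
      have hest := Hadamard.lift_estimate f c hn hf h hcpos zero_le_one (hΓc (x k) y)
        (hΓl (x k) y) 1 ⟨zero_le_one, le_rfl⟩
      rw [hΓ0] at hest
      have h1 := (abs_le.1 hest).1
      have h2 := (abs_le.1 hest).2
      rw [mul_one] at h1 h2
      simp only [hz]
      linarith
    have hbdd : ∀ᶠ k in Filter.atTop, ‖y - f (x k)‖ ≤ 1 := by
      have h1 : ∀ᶠ k in Filter.atTop, f (x k) ∈ Metric.ball y 1 :=
        hy.eventually (Metric.isOpen_ball.eventually_mem (Metric.mem_ball_self one_pos))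
      filter_upwards [h1] with k hk
      rw [Metric.mem_ball] at hk
      have he : ‖y - f (x k)‖ = dist (f (x k)) y := by rw [dist_eq_norm, norm_sub_rev]
      rw [he]
      exact hk.le
    have hΦx : Filter.Tendsto (fun k => Hadamard.Phi f (x k)) Filter.atTop Filter.atTop := by
      have hG := Hadamard.G_tendsto c hcint hdiv
      have hcomp : Filter.Tendsto (fun k => ∫ t in (1 : ℝ)..‖x k‖, c t)
          Filter.atTop Filter.atTop := hG.comp hx
      apply Filter.tendsto_atTop_mono' Filter.atTop ?_ hcomp
      filter_upwards [hx.eventually (Filter.eventually_ge_atTop 1)] with k hk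
      exact Hadamard.Phi_lower f c hn hf h hcint (x k) hk
    have hΦztend : Filter.Tendsto (fun k => Hadamard.Phi f (z k)) Filter.atTop Filter.atTop := by
      apply Filter.tendsto_atTop_mono' Filter.atTop ?_
        (Filter.tendsto_atTop_add_const_right Filter.atTop (-1) hΦx)
      filter_upwards [hbdd] with k hk
      have := hΦz k
      linarith
    set z₀ := z 0 with hz₀
    have hfz₀ : f z₀ = y := hfz 0
    have hgc : Continuous (fun u => Γ z₀ u 1) := by
      rw [continuous_iff_continuousAt]
      intro u₀
      exact Hadamard.section_tendsto f c hf h hcpos z₀ (Γ z₀) (hΓc z₀) (hΓ0 z₀) (hΓl z₀) u₀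
    set g : EuclideanSpace ℝ (Fin n) → EuclideanSpace ℝ (Fin n) := fun u => Γ z₀ u 1 with hg
    have hfg : ∀ u, f (g u) = u := by
      intro u
      have := hΓl z₀ u 1 ⟨zero_le_one, le_rfl⟩
      simpa using this
    have hgy : g y = z₀ := by
      have hconst : ∀ t ∈ Icc (0 : ℝ) 1, f (Γ z₀ y t) = f ((fun _ => z₀) t) := by
        intro t ht
        rw [hΓl z₀ y t ht, hfz₀]
        simp
      exact Hadamard.lift_unique_s12 f c hf h hcpos zero_le_one (hΓc z₀ y) continuousOn_const
        hconst (t₀ := 0) ⟨le_rfl, zero_le_one⟩ (by rw [hΓ0]) 1 ⟨zero_le_one, le_rfl⟩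
    haveI : PreconnectedSpace (EuclideanSpace ℝ (Fin n)) :=
      ⟨(convex_univ : Convex ℝ (Set.univ : Set (EuclideanSpace ℝ (Fin n)))).isPreconnected⟩
    set Sfix : Set (EuclideanSpace ℝ (Fin n)) := {w | g (f w) = w} with hSfix
    have hclosed : IsClosed Sfix := isClosed_eq (hgc.comp hf.continuous) continuous_id
    have hopen : IsOpen Sfix := by
      rw [isOpen_iff_mem_nhds]
      intro w hw
      have hww : g (f w) = w := hw
      obtain ⟨B, hB, hs⟩ := Hadamard.hasStrict f c hf h hcpos w
      set Ψ := hs.toOpenPartialHomeomorph f with hΨ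
      have hsrc : w ∈ Ψ.source := hs.mem_toOpenPartialHomeomorph_source
      have hinj : Set.InjOn f Ψ.source := by
        have h1 := Ψ.injOn
        rwa [show (Ψ : EuclideanSpace ℝ (Fin n) → EuclideanSpace ℝ (Fin n)) = f from
          hs.toOpenPartialHomeomorph_coe] at h1
      have hcont : ContinuousAt (fun v => g (f v)) w := (hgc.comp hf.continuous).continuousAt
      have hpre : ∀ᶠ v in nhds w, g (f v) ∈ Ψ.source :=
        hcont.eventually (Ψ.open_source.eventually_mem (show g (f w) ∈ Ψ.source by rw [hww]; exact hsrc))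
      have hself : ∀ᶠ v in nhds w, v ∈ Ψ.source := Ψ.open_source.eventually_mem hsrc
      filter_upwards [hpre, hself] with v h1 h2
      exact hinj h1 h2 (hfg (f v))
    have huniv : Sfix = Set.univ := IsClopen.eq_univ ⟨hclosed, hopen⟩
      ⟨z₀, show g (f z₀) = z₀ by rw [hfz₀, hgy]⟩
    have hzz : ∀ k, z k = z₀ := by
      intro k
      have h1 : z k ∈ Sfix := huniv ▸ Set.mem_univ _
      have h2 : g (f (z k)) = z k := h1
      rw [hfz k, hgy] at h2
      exact h2.symm
    obtain ⟨k, hk⟩ := (hΦztend.eventually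
      (Filter.eventually_gt_atTop (Hadamard.Phi f z₀))).exists
    rw [hzz k] at hk
    exact lt_irrefl _ hk
end
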